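/- arXiv:2205.11466 — 9 statements merged into one kernel-verified Lean document; each statement's English description precedes it below -/
import Mathlib

section
/- Let d ≥ 1 and r ≥ 2 be integers, and let ⟪·,·⟫ be any symmetric bilinear form on ℝ[x] that is positive definite on the subspace of polynomials of degree at most 2d (i.e. ⟪q,q⟫ > 0 for every nonzero q with deg q ≤ 2d); write ‖q‖² = ⟪q,q⟫. Let p ∈ ℝ[x] with deg p ≤ 2d satisfy p(x) ≥ 0 for all x ∈ ℝ. Suppose u₁,…,u_r ∈ ℝ[x] with deg uᵢ ≤ d satisfy the gradient condition: ⟪∑ᵢ uᵢvᵢ, ∑ᵢ uᵢ² − p⟫ = 0 for all v₁,…,v_r ∈ ℝ[x] with deg vᵢ ≤ d, and the Hessian condition: ⟪∑ᵢ vᵢ², ∑ᵢ uᵢ² − p⟫ + 2‖∑ᵢ uᵢvᵢ‖² ≥ 0 for all v₁,…,v_r ∈ ℝ[x] with deg vᵢ ≤ d. Then ∑ᵢ uᵢ² = p. -/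
open Polynomial

/-- If `a ε² + b ε ≥ 0` for all `ε`, then `b = 0`. -/
lemma lin_coeff_zero {a b : ℝ} (h : ∀ ε : ℝ, 0 ≤ a * ε ^ 2 + b * ε) : b = 0 := by
  have ha : 0 ≤ a := by
    by_contra hlt
    push_neg at hlt
    have h1 := h ((|b| + 1) / (-a))
    have hna : 0 < -a := by linarith
    have hb1 : 0 < |b| + 1 := by positivity
    have he : 0 < (|b| + 1) / (-a) := by positivity
    have key : a * ((|b| + 1) / (-a)) ^ 2 + b * ((|b| + 1) / (-a))
        = ((|b| + 1) / (-a)) * (a * ((|b| + 1) / (-a)) + b) := by ring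
    have h2 : a * ((|b| + 1) / (-a)) = -(|b| + 1) := by
      field_simp
      rw [div_self (ne_of_lt hlt)]
    rw [key, h2] at h1
    have hlt2 : -(|b| + 1) + b < 0 := by
      have := le_abs_self b
      linarith
    have := mul_pos he (by linarith : (0:ℝ) < -(-(|b| + 1) + b))
    nlinarith
  have h2 := h (-(b / (a + 1)))
  have hpos : 0 < a + 1 := by linarith
  have hkey : a * (-(b / (a + 1))) ^ 2 + b * (-(b / (a + 1)))
      = -(b ^ 2) * (a + 1 + -a) / (a + 1) ^ 2 := by
    field_simp
    ring
  rw [hkey] at h2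
  have h3 : -(b ^ 2) * (a + 1 + -a) / (a + 1) ^ 2 = -(b ^ 2) / (a + 1) ^ 2 := by ring_nf
  rw [h3] at h2
  have h4 : (0:ℝ) < (a+1)^2 := by positivity
  have h5 : 0 ≤ -(b^2) := by
    by_contra hc
    push_neg at hc
    have : -(b ^ 2) / (a + 1) ^ 2 < 0 := div_neg_of_neg_of_pos hc h4
    linarith
  nlinarith [sq_nonneg b]

/-- Top-coefficient of a product, given degree bounds. -/
lemma coeff_mul_top {f g : Polynomial ℝ} {m n : ℕ} (hf : f.degree ≤ (m:ℕ)) (hg : g.degree ≤ (n:ℕ)) :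
    (f * g).coeff (m + n) = f.coeff m * g.coeff n := by
  rw [coeff_mul]
  apply Finset.sum_eq_single (m, n)
  · rintro ⟨i, j⟩ hij hne
    rw [Finset.HasAntidiagonal.mem_antidiagonal] at hij
    simp only at hij
    have : m < i ∨ n < j := by
      by_contra hc
      push_neg at hc
      obtain ⟨h1, h2⟩ := hc
      apply hne
      have : i = m := by omega
      subst this
      have : j = n := by omega
      subst this
      rfl
    rcases this with h1 | h1
    · have : f.coeff i = 0 := coeff_eq_zero_of_degree_lt (lt_of_le_of_lt hf (by exact_mod_cast h1))
      simp [this]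
    · have : g.coeff j = 0 := coeff_eq_zero_of_degree_lt (lt_of_le_of_lt hg (by exact_mod_cast h1))
      simp [this]
  · intro h
    exact absurd (Finset.HasAntidiagonal.mem_antidiagonal.mpr (by rfl)) h

/-- Extract a squared real root factor from a nonnegative polynomial. -/
lemma root_sq_dvd {p : Polynomial ℝ} (hp : ∀ x, 0 ≤ p.eval x) {x₀ : ℝ} (h0 : p.eval x₀ = 0) :
    ∃ q, p = (X - C x₀) ^ 2 * q ∧ (∀ x, 0 ≤ q.eval x) := by
  have hm : (X - C x₀).Monic := monic_X_sub_C x₀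
  -- first division
  have step : ∀ f : Polynomial ℝ, f.eval x₀ = 0 → f = (X - C x₀) * (f /ₘ (X - C x₀)) := by
    intro f hf
    have hdvd : (X - C x₀) ∣ f := dvd_iff_isRoot.mpr hf
    have hmod : f %ₘ (X - C x₀) = 0 := (modByMonic_eq_zero_iff_dvd hm).mpr hdvd
    conv_lhs => rw [← modByMonic_add_div f (X - C x₀)]
    rw [hmod, zero_add]
  set q1 := p /ₘ (X - C x₀) with hq1def
  have hp1 : p = (X - C x₀) * q1 := step p h0
  -- q1 also has root at x₀
  have hq1root : q1.eval x₀ = 0 := by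
    by_contra hq
    have hc : ContinuousAt (fun y => q1.eval y) x₀ := (q1.continuousAt)
    obtain ⟨δ, hδ, hball⟩ := Metric.continuousAt_iff.mp hc (|q1.eval x₀|) (abs_pos.mpr hq)
    rcases lt_or_gt_of_ne hq with hneg | hpos
    · set y := x₀ + δ / 2 with hy
      have hdist : dist y x₀ < δ := by
        rw [Real.dist_eq]
        rw [hy]; rw [show x₀ + δ/2 - x₀ = δ/2 by ring, abs_of_pos (by linarith)]
        linarith
      have h1 := hball hdist
      rw [Real.dist_eq] at h1
      have h2 : q1.eval y < 0 := by
        have := abs_lt.mp h1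
        have := neg_abs_le (q1.eval x₀)
        have habs : |q1.eval x₀| = -(q1.eval x₀) := abs_of_neg hneg
        rw [habs] at this h1
        have := abs_lt.mp h1
        linarith [this.2]
      have h3 : p.eval y = (y - x₀) * q1.eval y := by rw [hp1]; simp
      have h4 : y - x₀ = δ/2 := by rw [hy]; ring
      have : p.eval y < 0 := by
        rw [h3, h4]; exact mul_neg_of_pos_of_neg (by linarith) h2
      linarith [hp y]
    · set y := x₀ - δ / 2 with hy
      have hdist : dist y x₀ < δ := by
        rw [Real.dist_eq]
        rw [hy]; rw [show x₀ - δ/2 - x₀ = -(δ/2) by ring, abs_neg, abs_of_pos (by linarith)]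
        linarith
      have h1 := hball hdist
      rw [Real.dist_eq] at h1
      have h2 : 0 < q1.eval y := by
        have habs : |q1.eval x₀| = q1.eval x₀ := abs_of_pos hpos
        rw [habs] at h1
        have := abs_lt.mp h1
        linarith [this.1]
      have h3 : p.eval y = (y - x₀) * q1.eval y := by rw [hp1]; simp
      have h4 : y - x₀ = -(δ/2) := by rw [hy]; ring
      have : p.eval y < 0 := by
        rw [h3, h4]
        exact mul_neg_of_neg_of_pos (by linarith) h2
      linarith [hp y]
  set q := q1 /ₘ (X - C x₀) with hqdef
  have hq1q : q1 = (X - C x₀) * q := step q1 hq1root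
  refine ⟨q, by rw [hp1, hq1q]; ring, ?_⟩
  -- q is nonneg: away from x₀ then by continuity at x₀
  have hne : ∀ x, x ≠ x₀ → 0 ≤ q.eval x := by
    intro x hx
    have h3 : p.eval x = (x - x₀) ^ 2 * q.eval x := by
      rw [hp1, hq1q]; simp; ring
    have hsq : 0 < (x - x₀) ^ 2 := by
      have : x - x₀ ≠ 0 := sub_ne_zero.mpr hx
      positivity
    nlinarith [hp x]
  intro x
  by_cases hx : x = x₀
  · subst hx
    have htend : Filter.Tendsto (fun y => q.eval y) (nhdsWithin x ({x}ᶜ)) (nhds (q.eval x)) :=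
      ((q.continuousAt).tendsto).mono_left nhdsWithin_le_nhds
    refine ge_of_tendsto htend ?_
    refine Filter.eventually_of_mem self_mem_nhdsWithin ?_
    intro y hy
    exact hne y hy
  · exact hne x hx

/-- Extract a positive-definite quadratic factor from a positive polynomial with no real roots. -/
lemma quad_factor {p : Polynomial ℝ} (hp0 : p ≠ 0) (hd : 1 ≤ p.natDegree)
    (hnoroot : ∀ x : ℝ, p.eval x ≠ 0) (hp : ∀ x, 0 ≤ p.eval x) :
    ∃ (α γ : ℝ) (q : Polynomial ℝ),
      p = (X ^ 2 + C (-(2 * α)) * X + C (α ^ 2 + γ ^ 2)) * q ∧ (∀ x, 0 ≤ q.eval x) ∧ q ≠ 0 ∧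
      (∀ x, 0 ≤ (X ^ 2 + C (-(2 * α)) * X + C (α ^ 2 + γ ^ 2)).eval x) ∧
      (X ^ 2 + C (-(2 * α)) * X + C (α ^ 2 + γ ^ 2)).natDegree = 2 := by
  set pC := p.map (algebraMap ℝ ℂ) with hpC
  have hdegmap : pC.degree = p.degree := degree_map_eq_of_injective (algebraMap ℝ ℂ).injective p
  have hdeg : pC.degree ≠ 0 := by
    rw [hdegmap, degree_eq_natDegree hp0]
    simp only [ne_eq, Nat.cast_eq_zero]
    omega
  obtain ⟨z, hz⟩ := IsAlgClosed.exists_root pC hdeg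
  have hzp : aeval z p = 0 := by
    have : pC.eval z = 0 := hz
    rwa [hpC, Polynomial.eval_map, ← Polynomial.aeval_def] at this
  have hzim : z.im ≠ 0 := by
    intro him
    have hzre : z = ((z.re : ℝ) : ℂ) := by
      apply Complex.ext <;> simp [him]
    have : aeval ((algebraMap ℝ ℂ) z.re) p = (algebraMap ℝ ℂ) (p.eval z.re) :=
      aeval_algebraMap_apply_eq_algebraMap_eval z.re p
    rw [show (algebraMap ℝ ℂ) z.re = ((z.re : ℝ) : ℂ) from rfl, ← hzre, hzp] at this
    have : p.eval z.re = 0 := by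
      have h2 := this.symm
      simpa using h2
    exact hnoroot z.re this
  set α := z.re with hα
  set γ := z.im with hγ
  set π : Polynomial ℝ := X ^ 2 + C (-(2 * α)) * X + C (α ^ 2 + γ ^ 2) with hπ
  have hπeval : ∀ x : ℝ, π.eval x = (x - α) ^ 2 + γ ^ 2 := by
    intro x; simp [hπ]; ring
  have hπpos : ∀ x : ℝ, 0 < π.eval x := by
    intro x
    rw [hπeval x]
    have : γ ^ 2 > 0 := by positivity
    positivity
  have hrest : (C (-(2 * α)) * X + C (α ^ 2 + γ ^ 2)).degree ≤ 1 := by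
    refine le_trans (degree_add_le _ _) ?_
    simp only [max_le_iff]
    constructor
    · refine le_trans (degree_mul_le _ _) ?_
      calc (C (-(2*α))).degree + X.degree ≤ 0 + 1 := by
            exact add_le_add degree_C_le degree_X_le
        _ = 1 := by norm_num
    · exact le_trans degree_C_le (by norm_num)
  have hπ2 : π.degree = 2 := by
    rw [hπ, add_assoc]
    rw [degree_add_eq_left_of_degree_lt]
    · exact degree_X_pow 2
    · rw [degree_X_pow]
      exact lt_of_le_of_lt hrest (by norm_num)
  have hπmonic : π.Monic := by
    rw [hπ, add_assoc]
    exact (monic_X_pow 2).add_of_left (by rw [degree_X_pow]; exact lt_of_le_of_lt hrest (by norm_num))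
  -- aeval z π = 0
  have hzγ : (z - (α : ℂ)) = (γ : ℂ) * Complex.I := by
    apply Complex.ext <;> simp [hα, hγ]
  have hπz : aeval z π = 0 := by
    have h1 : aeval z π = z ^ 2 + ((-(2*α) : ℝ) : ℂ) * z + ((α^2 + γ^2 : ℝ) : ℂ) := by
      simp [hπ]
    rw [h1]
    have h2 : z ^ 2 + ((-(2*α) : ℝ) : ℂ) * z + ((α^2 + γ^2 : ℝ) : ℂ)
        = (z - (α:ℂ))^2 + ((γ:ℂ))^2 := by
      push_cast
      ring
    rw [h2, hzγ]
    rw [mul_pow, Complex.I_sq]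
    ring
  -- π ∣ p
  have hdvd : π ∣ p := by
    rw [← modByMonic_eq_zero_iff_dvd hπmonic]
    set r := p %ₘ π with hr
    have hrdeg : r.degree ≤ 1 := by
      have := degree_modByMonic_lt p hπmonic
      rw [hπ2] at this
      exact Order.le_of_lt_succ (by exact_mod_cast this)
    have hrz : aeval z r = 0 := by
      have heq : r + π * (p /ₘ π) = p := modByMonic_add_div p π
      have := congrArg (aeval z) heq
      rw [map_add, map_mul, hπz, zero_mul, add_zero, hzp] at this
      exact this
    have hrform : r = C (r.coeff 1) * X + C (r.coeff 0) := eq_X_add_C_of_degree_le_one hrdeg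
    rw [hrform] at hrz
    rw [map_add, map_mul, aeval_C, aeval_C, aeval_X] at hrz
    simp only [Complex.coe_algebraMap] at hrz
    have him := congrArg Complex.im hrz
    simp only [Complex.add_im, Complex.mul_im, Complex.ofReal_re, Complex.ofReal_im,
      Complex.zero_im, zero_mul, add_zero, zero_add] at him
    have hc1 : r.coeff 1 = 0 := by
      rcases mul_eq_zero.mp him with h | h
      · exact h
      · exact absurd h hzim
    rw [hc1] at hrz
    simp only [Complex.ofReal_zero, zero_mul, zero_add] at hrz
    have hc0 : r.coeff 0 = 0 := by exact_mod_cast hrz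
    rw [hrform, hc1, hc0]
    simp
  set q := p /ₘ π with hq
  have hpq : p = π * q := by
    have hmod : p %ₘ π = 0 := (modByMonic_eq_zero_iff_dvd hπmonic).mpr hdvd
    conv_lhs => rw [← modByMonic_add_div p π]
    rw [hmod, zero_add]
  have hq0 : q ≠ 0 := by
    intro h
    rw [h, mul_zero] at hpq
    exact hp0 hpq
  have hqnn : ∀ x, 0 ≤ q.eval x := by
    intro x
    have h1 : p.eval x = π.eval x * q.eval x := by rw [hpq]; simp
    nlinarith [hp x, hπpos x]
  have hπnd : π.natDegree = 2 := natDegree_eq_of_degree_eq_some hπ2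
  exact ⟨α, γ, q, hpq, hqnn, hq0, fun x => le_of_lt (hπpos x), hπnd⟩

/-- Every nonnegative real polynomial is a sum of two squares. -/
lemma exists_sum_two_squares (p : Polynomial ℝ) (hp : ∀ x, 0 ≤ p.eval x) :
    ∃ a b : Polynomial ℝ, p = a ^ 2 + b ^ 2 := by
  suffices H : ∀ (n : ℕ) (p : Polynomial ℝ), p.natDegree ≤ n → (∀ x, 0 ≤ p.eval x) →
      ∃ a b : Polynomial ℝ, p = a ^ 2 + b ^ 2 from H p.natDegree p le_rfl hp
  intro n
  induction n using Nat.strong_induction_on with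
  | _ n ih =>
    intro p hdeg hp
    by_cases hp0 : p = 0
    · exact ⟨0, 0, by simp [hp0]⟩
    by_cases hd0 : p.natDegree = 0
    · obtain ⟨c, rfl⟩ := natDegree_eq_zero.mp hd0
      have hc : 0 ≤ c := by simpa using hp 0
      refine ⟨C (Real.sqrt c), 0, ?_⟩
      rw [← C_pow, Real.sq_sqrt hc]
      simp
    have hd1 : 1 ≤ p.natDegree := by omega
    by_cases hroot : ∃ x : ℝ, p.eval x = 0
    · obtain ⟨x₀, hx₀⟩ := hroot
      obtain ⟨q, hpq, hqnn⟩ := root_sq_dvd hp hx₀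
      have hq0 : q ≠ 0 := by
        intro h; rw [h, mul_zero] at hpq; exact hp0 hpq
      have hfac0 : ((X - C x₀) ^ 2 : Polynomial ℝ) ≠ 0 := by
        apply pow_ne_zero; exact X_sub_C_ne_zero x₀
      have hnd : p.natDegree = 2 + q.natDegree := by
        rw [hpq, natDegree_mul hfac0 hq0]
        congr 1
        rw [natDegree_pow, natDegree_X_sub_C]
      have hqn : q.natDegree < n := by omega
      obtain ⟨a', b', hab⟩ := ih q.natDegree hqn q le_rfl hqnn
      refine ⟨(X - C x₀) * a', (X - C x₀) * b', ?_⟩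
      rw [hpq, hab]; ring
    · push_neg at hroot
      obtain ⟨α, γ, q, hpq, hqnn, hq0, hπnn, hπnd⟩ := quad_factor hp0 hd1 hroot hp
      set π : Polynomial ℝ := X ^ 2 + C (-(2 * α)) * X + C (α ^ 2 + γ ^ 2) with hπ
      have hπ0 : π ≠ 0 := by
        intro h
        rw [h] at hπnd
        simp at hπnd
      have hnd : p.natDegree = 2 + q.natDegree := by
        rw [hpq, natDegree_mul hπ0 hq0, hπnd]
      have hqn : q.natDegree < n := by omega
      obtain ⟨a', b', hab⟩ := ih q.natDegree hqn q le_rfl hqnn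
      refine ⟨(X - C α) * a' - C γ * b', (X - C α) * b' + C γ * a', ?_⟩
      rw [hpq, hab, hπ]
      have hC2 : C (-(2*α)) = -(2 * C α) := by
        rw [map_neg, map_mul, map_ofNat]
      have hCs : C (α^2 + γ^2) = (C α)^2 + (C γ)^2 := by
        rw [map_add, map_pow, map_pow]
      rw [hC2, hCs]
      ring

/-- Degree control for a two-squares decomposition. -/
lemma two_sq_degree {p a b : Polynomial ℝ} {d : ℕ} (hp : p = a ^ 2 + b ^ 2)
    (hd : p.degree ≤ (2 * d : ℕ)) : a.degree ≤ (d : ℕ) ∧ b.degree ≤ (d : ℕ) := by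
  by_cases hz : a = 0 ∧ b = 0
  · rw [hz.1, hz.2]
    constructor <;> simp
  set m := max a.natDegree b.natDegree with hm
  have hcoeff : ∀ f : Polynomial ℝ, f.natDegree ≤ m → (f ^ 2).coeff (2 * m) = (f.coeff m) ^ 2 := by
    intro f hf
    have hfd : f.degree ≤ (m : ℕ) := le_trans degree_le_natDegree (by exact_mod_cast hf)
    have : f ^ 2 = f * f := sq f
    have key : (f*f).coeff (m+m) = f.coeff m * f.coeff m := by
      rw [coeff_mul]
      apply Finset.sum_eq_single (m, m)
      · rintro ⟨i, j⟩ hij hne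
        rw [Finset.HasAntidiagonal.mem_antidiagonal] at hij
        have : m < i ∨ m < j := by
          by_contra hc
          push_neg at hc
          apply hne
          have h1 : i = m := by omega
          have h2 : j = m := by omega
          rw [h1, h2]
        rcases this with h1 | h1
        · have hz1 : f.coeff i = 0 := coeff_eq_zero_of_degree_lt (lt_of_le_of_lt hfd (by exact_mod_cast h1))
          simp [hz1]
        · have hz1 : f.coeff j = 0 := coeff_eq_zero_of_degree_lt (lt_of_le_of_lt hfd (by exact_mod_cast h1))
          simp [hz1]
      · intro h
        exact absurd (Finset.HasAntidiagonal.mem_antidiagonal.mpr (by rfl)) h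
    rw [this, show 2 * m = m + m by ring, key, ← sq]
  have hma : a.natDegree ≤ m := le_max_left _ _
  have hmb : b.natDegree ≤ m := le_max_right _ _
  have hpc : p.coeff (2 * m) = (a.coeff m) ^ 2 + (b.coeff m) ^ 2 := by
    rw [hp, coeff_add, hcoeff a hma, hcoeff b hmb]
  have hnz : a.coeff m ≠ 0 ∨ b.coeff m ≠ 0 := by
    by_cases ha : a = 0
    · right
      have hb : b ≠ 0 := fun hb => hz ⟨ha, hb⟩
      have : m = b.natDegree := by
        rw [hm, ha]
        simp
      rw [this]
      exact leadingCoeff_ne_zero.mpr hb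
    · rcases max_cases a.natDegree b.natDegree with ⟨h1, _⟩ | ⟨h1, h2⟩
      · left
        rw [hm, h1]
        exact leadingCoeff_ne_zero.mpr ha
      · right
        have hb : b ≠ 0 := by
          intro hb
          rw [hb, natDegree_zero] at h2
          omega
        rw [hm, h1]
        exact leadingCoeff_ne_zero.mpr hb
  have hppos : 0 < p.coeff (2 * m) := by
    rw [hpc]
    rcases hnz with h | h
    · have : 0 < (a.coeff m) ^ 2 := by positivity
      nlinarith [sq_nonneg (b.coeff m)]
    · have : 0 < (b.coeff m) ^ 2 := by positivity
      nlinarith [sq_nonneg (a.coeff m)]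
  have h2m : (2 * m : ℕ) ≤ p.natDegree := le_natDegree_of_ne_zero (ne_of_gt hppos)
  have hp0 : p ≠ 0 := by
    intro h
    rw [h] at hppos
    simp at hppos
  have hpnd : p.natDegree ≤ 2 * d := natDegree_le_iff_degree_le.mpr hd
  have hmd : m ≤ d := by omega
  constructor
  · exact le_trans degree_le_natDegree (by exact_mod_cast le_trans hma hmd)
  · exact le_trans degree_le_natDegree (by exact_mod_cast le_trans hmb hmd)

/-- Square root of `s` modulo an irreducible polynomial. -/
lemma sq_mod_irred {π s : Polynomial ℝ} (hπ : Irreducible π) (hπs : ¬ π ∣ s)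
    (hs : ∀ x : ℝ, 0 < s.eval x) : ∃ σ : Polynomial ℝ, π ∣ (σ ^ 2 - s) := by
  have hπ0 : π ≠ 0 := hπ.ne_zero
  have hπd : π.natDegree ≠ 0 := by
    intro h
    obtain ⟨c, hc⟩ := natDegree_eq_zero.mp h
    have : IsUnit π := by
      rw [← hc, Polynomial.isUnit_C, isUnit_iff_ne_zero]
      intro hc0
      rw [hc0] at hc
      simp at hc
      exact hπ0 hc.symm
    exact hπ.not_isUnit this
  set πC := π.map (algebraMap ℝ ℂ) with hπC
  have hdegmap : πC.degree = π.degree := degree_map_eq_of_injective (algebraMap ℝ ℂ).injective π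
  have hdeg : πC.degree ≠ 0 := by
    rw [hdegmap, degree_eq_natDegree hπ0]
    simp only [ne_eq, Nat.cast_eq_zero]
    exact hπd
  obtain ⟨ζ, hζ⟩ := IsAlgClosed.exists_root πC hdeg
  have hζπ : aeval ζ π = 0 := by
    have : πC.eval ζ = 0 := hζ
    rwa [hπC, Polynomial.eval_map, ← Polynomial.aeval_def] at this
  by_cases him : ζ.im = 0
  · -- real root case
    set x₀ := ζ.re with hx₀
    have hζre : ζ = ((x₀ : ℝ) : ℂ) := by
      apply Complex.ext <;> simp [him, hx₀]
    have hroot : π.eval x₀ = 0 := by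
      have h1 : aeval ((algebraMap ℝ ℂ) x₀) π = (algebraMap ℝ ℂ) (π.eval x₀) :=
        aeval_algebraMap_apply_eq_algebraMap_eval x₀ π
      rw [show (algebraMap ℝ ℂ) x₀ = ((x₀ : ℝ) : ℂ) from rfl, ← hζre, hζπ] at h1
      have := h1.symm
      simpa using this
    have hdvd1 : (X - C x₀) ∣ π := dvd_iff_isRoot.mpr hroot
    obtain ⟨t, ht⟩ := hdvd1
    have htu : IsUnit t := by
      rcases hπ.isUnit_or_isUnit ht with h | h
      · exact absurd h (by
          intro hu
          have := Polynomial.degree_eq_zero_of_isUnit hu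
          rw [degree_X_sub_C] at this
          norm_num at this)
      · exact h
    have hπdvdX : π ∣ (X - C x₀) := by
      obtain ⟨u, hu⟩ := htu
      refine ⟨(↑u⁻¹ : Polynomial ℝ), ?_⟩
      rw [ht, ← hu]
      rw [mul_assoc]
      simp
    refine ⟨C (Real.sqrt (s.eval x₀)), dvd_trans hπdvdX ?_⟩
    rw [dvd_iff_isRoot]
    unfold IsRoot
    rw [eval_sub, eval_pow, eval_C]
    rw [Real.sq_sqrt (le_of_lt (hs x₀))]
    ring
  · -- complex root case
    obtain ⟨w, hw⟩ := IsAlgClosed.exists_pow_nat_eq (k := ℂ) (aeval ζ s) (n := 2) (by norm_num)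
    set c₁ := w.im / ζ.im with hc₁
    set c₀ := w.re - c₁ * ζ.re with hc₀
    set σ : Polynomial ℝ := C c₁ * X + C c₀ with hσ
    have hσζ : aeval ζ σ = w := by
      rw [hσ, map_add, map_mul, aeval_C, aeval_C, aeval_X]
      simp only [Complex.coe_algebraMap]
      apply Complex.ext
      · simp [hc₀]
      · simp only [Complex.add_im, Complex.mul_im, Complex.ofReal_re, Complex.ofReal_im,
          zero_mul, add_zero]
        rw [hc₁]
        field_simp
    have hkey : aeval ζ (σ ^ 2 - s) = 0 := by
      rw [map_sub, map_pow, hσζ, hw]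
      ring
    refine ⟨σ, ?_⟩
    by_contra hnd
    have hcop : IsCoprime π (σ ^ 2 - s) := hπ.coprime_iff_not_dvd.mpr hnd
    obtain ⟨A, B, hAB⟩ := hcop
    have := congrArg (aeval ζ) hAB
    rw [map_add, map_mul, map_mul, hζπ, hkey, mul_zero, mul_zero, add_zero, map_one] at this
    exact zero_ne_one this

/-- Inverse square root of `s` modulo `G`: there is `y` with `s y² ≡ 1 (mod G)`. -/
lemma sqrt_mod {s : Polynomial ℝ} (hs : ∀ x : ℝ, 0 < s.eval x) :
    ∀ (n : ℕ) (G : Polynomial ℝ), G.natDegree ≤ n → G ≠ 0 → IsCoprime G s →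
    ∃ y w : Polynomial ℝ, s * y ^ 2 = 1 + G * w := by
  intro n
  induction n using Nat.strong_induction_on with
  | _ n ih =>
    intro G hGn hG0 hGs
    by_cases hGu : IsUnit G
    · obtain ⟨c, hc, hcG⟩ := Polynomial.isUnit_iff.mp hGu
      have hc0 : c ≠ 0 := hc.ne_zero
      refine ⟨0, C c⁻¹ * (-1), ?_⟩
      rw [← hcG]
      have h1 : (C c : Polynomial ℝ) * (C c⁻¹ * (-1)) = -1 := by
        rw [← mul_assoc, ← map_mul, mul_inv_cancel₀ hc0]
        simp
      rw [h1]
      simp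
    · -- G nonunit: extract an irreducible factor
      obtain ⟨π, hπirr, hπdvd⟩ := WfDvdMonoid.exists_irreducible_factor hGu hG0
      obtain ⟨G₁, hG₁⟩ := hπdvd
      have hπ0 : π ≠ 0 := hπirr.ne_zero
      have hG₁0 : G₁ ≠ 0 := by
        intro h
        rw [h, mul_zero] at hG₁
        exact hG0 hG₁
      have hπd1 : 1 ≤ π.natDegree := by
        by_contra h
        push_neg at h
        interval_cases hd : π.natDegree
        · obtain ⟨c, hc⟩ := natDegree_eq_zero.mp hd
          apply hπirr.not_isUnit
          rw [← hc, Polynomial.isUnit_C, isUnit_iff_ne_zero]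
          intro hc0
          rw [hc0] at hc
          simp at hc
          exact hπ0 hc.symm
      have hgdeg : G₁.natDegree < n := by
        have : G.natDegree = π.natDegree + G₁.natDegree := by
          rw [hG₁, natDegree_mul hπ0 hG₁0]
        omega
      -- coprimality for G₁
      obtain ⟨A, B, hAB⟩ := hGs
      have hG₁s : IsCoprime G₁ s := ⟨A * π, B, by rw [hG₁] at hAB; linear_combination hAB⟩
      have hπs : ¬ π ∣ s := by
        intro hdvd
        have h1 : π ∣ (1 : Polynomial ℝ) := by
          rw [← hAB]
          apply dvd_add
          · exact Dvd.dvd.mul_left (Dvd.intro G₁ hG₁.symm) A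
          · exact Dvd.dvd.mul_left hdvd B
        exact hπirr.not_isUnit (isUnit_of_dvd_one h1)
      obtain ⟨y₁, w₁, hy₁⟩ := ih G₁.natDegree hgdeg G₁ le_rfl hG₁0 hG₁s
      have hη : ∃ η : Polynomial ℝ, π ∣ (w₁ + 2*s*y₁*η + s*G₁*η^2) := by
        by_cases hcase : π ∣ G₁
        · -- linear solve
          have hπy : ¬ π ∣ y₁ := by
            intro hdvd
            have h1 : π ∣ (1 : Polynomial ℝ) := by
              have heq : (1 : Polynomial ℝ) = s * y₁^2 - G₁ * w₁ := by linear_combination -hy₁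
              rw [heq]
              apply dvd_sub
              · exact dvd_mul_of_dvd_right (by rw [sq]; exact hdvd.mul_right y₁) s
              · exact hcase.mul_right w₁
            exact hπirr.not_isUnit (isUnit_of_dvd_one h1)
          have hcop : IsCoprime π (s * y₁) := hπirr.coprime_iff_not_dvd.mpr (by
            intro hdvd
            rcases (hπirr.prime.dvd_mul).mp hdvd with h | h
            · exact hπs h
            · exact hπy h)
          obtain ⟨A', B', hA'B'⟩ := hcop
          refine ⟨-(C (1/2 : ℝ) * B' * w₁), ?_⟩
          have hkey : w₁ + 2*s*y₁*(-(C (1/2 : ℝ) * B' * w₁)) + s*G₁*(-(C (1/2 : ℝ) * B' * w₁))^2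
              = w₁ * (A' * π) + s*G₁*(C (1/2 : ℝ) * B' * w₁)^2 := by
            have h2 : (2 : Polynomial ℝ) * C (1/2 : ℝ) = 1 := by
              rw [← map_ofNat (C : ℝ →+* Polynomial ℝ) 2, ← map_mul]
              norm_num
            have h3 : w₁ * (A' * π) = w₁ * (1 - B' * (s * y₁)) := by
              rw [show A' * π = 1 - B' * (s * y₁) by linear_combination hA'B']
            rw [h3]
            calc w₁ + 2*s*y₁*(-(C (1/2 : ℝ) * B' * w₁)) + s*G₁*(-(C (1/2 : ℝ) * B' * w₁))^2
                = w₁ - (2 * C (1/2:ℝ)) * (s*y₁*B'*w₁) + s*G₁*(C (1/2 : ℝ) * B' * w₁)^2 := by ring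
              _ = w₁ - 1 * (s*y₁*B'*w₁) + s*G₁*(C (1/2 : ℝ) * B' * w₁)^2 := by rw [h2]
              _ = w₁ * (1 - B' * (s * y₁)) + s*G₁*(C (1/2 : ℝ) * B' * w₁)^2 := by ring
          rw [hkey]
          apply dvd_add
          · exact (dvd_mul_left π A').mul_left w₁
          · exact (hcase.mul_left s).mul_right _
        · -- quadratic solve via sqrt of s mod π
          obtain ⟨σ, hσ⟩ := sq_mod_irred hπirr hπs hs
          have hcop2 : IsCoprime π (s * G₁) := hπirr.coprime_iff_not_dvd.mpr (by
            intro hdvd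
            rcases (hπirr.prime.dvd_mul).mp hdvd with h | h
            · exact hπs h
            · exact hcase h)
          obtain ⟨A', B', hA'B'⟩ := hcop2
          set η := B' * (σ - s * y₁) with hηdef
          refine ⟨η, ?_⟩
          set Z := w₁ + 2*s*y₁*η + s*G₁*η^2 with hZ
          have hGsZ : G₁ * s * Z = (s*G₁*η + s*y₁)^2 - s := by
            rw [hZ]
            linear_combination (-s) * hy₁
          have hstep : (s*G₁*η + s*y₁) = σ - A' * π * (σ - s*y₁) := by
            rw [hηdef]
            linear_combination (σ - s*y₁) * hA'B'
          have hdvdZ : π ∣ G₁ * s * Z := by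
            rw [hGsZ, hstep]
            have hexp : (σ - A'*π*(σ - s*y₁))^2 - s
                = (σ^2 - s) + π * (A'^2*π*(σ - s*y₁)^2 - 2*σ*A'*(σ - s*y₁)) := by ring
            rw [hexp]
            exact dvd_add hσ (dvd_mul_right π _)
          rcases (hπirr.prime.dvd_mul).mp hdvdZ with h | h
          · rcases (hπirr.prime.dvd_mul).mp h with h1 | h1
            · exact absurd h1 hcase
            · exact absurd h1 hπs
          · exact h
      obtain ⟨η, hηdvd⟩ := hη
      obtain ⟨T, hT⟩ := hηdvd
      refine ⟨y₁ + G₁ * η, T, ?_⟩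
      have h1 : s * (y₁ + G₁*η)^2 = 1 + G₁ * (w₁ + 2*s*y₁*η + s*G₁*η^2) := by
        linear_combination hy₁
      rw [h1, hT, hG₁]
      ring

/-- Asymmetric spanning lemma: assumes `natDegree h₂ ≤ natDegree h₁`. -/
lemma spanning_aux {h₁ h₂ : Polynomial ℝ} (hcop : IsCoprime h₁ h₂)
    (hord : h₂.natDegree ≤ h₁.natDegree) (m : ℕ) (hm : h₁.natDegree ≤ m) :
    ∀ f : Polynomial ℝ, f.degree ≤ ((m + h₁.natDegree : ℕ) : WithBot ℕ) →
    ∃ w₁ w₂ : Polynomial ℝ, w₁.degree ≤ (m : ℕ) ∧ w₂.degree ≤ (m : ℕ) ∧ f = h₁ * w₁ + h₂ * w₂ := by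
  intro f hf
  set D := h₁.natDegree with hD
  by_cases h₁0 : h₁ = 0
  · -- h₂ is a unit
    have hu : IsUnit h₂ := by
      rcases hcop with ⟨a, b, hab⟩
      rw [h₁0] at hab
      simp at hab
      exact IsUnit.of_mul_eq_one _ (mul_comm b h₂ ▸ hab)
    obtain ⟨c, hc, hcG⟩ := Polynomial.isUnit_iff.mp hu
    have hc0 : c ≠ 0 := hc.ne_zero
    refine ⟨0, C c⁻¹ * f, ?_, ?_, ?_⟩
    · simp
    · refine le_trans (degree_mul_le _ _) ?_
      refine le_trans (add_le_add degree_C_le hf) ?_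
      rw [h₁0] at hD
      simp only [hD, natDegree_zero, add_zero] at *
      simp
    · rw [← hcG, ← mul_assoc, ← map_mul, mul_inv_cancel₀ hc0]
      simp
  · by_cases hD0 : D = 0
    · -- h₁ is a nonzero constant
      have hc0 : h₁.coeff 0 ≠ 0 := by
        have := leadingCoeff_ne_zero.mpr h₁0
        rwa [leadingCoeff, ← hD, hD0] at this
      have hnd0 : h₁.natDegree = 0 := by rw [← hD]; exact hD0
      obtain ⟨c, hc⟩ := natDegree_eq_zero.mp hnd0
      have hcne : c ≠ 0 := by
        intro h
        rw [h] at hc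
        simp at hc
        exact h₁0 hc.symm
      refine ⟨C c⁻¹ * f, 0, ?_, ?_, ?_⟩
      · refine le_trans (degree_mul_le _ _) ?_
        refine le_trans (add_le_add degree_C_le hf) ?_
        rw [hD0]
        simp
      · simp
      · rw [← hc, ← mul_assoc, ← map_mul, mul_inv_cancel₀ hcne]
        simp
    · -- main case : D ≥ 1
      set u := h₁.leadingCoeff⁻¹ with hu
      have hlc : h₁.leadingCoeff ≠ 0 := leadingCoeff_ne_zero.mpr h₁0
      have hu0 : u ≠ 0 := inv_ne_zero hlc
      set gm := h₁ * C u with hgm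
      have hgmm : gm.Monic := monic_mul_leadingCoeff_inv h₁0
      have hgmd : gm.degree = h₁.degree := by
        rw [hgm, degree_mul_C hu0]
      obtain ⟨a, b, hab⟩ := hcop
      set w₂ := (b * f) %ₘ gm with hw₂
      have hw₂deg : w₂.degree < (D : WithBot ℕ) := by
        have := degree_modByMonic_lt (b * f) hgmm
        rwa [hgmd, degree_eq_natDegree h₁0] at this
      have hw₂m : w₂.degree ≤ (m : ℕ) := by
        refine le_trans (le_of_lt hw₂deg) ?_
        exact_mod_cast hm
      have hdvd2 : h₁ ∣ ((b * f) - w₂) := by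
        have heq : w₂ + gm * ((b * f) /ₘ gm) = b * f := modByMonic_add_div (b * f) gm
        have : (b * f) - w₂ = gm * ((b * f) /ₘ gm) := by linear_combination -heq
        rw [this, hgm]
        exact Dvd.dvd.mul_right (dvd_mul_right h₁ (C u)) _
      have hdvd : h₁ ∣ (f - h₂ * w₂) := by
        have heq2 : f - h₂*w₂ = (a*f)*h₁ + h₂*((b*f) - w₂) := by linear_combination (-f) * hab
        rw [heq2]
        exact dvd_add (dvd_mul_left h₁ (a*f)) (hdvd2.mul_left h₂)
      obtain ⟨w₁, hw₁⟩ := hdvd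
      refine ⟨w₁, w₂, ?_, hw₂m, by linear_combination hw₁⟩
      by_cases hw₁0 : w₁ = 0
      · rw [hw₁0]; simp
      have hnum : (f - h₂ * w₂).degree ≤ ((m + D : ℕ) : WithBot ℕ) := by
        refine le_trans (degree_sub_le _ _) ?_
        rw [max_le_iff]
        refine ⟨hf, ?_⟩
        refine le_trans (degree_mul_le _ _) ?_
        by_cases h₂0 : h₂ = 0
        · rw [h₂0]; simp
        calc h₂.degree + w₂.degree ≤ (h₂.natDegree : WithBot ℕ) + (D : ℕ) := by
              refine add_le_add degree_le_natDegree (le_of_lt hw₂deg)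
          _ ≤ ((m : ℕ) : WithBot ℕ) + (D : ℕ) := by
              refine add_le_add ?_ le_rfl
              exact_mod_cast le_trans hord hm
          _ = ((m + D : ℕ) : WithBot ℕ) := by
              rw [← Nat.cast_add]
      have hfsub0 : f - h₂ * w₂ ≠ 0 := by
        intro h
        rw [h] at hw₁
        exact hw₁0 (by
          rcases mul_eq_zero.mp hw₁.symm with h' | h'
          · exact absurd h' h₁0
          · exact h')
      have hnat : (f - h₂*w₂).natDegree ≤ m + D := natDegree_le_iff_degree_le.mpr hnum
      have : h₁.natDegree + w₁.natDegree ≤ m + D := by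
        rw [← natDegree_mul h₁0 hw₁0, ← hw₁]
        exact hnat
      have hw₁m : w₁.natDegree ≤ m := by omega
      exact le_trans degree_le_natDegree (by exact_mod_cast hw₁m)

/-- Spanning lemma: coprime `h₁, h₂` of degree at most `D` (attained) span everything. -/
lemma spanning {h₁ h₂ : Polynomial ℝ} (hcop : IsCoprime h₁ h₂) (m : ℕ)
    (hm : max h₁.natDegree h₂.natDegree ≤ m) :
    ∀ f : Polynomial ℝ, f.degree ≤ ((m + max h₁.natDegree h₂.natDegree : ℕ) : WithBot ℕ) →
    ∃ w₁ w₂ : Polynomial ℝ, w₁.degree ≤ (m : ℕ) ∧ w₂.degree ≤ (m : ℕ) ∧ f = h₁ * w₁ + h₂ * w₂ := by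
  intro f hf
  rcases le_total h₂.natDegree h₁.natDegree with hord | hord
  · have hmax : max h₁.natDegree h₂.natDegree = h₁.natDegree := max_eq_left hord
    rw [hmax] at hf hm
    exact spanning_aux hcop hord m hm f hf
  · have hmax : max h₁.natDegree h₂.natDegree = h₂.natDegree := max_eq_right hord
    rw [hmax] at hf hm
    obtain ⟨w₂, w₁, hw₂, hw₁, heq⟩ := spanning_aux hcop.symm hord m hm f hf
    exact ⟨w₁, w₂, hw₁, hw₂, by linear_combination heq⟩

set_option maxHeartbeats 2000000 in
/-- The core positivity lemma: at a second-order critical point, the linear functional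
`B · q` is nonnegative on squares of polynomials of degree at most `d`. -/
lemma core_nonneg (d : ℕ) (hd : 1 ≤ d) (B : Polynomial ℝ →ₗ[ℝ] Polynomial ℝ →ₗ[ℝ] ℝ)
    (q : Polynomial ℝ) (U₁ U₂ : Polynomial ℝ) (hU₁0 : U₁ ≠ 0)
    (hU₁d : U₁.degree ≤ (d : ℕ)) (hU₂d : U₂.degree ≤ (d : ℕ))
    (hgrad₁ : ∀ w : Polynomial ℝ, w.degree ≤ (d : ℕ) → B (U₁ * w) q = 0)
    (hgrad₂ : ∀ w : Polynomial ℝ, w.degree ≤ (d : ℕ) → B (U₂ * w) q = 0)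
    (hhess : ∀ x y : Polynomial ℝ, x.degree ≤ (d : ℕ) → y.degree ≤ (d : ℕ) →
      0 ≤ B (x ^ 2 + y ^ 2) q + 2 * B (U₁ * x + U₂ * y) (U₁ * x + U₂ * y)) :
    ∀ a : Polynomial ℝ, a.degree ≤ (d : ℕ) → 0 ≤ B (a ^ 2) q := by
  classical
  -- gcd factorization
  set g := EuclideanDomain.gcd U₁ U₂ with hgdef
  have hg0 : g ≠ 0 := by
    intro h
    exact hU₁0 (EuclideanDomain.gcd_eq_zero_iff.mp h).1
  obtain ⟨h₁, hU₁⟩ : g ∣ U₁ := EuclideanDomain.gcd_dvd_left U₁ U₂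
  obtain ⟨h₂, hU₂⟩ : g ∣ U₂ := EuclideanDomain.gcd_dvd_right U₁ U₂
  have hh₁0 : h₁ ≠ 0 := by
    intro h
    rw [h, mul_zero] at hU₁
    exact hU₁0 hU₁
  have hcop : IsCoprime h₁ h₂ := by
    have hbez := EuclideanDomain.gcd_eq_gcd_ab U₁ U₂
    refine ⟨EuclideanDomain.gcdA U₁ U₂, EuclideanDomain.gcdB U₁ U₂, ?_⟩
    have hcancel : g * (EuclideanDomain.gcdA U₁ U₂ * h₁ + EuclideanDomain.gcdB U₁ U₂ * h₂) = g * 1 := by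
      rw [mul_one]
      calc g * (EuclideanDomain.gcdA U₁ U₂ * h₁ + EuclideanDomain.gcdB U₁ U₂ * h₂)
          = U₁ * EuclideanDomain.gcdA U₁ U₂ + U₂ * EuclideanDomain.gcdB U₁ U₂ := by
            rw [hU₁, hU₂]; ring
        _ = g := hbez.symm
    exact (mul_left_cancel₀ hg0 hcancel)
  set k := g.natDegree with hk
  set D := max h₁.natDegree h₂.natDegree with hD
  have hkD : k + D ≤ d := by
    rcases max_cases h₁.natDegree h₂.natDegree with ⟨h1, h2⟩ | ⟨h1, h2⟩
    · have : U₁.natDegree ≤ d := natDegree_le_iff_degree_le.mpr hU₁d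
      rw [hU₁, natDegree_mul hg0 hh₁0] at this
      omega
    · have hh₂0 : h₂ ≠ 0 := by
        intro h
        rw [h] at h2
        simp at h2
      have hU₂0 : U₂ ≠ 0 := by
        intro h
        rw [h] at hU₂
        rcases mul_eq_zero.mp hU₂.symm with h' | h'
        · exact hg0 h'
        · exact hh₂0 h'
      have : U₂.natDegree ≤ d := natDegree_le_iff_degree_le.mpr hU₂d
      rw [hU₂, natDegree_mul hg0 hh₂0] at this
      omega
  have hDd : D ≤ d := by omega
  have hkdD : k ≤ d - D := by omega
  -- the sum of squares s
  set s := h₁ ^ 2 + h₂ ^ 2 with hs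
  have hh₁D : h₁.degree ≤ (D : ℕ) := le_trans degree_le_natDegree (by exact_mod_cast le_max_left _ _)
  have hh₂D : h₂.degree ≤ (D : ℕ) := le_trans degree_le_natDegree (by exact_mod_cast le_max_right _ _)
  have hsdeg : s.degree ≤ ((2 * D : ℕ) : WithBot ℕ) := by
    rw [hs]
    refine le_trans (degree_add_le _ _) ?_
    rw [max_le_iff]
    constructor <;>
    · rw [sq]
      refine le_trans (degree_mul_le _ _) ?_
      rw [show ((2*D : ℕ) : WithBot ℕ) = (D:ℕ) + (D:ℕ) by rw [← Nat.cast_add]; congr 1; ring]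
      first
      | exact add_le_add hh₁D hh₁D
      | exact add_le_add hh₂D hh₂D
  have hspos : ∀ x : ℝ, 0 < s.eval x := by
    intro x
    obtain ⟨a, b, hab⟩ := hcop
    have heval : (a.eval x) * (h₁.eval x) + (b.eval x) * (h₂.eval x) = 1 := by
      have := congrArg (fun f => Polynomial.eval x f) hab
      simpa using this
    have hsx : s.eval x = (h₁.eval x)^2 + (h₂.eval x)^2 := by
      rw [hs]; simp
    rw [hsx]
    rcases eq_or_ne (h₁.eval x) 0 with h1 | h1
    · rcases eq_or_ne (h₂.eval x) 0 with h2 | h2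
      · rw [h1, h2] at heval
        simp at heval
      · positivity
    · positivity
  have hs0 : s ≠ 0 := by
    intro h
    have := hspos 0
    rw [h] at this
    simp at this
  have hscoeff : 0 < s.coeff (2 * D) := by
    have hc1 : (h₁^2).coeff (2*D) = (h₁.coeff D)^2 := by
      rw [sq, sq, show 2*D = D + D by ring]
      exact coeff_mul_top hh₁D hh₁D
    have hc2 : (h₂^2).coeff (2*D) = (h₂.coeff D)^2 := by
      rw [sq, sq, show 2*D = D + D by ring]
      exact coeff_mul_top hh₂D hh₂D
    have hsum : s.coeff (2*D) = (h₁.coeff D)^2 + (h₂.coeff D)^2 := by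
      rw [hs, coeff_add, hc1, hc2]
    have hne : h₁.coeff D ≠ 0 ∨ h₂.coeff D ≠ 0 := by
      rcases max_cases h₁.natDegree h₂.natDegree with ⟨h1, h2⟩ | ⟨h1, h2⟩
      · left
        rw [hD, h1]
        exact leadingCoeff_ne_zero.mpr hh₁0
      · right
        have hh₂0 : h₂ ≠ 0 := by
          intro h
          rw [h] at h2
          simp at h2
        rw [hD, h1]
        exact leadingCoeff_ne_zero.mpr hh₂0
    rw [hsum]
    rcases hne with h | h
    · have : 0 < (h₁.coeff D)^2 := by positivity
      nlinarith [sq_nonneg (h₂.coeff D)]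
    · have : 0 < (h₂.coeff D)^2 := by positivity
      nlinarith [sq_nonneg (h₁.coeff D)]
  have hsnd : s.natDegree = 2 * D := by
    have h1 : s.natDegree ≤ 2*D := natDegree_le_iff_degree_le.mpr hsdeg
    have h2 : 2*D ≤ s.natDegree := le_natDegree_of_ne_zero (ne_of_gt hscoeff)
    omega
  -- multiplication degree helper
  have hmul : ∀ h' t : Polynomial ℝ, h'.degree ≤ (D:ℕ) → t.degree ≤ ((d - D:ℕ) : WithBot ℕ) →
      (h' * t).degree ≤ (d : ℕ) := by
    intro h' t hh' ht
    refine le_trans (degree_mul_le _ _) ?_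
    refine le_trans (add_le_add hh' ht) ?_
    rw [← Nat.cast_add]
    exact_mod_cast (by omega : D + (d - D) ≤ d)
  -- THE CONE inequality
  have hcone : ∀ t : Polynomial ℝ, t.degree ≤ ((d - D : ℕ) : WithBot ℕ) → 0 ≤ B (s * t^2) q := by
    intro t ht
    have hy : (-(h₁ * t)).degree ≤ (d : ℕ) := by
      rw [degree_neg]; exact hmul h₁ t hh₁D ht
    have h := hhess (h₂ * t) (-(h₁ * t)) (hmul h₂ t hh₂D ht) hy
    have h1 : (h₂*t)^2 + (-(h₁*t))^2 = s * t^2 := by rw [hs]; ring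
    have h2 : U₁ * (h₂*t) + U₂ * (-(h₁*t)) = 0 := by rw [hU₁, hU₂]; ring
    rw [h1, h2] at h
    simpa using h
  -- PROPAGATION of null directions
  have hprop : ∀ t : Polynomial ℝ, t.degree ≤ ((d - D : ℕ) : WithBot ℕ) → B (s * t^2) q = 0 →
      ∀ w : Polynomial ℝ, w.degree ≤ (d : ℕ) →
      B (h₁ * t * w) q = 0 ∧ B (h₂ * t * w) q = 0 := by
    intro t ht hst w hw
    constructor
    · have key : ∀ ε : ℝ, 0 ≤ (B (w^2) q + 2 * B (U₂*w) (U₂*w)) * ε^2 + (-(2 * B (h₁*t*w) q)) * ε := by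
        intro ε
        have hy : (ε • w - h₁ * t).degree ≤ (d:ℕ) := by
          refine le_trans (degree_sub_le _ _) ?_
          rw [max_le_iff]
          exact ⟨le_trans (degree_smul_le _ _) hw, hmul h₁ t hh₁D ht⟩
        have h := hhess (h₂*t) (ε • w - h₁*t) (hmul h₂ t hh₂D ht) hy
        have e1 : (h₂*t)^2 + (ε • w - h₁*t)^2 = (s*t^2) + ((ε^2) • (w^2) - (2*ε) • (h₁*t*w)) := by
          simp only [smul_eq_C_mul, map_mul, map_pow, map_ofNat]
          rw [hs]
          ring
        have e2 : U₁ * (h₂*t) + U₂ * (ε • w - h₁*t) = ε • (U₂ * w) := by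
          simp only [smul_eq_C_mul]
          rw [hU₁, hU₂]
          ring
        rw [e1, e2] at h
        have hB1 : B (s*t^2 + ((ε^2) • (w^2) - (2*ε) • (h₁*t*w))) q
            = B (s*t^2) q + ε^2 * B (w^2) q - (2*ε) * B (h₁*t*w) q := by
          rw [map_add, map_sub, map_smul, map_smul]
          simp only [LinearMap.add_apply, LinearMap.sub_apply, LinearMap.smul_apply, smul_eq_mul]
          ring
        have hB2 : B (ε • (U₂*w)) (ε • (U₂*w)) = ε^2 * B (U₂*w) (U₂*w) := by
          simp only [map_smul, LinearMap.smul_apply, smul_eq_mul]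
          ring
        rw [hB1, hB2, hst] at h
        ring_nf at h ⊢
        linarith
      have hz := lin_coeff_zero key
      linarith
    · have key : ∀ ε : ℝ, 0 ≤ (B (w^2) q + 2 * B (U₁*w) (U₁*w)) * ε^2 + (2 * B (h₂*t*w) q) * ε := by
        intro ε
        have hx : (ε • w + h₂ * t).degree ≤ (d:ℕ) := by
          refine le_trans (degree_add_le _ _) ?_
          rw [max_le_iff]
          exact ⟨le_trans (degree_smul_le _ _) hw, hmul h₂ t hh₂D ht⟩
        have hy : (-(h₁ * t)).degree ≤ (d : ℕ) := by
          rw [degree_neg]; exact hmul h₁ t hh₁D ht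
        have h := hhess (ε • w + h₂*t) (-(h₁*t)) hx hy
        have e1 : (ε • w + h₂*t)^2 + (-(h₁*t))^2 = (s*t^2) + ((ε^2) • (w^2) + (2*ε) • (h₂*t*w)) := by
          simp only [smul_eq_C_mul, map_mul, map_pow, map_ofNat]
          rw [hs]
          ring
        have e2 : U₁ * (ε • w + h₂*t) + U₂ * (-(h₁*t)) = ε • (U₁ * w) := by
          simp only [smul_eq_C_mul]
          rw [hU₁, hU₂]
          ring
        rw [e1, e2] at h
        have hB1 : B (s*t^2 + ((ε^2) • (w^2) + (2*ε) • (h₂*t*w))) q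
            = B (s*t^2) q + ε^2 * B (w^2) q + (2*ε) * B (h₂*t*w) q := by
          rw [map_add, map_add, map_smul, map_smul]
          simp only [LinearMap.add_apply, LinearMap.smul_apply, smul_eq_mul]
          ring
        have hB2 : B (ε • (U₁*w)) (ε • (U₁*w)) = ε^2 * B (U₁*w) (U₁*w) := by
          simp only [map_smul, LinearMap.smul_apply, smul_eq_mul]
          ring
        rw [hB1, hB2, hst] at h
        ring_nf at h ⊢
        linarith
      have hz := lin_coeff_zero key
      linarith
  -- base certification : B (g * f) q = 0 for deg f ≤ d + D
  have certbase : ∀ f : Polynomial ℝ, f.degree ≤ ((d + D : ℕ) : WithBot ℕ) → B (g * f) q = 0 := by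
    intro f hf
    obtain ⟨w₁, w₂, hw₁, hw₂, heq⟩ := spanning hcop d (by rw [← hD]; exact hDd) f
      (by rw [← hD]; exact hf)
    have hgf : g * f = U₁ * w₁ + U₂ * w₂ := by rw [heq, hU₁, hU₂]; ring
    rw [hgf, map_add, LinearMap.add_apply, hgrad₁ w₁ hw₁, hgrad₂ w₂ hw₂, add_zero]
  -- from propagated products to certification at a larger window
  have certspan : ∀ (G' : Polynomial ℝ) (M : ℕ),
      (∀ τ w : Polynomial ℝ, τ.degree ≤ (M : ℕ) → w.degree ≤ (d : ℕ) →
        B (h₁ * (G' * τ) * w) q = 0 ∧ B (h₂ * (G' * τ) * w) q = 0) →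
      ∀ f : Polynomial ℝ, f.degree ≤ ((d + M + D : ℕ) : WithBot ℕ) → B (G' * f) q = 0 := by
    intro G' M hτ f hf
    have hmono : ∀ (h' : Polynomial ℝ),
        (∀ τ w : Polynomial ℝ, τ.degree ≤ (M : ℕ) → w.degree ≤ (d : ℕ) →
          B (h' * (G' * τ) * w) q = 0) →
        ∀ W : Polynomial ℝ, W.degree ≤ ((d + M : ℕ) : WithBot ℕ) → B (G' * (h' * W)) q = 0 := by
      intro h' hh' W hW
      have hWnd : W.natDegree ≤ d + M := natDegree_le_iff_degree_le.mpr hW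
      have hrepr := Polynomial.as_sum_range' W (d + M + 1) (by omega)
      have hsplit : B (G' * (h' * W)) q
          = ∑ c ∈ Finset.range (d + M + 1), W.coeff c * B (G' * (h' * X ^ c)) q := by
        conv_lhs => rw [hrepr]
        have hmul2 : G' * (h' * (∑ c ∈ Finset.range (d + M + 1), (Polynomial.monomial c) (W.coeff c)))
            = ∑ c ∈ Finset.range (d + M + 1), (W.coeff c) • (G' * (h' * X ^ c)) := by
          rw [Finset.mul_sum, Finset.mul_sum]
          apply Finset.sum_congr rfl
          intro c _
          rw [smul_eq_C_mul, ← Polynomial.C_mul_X_pow_eq_monomial]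
          ring
        rw [hmul2, map_sum, LinearMap.sum_apply]
        apply Finset.sum_congr rfl
        intro c _
        rw [map_smul, LinearMap.smul_apply, smul_eq_mul]
      rw [hsplit]
      apply Finset.sum_eq_zero
      intro c hc
      rw [Finset.mem_range] at hc
      have hkey : G' * (h' * (X : Polynomial ℝ) ^ c)
          = h' * (G' * X ^ (min c M)) * X ^ (c - min c M) := by
        rw [show (X : Polynomial ℝ) ^ c = X ^ (min c M) * X ^ (c - min c M) by
          rw [← pow_add]; congr 1; omega]
        ring
      rw [hkey, hh' (X ^ (min c M)) (X ^ (c - min c M)) ?_ ?_, mul_zero]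
      · rw [degree_X_pow]
        exact_mod_cast min_le_right c M
      · rw [degree_X_pow]
        exact_mod_cast (by omega : c - min c M ≤ d)
    obtain ⟨w₁, w₂, hw₁, hw₂, heq⟩ := spanning hcop (d + M) (by rw [← hD]; omega) f
      (by rw [← hD]
          refine le_trans hf ?_
          exact_mod_cast (by omega : d + M + D ≤ d + M + D))
    have hgf : G' * f = G' * (h₁ * w₁) + G' * (h₂ * w₂) := by rw [heq]; ring
    rw [hgf, map_add, LinearMap.add_apply]
    rw [hmono h₁ (fun τ w h1 h2 => (hτ τ w h1 h2).1) w₁ hw₁,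
        hmono h₂ (fun τ w h1 h2 => (hτ τ w h1 h2).2) w₂ hw₂, add_zero]
  -- extraction of bad factors shared with s
  have extract : ∀ (n : ℕ) (G : Polynomial ℝ), G ≠ 0 → G ∣ g → G.natDegree ≤ n →
      (∀ f : Polynomial ℝ, f.degree ≤ ((d + D : ℕ) : WithBot ℕ) → B (G * f) q = 0) →
      ∃ Gf : Polynomial ℝ, Gf ≠ 0 ∧ Gf ∣ g ∧ IsCoprime Gf s ∧
        (∀ f : Polynomial ℝ, f.degree ≤ ((d + D : ℕ) : WithBot ℕ) → B (Gf * f) q = 0) := by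
    intro n
    induction n with
    | zero =>
      intro G hG0 hGg hGn hcert
      refine ⟨G, hG0, hGg, ?_, hcert⟩
      have hGnd : G.natDegree = 0 := by omega
      obtain ⟨c, hc⟩ := natDegree_eq_zero.mp hGnd
      have hc0 : c ≠ 0 := by
        intro h
        rw [h] at hc
        simp at hc
        exact hG0 hc.symm
      refine ⟨C c⁻¹, 0, ?_⟩
      rw [← hc, zero_mul, add_zero, ← map_mul, inv_mul_cancel₀ hc0, map_one]
    | succ n ih =>
      intro G hG0 hGg hGn hcert
      by_cases hGs : IsCoprime G s
      · exact ⟨G, hG0, hGg, hGs, hcert⟩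
      set E := EuclideanDomain.gcd G s with hE
      have hE0 : E ≠ 0 := fun h => hG0 (EuclideanDomain.gcd_eq_zero_iff.mp h).1
      obtain ⟨G', hG'⟩ : E ∣ G := EuclideanDomain.gcd_dvd_left G s
      obtain ⟨s', hs'⟩ : E ∣ s := EuclideanDomain.gcd_dvd_right G s
      have hG'0 : G' ≠ 0 := by intro h; rw [h, mul_zero] at hG'; exact hG0 hG'
      have hs'0 : s' ≠ 0 := by intro h; rw [h, mul_zero] at hs'; exact hs0 hs'
      have hEunit : ¬ IsUnit E := by
        intro hu
        apply hGs
        obtain ⟨c, hcu, hcE⟩ := Polynomial.isUnit_iff.mp hu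
        have hc0 : c ≠ 0 := hcu.ne_zero
        have hbez := EuclideanDomain.gcd_eq_gcd_ab G s
        refine ⟨C c⁻¹ * EuclideanDomain.gcdA G s, C c⁻¹ * EuclideanDomain.gcdB G s, ?_⟩
        have h1 : C c⁻¹ * E = 1 := by
          rw [← hcE, ← map_mul, inv_mul_cancel₀ hc0, map_one]
        calc C c⁻¹ * EuclideanDomain.gcdA G s * G + C c⁻¹ * EuclideanDomain.gcdB G s * s
            = C c⁻¹ * (G * EuclideanDomain.gcdA G s + s * EuclideanDomain.gcdB G s) := by ring
          _ = C c⁻¹ * E := by rw [hE, ← hbez]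
          _ = 1 := h1
      have hEdeg : 1 ≤ E.natDegree := by
        by_contra hh
        push_neg at hh
        apply hEunit
        have hEnd : E.natDegree = 0 := by omega
        obtain ⟨c, hc⟩ := natDegree_eq_zero.mp hEnd
        rw [← hc, Polynomial.isUnit_C, isUnit_iff_ne_zero]
        intro h0
        rw [h0] at hc
        simp at hc
        exact hE0 hc.symm
      have hGnd : G.natDegree = E.natDegree + G'.natDegree := by
        rw [hG', natDegree_mul hE0 hG'0]
      have hG'g : G' ∣ g := dvd_trans ⟨E, by rw [hG']; ring⟩ hGg
      have hG'k : G'.natDegree ≤ k := natDegree_le_of_dvd hG'g hg0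
      have hsnd' : s.natDegree = E.natDegree + s'.natDegree := by
        rw [hs', natDegree_mul hE0 hs'0]
      have hGk : G.natDegree ≤ k := natDegree_le_of_dvd hGg hg0
      have hcertSG : B (s * G' ^ 2) q = 0 := by
        have hfactor : s * G' ^ 2 = G * (s' * G') := by rw [hG', hs']; ring
        rw [hfactor]
        apply hcert
        refine le_trans (degree_mul_le _ _) ?_
        refine le_trans (add_le_add (degree_le_natDegree (p := s')) (degree_le_natDegree (p := G'))) ?_
        rw [← Nat.cast_add]
        exact_mod_cast (by omega : s'.natDegree + G'.natDegree ≤ d + D)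
      have hG'deg : G'.degree ≤ ((d - D : ℕ) : WithBot ℕ) :=
        le_trans degree_le_natDegree (by exact_mod_cast le_trans hG'k hkdD)
      have hpr := hprop G' hG'deg hcertSG
      have hcert' : ∀ f : Polynomial ℝ, f.degree ≤ ((d + D : ℕ) : WithBot ℕ) → B (G' * f) q = 0 := by
        intro f hf
        refine certspan G' 0 ?_ f (by exact_mod_cast hf)
        intro τ w hτ hw
        have hτw : (τ * w).degree ≤ (d : ℕ) := by
          refine le_trans (degree_mul_le _ _) ?_
          refine le_trans (add_le_add hτ hw) ?_
          rw [← Nat.cast_add]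
          exact_mod_cast (by omega : 0 + d ≤ d)
        have hpr2 := hpr (τ * w) hτw
        constructor
        · rw [show h₁ * (G' * τ) * w = h₁ * G' * (τ * w) by ring]
          exact hpr2.1
        · rw [show h₂ * (G' * τ) * w = h₂ * G' * (τ * w) by ring]
          exact hpr2.2
      exact ih G' hG'0 hG'g (by omega) hcert'
  obtain ⟨Gf, hGf0, hGfg, hGfs, hGfcert⟩ := extract k g hg0 dvd_rfl le_rfl certbase
  set kf := Gf.natDegree with hkf
  have hkfk : kf ≤ k := natDegree_le_of_dvd hGfg hg0
  -- window growth
  have grow : ∀ (j : ℕ), j + 2 ≤ d - D - kf →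
      (∀ f : Polynomial ℝ, f.degree ≤ ((d + D + j : ℕ) : WithBot ℕ) → B (Gf * f) q = 0) →
      (∀ f : Polynomial ℝ, f.degree ≤ ((d + D + (j+1) : ℕ) : WithBot ℕ) → B (Gf * f) q = 0) := by
    intro j hj hcert f hf
    have key : ∀ τ w : Polynomial ℝ, τ.degree ≤ ((j+1 : ℕ) : WithBot ℕ) → w.degree ≤ (d : ℕ) →
        B (h₁ * (Gf * τ) * w) q = 0 ∧ B (h₂ * (Gf * τ) * w) q = 0 := by
      intro τ w hτ hw
      have ht : (Gf * τ).degree ≤ ((d - D : ℕ) : WithBot ℕ) := by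
        refine le_trans (degree_mul_le _ _) ?_
        refine le_trans (add_le_add (degree_le_natDegree (p := Gf)) hτ) ?_
        rw [← Nat.cast_add]
        exact_mod_cast (by omega : kf + (j+1) ≤ d - D)
      have hst : B (s * (Gf * τ) ^ 2) q = 0 := by
        have hfac : s * (Gf * τ) ^ 2 = Gf * (s * Gf * τ ^ 2) := by ring
        rw [hfac]
        apply hcert
        have hd1 : (s * Gf * τ ^ 2).degree ≤ ((2*D + kf + (2*(j+1)) : ℕ) : WithBot ℕ) := by
          refine le_trans (degree_mul_le _ _) ?_
          have hsq : (τ ^ 2).degree ≤ ((2*(j+1) : ℕ) : WithBot ℕ) := by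
            rw [sq]
            refine le_trans (degree_mul_le _ _) ?_
            refine le_trans (add_le_add hτ hτ) ?_
            rw [← Nat.cast_add]
            exact_mod_cast (by omega : (j+1) + (j+1) ≤ 2*(j+1))
          refine le_trans (add_le_add (le_trans (degree_mul_le _ _)
            (add_le_add hsdeg (degree_le_natDegree (p := Gf)))) hsq) ?_
          push_cast
          exact le_rfl
        refine le_trans hd1 ?_
        exact_mod_cast (by omega : 2*D + kf + (2*(j+1)) ≤ d + D + j)
      exact hprop (Gf * τ) ht hst w hw
    refine certspan Gf (j+1) key f ?_
    refine le_trans hf ?_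
    exact_mod_cast (by omega : d + D + (j+1) ≤ d + (j+1) + D)
  have growAll : ∀ (j : ℕ), j + 1 ≤ d - D - kf →
      (∀ f : Polynomial ℝ, f.degree ≤ ((d + D + j : ℕ) : WithBot ℕ) → B (Gf * f) q = 0) := by
    intro j
    induction j with
    | zero =>
      intro _ f hf
      exact hGfcert f (by exact_mod_cast hf)
    | succ j ihj =>
      intro hj
      exact grow j (by omega) (ihj (by omega))
  have certF : ∀ f : Polynomial ℝ, f.degree ≤ ((2*d - kf - 1 : ℕ) : WithBot ℕ) → B (Gf * f) q = 0 := by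
    intro f hf
    by_cases hδ : d - D - kf = 0
    · apply hGfcert
      refine le_trans hf ?_
      exact_mod_cast (by omega : 2*d - kf - 1 ≤ d + D)
    · refine growAll (d - D - kf - 1) (by omega) f ?_
      refine le_trans hf ?_
      exact_mod_cast (by omega : 2*d - kf - 1 ≤ d + D + (d - D - kf - 1))
  -- FINAL CONSTRUCTION
  intro a ha
  set lc := Gf.leadingCoeff with hlcdef
  have hlc0 : lc ≠ 0 := leadingCoeff_ne_zero.mpr hGf0
  set Gm := Gf * C lc⁻¹ with hGm
  have hGmmonic : Gm.Monic := monic_mul_leadingCoeff_inv hGf0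
  have hGm0 : Gm ≠ 0 := hGmmonic.ne_zero
  have hClc0 : (C lc⁻¹ : Polynomial ℝ) ≠ 0 := by
    rw [ne_eq, Polynomial.C_eq_zero]
    exact inv_ne_zero hlc0
  have hGmnd : Gm.natDegree = kf := by
    rw [hGm, natDegree_mul hGf0 hClc0, natDegree_C, add_zero, hkf]
  have hGmcert : ∀ f : Polynomial ℝ, f.degree ≤ ((2*d - kf - 1 : ℕ) : WithBot ℕ) → B (Gm * f) q = 0 := by
    intro f hf
    rw [hGm, show Gf * C lc⁻¹ * f = Gf * (C lc⁻¹ * f) by ring]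
    apply certF
    refine le_trans (degree_mul_le _ _) ?_
    refine le_trans (add_le_add degree_C_le hf) ?_
    simp
  have hGms : IsCoprime Gm s := by
    obtain ⟨A, B', hAB⟩ := hGfs
    refine ⟨C lc * A, B', ?_⟩
    rw [hGm]
    calc C lc * A * (Gf * C lc⁻¹) + B' * s = (C lc * C lc⁻¹) * (A * Gf) + B' * s := by ring
      _ = A * Gf + B' * s := by rw [← map_mul, mul_inv_cancel₀ hlc0, map_one, one_mul]
      _ = 1 := hAB
  obtain ⟨y, yw, hy⟩ := sqrt_mod hspos kf Gm (le_of_eq hGmnd) hGm0 hGms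
  set Qd := (a * y) /ₘ Gm with hQd
  set rr := (a * y) %ₘ Gm with hrrdef
  have hrQ : rr + Gm * Qd = a * y := modByMonic_add_div (a*y) Gm
  set α := (a.coeff d) / Real.sqrt (s.coeff (2*D)) with hα
  set δi := d - D - kf with hδi
  set P : Polynomial ℝ := C α * X ^ δi with hP
  set t : Polynomial ℝ := a * y - Gm * Qd + Gm * P with ht
  have htr : t = rr + Gm * P := by rw [ht]; linear_combination -hrQ
  have hkfdD : kf ≤ d - D := le_trans hkfk hkdD
  have hGmdeg : Gm.degree = (kf : ℕ) := by
    rw [degree_eq_natDegree hGm0, hGmnd]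
  have hrdeg : rr.degree < ((kf : ℕ) : WithBot ℕ) := by
    have := degree_modByMonic_lt (a*y) hGmmonic
    rwa [hGmdeg] at this
  have hPdeg : P.degree ≤ ((δi : ℕ) : WithBot ℕ) := by
    rw [hP]
    refine le_trans (degree_mul_le _ _) ?_
    refine le_trans (add_le_add degree_C_le (le_of_eq (degree_X_pow _))) ?_
    rw [hδi]
    simp
  have htdeg : t.degree ≤ ((d - D : ℕ) : WithBot ℕ) := by
    rw [htr]
    refine le_trans (degree_add_le _ _) ?_
    rw [max_le_iff]
    constructor
    · exact le_trans (le_of_lt hrdeg) (by exact_mod_cast hkfdD)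
    · refine le_trans (degree_mul_le _ _) ?_
      refine le_trans (add_le_add (le_of_eq hGmdeg) hPdeg) ?_
      rw [← Nat.cast_add]
      exact_mod_cast (by rw [hδi]; omega : kf + δi ≤ d - D)
  -- the top coefficient of t
  have htcoeff : t.coeff (d - D) = α := by
    rw [htr, coeff_add]
    have h1 : rr.coeff (d - D) = 0 := by
      apply coeff_eq_zero_of_degree_lt
      exact lt_of_lt_of_le hrdeg (by exact_mod_cast hkfdD)
    have h2 : (Gm * P).coeff (d - D) = α := by
      have hform : Gm * P = C α * (Gm * X ^ δi) := by rw [hP]; ring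
      rw [hform, coeff_C_mul]
      have h3 : (Gm * X ^ δi).coeff (d - D) = Gm.coeff kf * ((X : Polynomial ℝ) ^ δi).coeff δi := by
        rw [show d - D = kf + δi by rw [hδi]; omega]
        exact coeff_mul_top (le_of_eq hGmdeg) (le_of_eq (degree_X_pow _))
      rw [h3]
      have h4 : Gm.coeff kf = 1 := by
        have := hGmmonic.coeff_natDegree
        rwa [hGmnd] at this
      rw [h4, coeff_X_pow]
      simp
    rw [h1, h2, zero_add]
  have htsqdeg : (t^2).degree ≤ ((2*(d-D) : ℕ) : WithBot ℕ) := by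
    rw [sq]
    refine le_trans (degree_mul_le _ _) ?_
    refine le_trans (add_le_add htdeg htdeg) ?_
    rw [← Nat.cast_add]
    exact_mod_cast (by omega : (d-D) + (d-D) ≤ 2*(d-D))
  have hst2d : (s * t^2).coeff (2*d) = s.coeff (2*D) * α^2 := by
    have h1 : (s * t^2).coeff (2*D + 2*(d-D)) = s.coeff (2*D) * (t^2).coeff (2*(d-D)) :=
      coeff_mul_top hsdeg htsqdeg
    have h2 : (t^2).coeff (2*(d-D)) = (t.coeff (d-D))^2 := by
      rw [sq, show 2*(d-D) = (d-D) + (d-D) by ring, coeff_mul_top htdeg htdeg, ← sq]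
    rw [show 2*d = 2*D + 2*(d-D) by omega, h1, h2, htcoeff]
  have ha2 : (a^2).coeff (2*d) = (a.coeff d)^2 := by
    rw [sq, show 2*d = d + d by ring, coeff_mul_top ha ha, ← sq]
  have hαsq : s.coeff (2*D) * α^2 = (a.coeff d)^2 := by
    rw [hα, div_pow, Real.sq_sqrt (le_of_lt hscoeff)]
    rw [mul_comm, div_mul_cancel₀ _ (ne_of_gt hscoeff)]
  have hcancel : (a^2 - s*t^2).coeff (2*d) = 0 := by
    rw [coeff_sub, ha2, hst2d, hαsq, sub_self]
  set F : Polynomial ℝ := -(a^2*yw + 2*s*(a*y)*(P - Qd) + s*Gm*(P-Qd)^2) with hF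
  have hkeyF : a^2 - s*t^2 = Gm * F := by
    rw [ht, hF]
    linear_combination (-(a^2)) * hy
  have hdegsub : (a^2 - s*t^2).degree ≤ ((2*d : ℕ) : WithBot ℕ) := by
    refine le_trans (degree_sub_le _ _) ?_
    rw [max_le_iff]
    constructor
    · rw [sq]
      refine le_trans (degree_mul_le _ _) ?_
      refine le_trans (add_le_add ha ha) ?_
      rw [← Nat.cast_add]
      exact_mod_cast (by omega : d + d ≤ 2*d)
    · refine le_trans (degree_mul_le _ _) ?_
      refine le_trans (add_le_add hsdeg htsqdeg) ?_
      rw [← Nat.cast_add]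
      exact_mod_cast (by omega : 2*D + 2*(d-D) ≤ 2*d)
  have hFdeg : F.degree ≤ ((2*d - kf - 1 : ℕ) : WithBot ℕ) := by
    by_cases hF0 : F = 0
    · rw [hF0]
      simp
    have hsub0 : a^2 - s*t^2 ≠ 0 := by
      rw [hkeyF]
      exact mul_ne_zero hGm0 hF0
    have hnd : (a^2 - s*t^2).natDegree ≤ 2*d - 1 := by
      rw [natDegree_le_iff_coeff_eq_zero]
      intro N hN
      rcases eq_or_lt_of_le (show 2*d ≤ N by omega) with h | h
      · rw [← h]
        exact hcancel
      · exact coeff_eq_zero_of_degree_lt (lt_of_le_of_lt hdegsub (by exact_mod_cast h))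
    have hmulnd : Gm.natDegree + F.natDegree = (a^2 - s*t^2).natDegree := by
      rw [hkeyF, natDegree_mul hGm0 hF0]
    have hFnd : F.natDegree ≤ 2*d - kf - 1 := by
      have hd2 : kf ≤ d := by omega
      omega
    exact le_trans degree_le_natDegree (by exact_mod_cast hFnd)
  have hfinal : a^2 = s*t^2 + Gm*F := by linear_combination hkeyF
  rw [hfinal, map_add, LinearMap.add_apply, hGmcert F hFdeg, add_zero]
  exact hcone t htdeg

lemma sum_single_mul {r : ℕ} (u : Fin r → Polynomial ℝ) (i : Fin r) (w : Polynomial ℝ) :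
    ∑ j, u j * (if j = i then w else 0) = u i * w := by
  rw [Finset.sum_eq_single i]
  · simp
  · intro b _ hb
    simp [hb]
  · intro h
    exact absurd (Finset.mem_univ i) h

lemma sum_two_spot {r : ℕ} {i₀ i₁ : Fin r} (hne : i₀ ≠ i₁) (F : Fin r → Polynomial ℝ)
    (h0 : ∀ j, j ≠ i₀ → j ≠ i₁ → F j = 0) : ∑ j, F j = F i₀ + F i₁ := by
  have h : ∑ j, F j = ∑ j ∈ ({i₀, i₁} : Finset (Fin r)), F j := by
    symm
    apply Finset.sum_subset (Finset.subset_univ _)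
    intro x _ hx
    simp only [Finset.mem_insert, Finset.mem_singleton] at hx
    push_neg at hx
    exact h0 x hx.1 hx.2
  rw [h, Finset.sum_pair hne]

/-- For all nonnegative univariate polynomials `p` of degree at most `2d` and any `r ≥ 2`,
any second-order critical point of `f_p(u) = ‖∑ uᵢ² - p‖²` (for any inner product positive
definite on polynomials of degree at most `2d`) satisfies `∑ uᵢ² = p`. -/
theorem no_spurious_socp_univariate
    (d r : ℕ) (hd : 1 ≤ d) (hr : 2 ≤ r)
    (B : Polynomial ℝ →ₗ[ℝ] Polynomial ℝ →ₗ[ℝ] ℝ)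
    (hsymm : ∀ a b : Polynomial ℝ, B a b = B b a)
    (hpos : ∀ q : Polynomial ℝ, q.degree ≤ (2 * d : ℕ) → q ≠ 0 → 0 < B q q)
    (p : Polynomial ℝ) (hpdeg : p.degree ≤ (2 * d : ℕ))
    (hpnn : ∀ x : ℝ, 0 ≤ p.eval x)
    (u : Fin r → Polynomial ℝ) (hu : ∀ i, (u i).degree ≤ (d : ℕ))
    (hgrad : ∀ v : Fin r → Polynomial ℝ, (∀ i, (v i).degree ≤ (d : ℕ)) →
      B (∑ i, u i * v i) ((∑ i, (u i) ^ 2) - p) = 0)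
    (hhess : ∀ v : Fin r → Polynomial ℝ, (∀ i, (v i).degree ≤ (d : ℕ)) →
      0 ≤ B (∑ i, (v i) ^ 2) ((∑ i, (u i) ^ 2) - p)
        + 2 * B (∑ i, u i * v i) (∑ i, u i * v i)) :
    (∑ i, (u i) ^ 2) = p := by
  classical
  set qq : Polynomial ℝ := (∑ i, (u i) ^ 2) - p with hqq
  have hσdeg : (∑ i, (u i) ^ 2).degree ≤ ((2 * d : ℕ) : WithBot ℕ) := by
    refine le_trans (degree_sum_le _ _) ?_
    rw [Finset.sup_le_iff]
    intro i _
    rw [sq]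
    refine le_trans (degree_mul_le _ _) ?_
    refine le_trans (add_le_add (hu i) (hu i)) ?_
    rw [← Nat.cast_add]
    exact_mod_cast (by omega : d + d ≤ 2 * d)
  have hqdeg : qq.degree ≤ ((2 * d : ℕ) : WithBot ℕ) := by
    rw [hqq]
    refine le_trans (degree_sub_le _ _) ?_
    rw [max_le_iff]
    exact ⟨hσdeg, hpdeg⟩
  have hBσ : B (∑ i, (u i) ^ 2) qq = 0 := by
    have h := hgrad u hu
    rwa [show (∑ i, u i * u i) = ∑ i, (u i) ^ 2 from
      Finset.sum_congr rfl (fun i _ => (sq (u i)).symm)] at h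
  have hpos2 : ∀ a : Polynomial ℝ, a.degree ≤ (d : ℕ) → 0 ≤ B (a ^ 2) qq := by
    by_cases hz : ∀ i, u i = 0
    · intro a ha
      set i₀ : Fin r := ⟨0, by omega⟩ with hi₀
      have h := hhess (fun j => if j = i₀ then a else 0) ?_
      · have h1 : ∑ j, (if j = i₀ then a else 0) ^ 2 = a ^ 2 := by
          have : ∀ j : Fin r, (if j = i₀ then a else 0) ^ 2 = if j = i₀ then a ^ 2 else 0 := by
            intro j
            split_ifs <;> simp
          rw [Finset.sum_congr rfl (fun j _ => this j)]
          simp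
        have h2 : ∑ j, u j * (if j = i₀ then a else 0) = 0 := by
          apply Finset.sum_eq_zero
          intro j _
          rw [hz j, zero_mul]
        rw [h1, h2] at h
        simpa using h
      · intro j
        split_ifs
        · exact ha
        · simp
    · push_neg at hz
      obtain ⟨i₀, hi₀⟩ := hz
      set i₁ : Fin r := if i₀ = ⟨0, by omega⟩ then ⟨1, by omega⟩ else ⟨0, by omega⟩ with hi₁
      have hne : i₀ ≠ i₁ := by
        rw [hi₁]
        split_ifs with h0
        · rw [h0]
          simp [Fin.ext_iff]
        · exact h0
      apply core_nonneg d hd B qq (u i₀) (u i₁) hi₀ (hu i₀) (hu i₁)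
      · intro w hw
        have h := hgrad (fun j => if j = i₀ then w else 0) ?_
        · rwa [sum_single_mul] at h
        · intro j
          split_ifs
          · exact hw
          · simp
      · intro w hw
        have h := hgrad (fun j => if j = i₁ then w else 0) ?_
        · rwa [sum_single_mul] at h
        · intro j
          split_ifs
          · exact hw
          · simp
      · intro x y hx hy
        set v : Fin r → Polynomial ℝ := fun j => if j = i₀ then x else if j = i₁ then y else 0 with hv
        have hvdeg : ∀ j, (v j).degree ≤ (d : ℕ) := by
          intro j
          rw [hv]
          dsimp only
          split_ifs
          · exact hx
          · exact hy
          · simp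
        have h := hhess v hvdeg
        have hvi₀ : v i₀ = x := by rw [hv]; simp
        have hvi₁ : v i₁ = y := by
          rw [hv]
          dsimp only
          rw [if_neg (Ne.symm hne), if_pos rfl]
        have h1 : ∑ j, (v j) ^ 2 = x ^ 2 + y ^ 2 := by
          rw [sum_two_spot hne (fun j => (v j)^2) ?_, hvi₀, hvi₁]
          intro j hj0 hj1
          rw [hv]
          dsimp only
          rw [if_neg hj0, if_neg hj1]
          simp
        have h2 : ∑ j, u j * v j = u i₀ * x + u i₁ * y := by
          rw [sum_two_spot hne (fun j => u j * v j) ?_, hvi₀, hvi₁]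
          intro j hj0 hj1
          rw [hv]
          dsimp only
          rw [if_neg hj0, if_neg hj1]
          simp
        rwa [h1, h2] at h
  obtain ⟨aa, bb, hab⟩ := exists_sum_two_squares p hpnn
  obtain ⟨haad, hbbd⟩ := two_sq_degree hab hpdeg
  have hBp : 0 ≤ B p qq := by
    rw [hab, map_add, LinearMap.add_apply]
    exact add_nonneg (hpos2 aa haad) (hpos2 bb hbbd)
  have hBqq : B qq qq ≤ 0 := by
    have heq : B qq qq = B (∑ i, (u i) ^ 2) qq - B p qq := by
      have h1 : B qq = B (∑ i, (u i) ^ 2) - B p := by rw [hqq, map_sub]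
      rw [h1, LinearMap.sub_apply]
    rw [heq, hBσ]
    linarith
  by_contra hne0
  have hq0 : qq ≠ 0 := by
    intro h
    rw [hqq] at h
    exact hne0 (sub_eq_zero.mp h)
  exact absurd (hpos qq hqdeg hq0) (not_lt.mpr hBqq)
end

section
/- Let d₁, d₂ be natural numbers with d₂ + 1 ≥ d₁, and let u₁, u₂ be binary forms of degree d₁. Then u₁ and u₂ are coprime if and only if for every binary form p of degree d₁ + d₂ there exist binary forms v₁, v₂ of degree d₂ such that u₁v₁ + u₂v₂ = p. -/
open MvPolynomial

private lemma deg2 (d : Fin 2 →₀ ℕ) : d.degree = d 0 + d 1 := by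
  rw [Finsupp.degree_eq_weight_one]
  simp [Finsupp.weight_apply, Finsupp.sum_fintype, Fin.sum_univ_two]

private noncomputable def myDegEquiv (n : ℕ) :
    { d : Fin 2 →₀ ℕ | d.degree = n } ≃ Fin (n + 1) where
  toFun d := ⟨d.1 0, by
    have h1 := Finsupp.le_degree (0 : Fin 2) d.1
    have h2 := d.2
    simp only [Set.mem_setOf_eq] at h2
    omega⟩
  invFun i := ⟨Finsupp.single (0 : Fin 2) (i : ℕ) + Finsupp.single 1 (n - i), by
    have hi : (i : ℕ) ≤ n := Nat.lt_succ_iff.mp i.2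
    simp only [Set.mem_setOf_eq, deg2, Finsupp.add_apply, Finsupp.single_apply]
    norm_num
    omega⟩
  left_inv d := by
    apply Subtype.ext
    have h2 := d.2
    simp only [Set.mem_setOf_eq, deg2] at h2
    ext j
    fin_cases j <;> simp [Finsupp.single_apply] <;> omega
  right_inv i := by
    apply Fin.ext
    simp [Finsupp.single_apply]

private noncomputable def WEquiv (n : ℕ) :
    (homogeneousSubmodule (Fin 2) ℝ n) ≃ₗ[ℝ] (Fin (n + 1) → ℝ) :=
  (LinearEquiv.ofEq _ _ (homogeneousSubmodule_eq_finsupp_supported (Fin 2) ℝ n)).trans <|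
  (AddMonoidAlgebra.supportedEquivFinsupp _).trans <|
  (Finsupp.domLCongr (myDegEquiv n)).trans (Finsupp.linearEquivFunOnFinite ℝ ℝ _)

private lemma finrank_W (n : ℕ) :
    Module.finrank ℝ (homogeneousSubmodule (Fin 2) ℝ n) = n + 1 := by
  rw [(WEquiv n).finrank_eq, Module.finrank_fin_fun]

private lemma fd_W (n : ℕ) : FiniteDimensional ℝ (homogeneousSubmodule (Fin 2) ℝ n) :=
  (WEquiv n).symm.finiteDimensional

private lemma isHomogeneous_of_mul {u t : MvPolynomial (Fin 2) ℝ} {a b : ℕ}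
    (hu : u.IsHomogeneous a) (hu0 : u ≠ 0) (hut : (u * t).IsHomogeneous b) :
    t.IsHomogeneous (b - a) := by
  have hcomp : ∀ i ∈ Finset.range (t.totalDegree + 1),
      u * homogeneousComponent i t = homogeneousComponent (a + i) (u * t) := by
    intro i hi
    have hmul : u * t = ∑ j ∈ Finset.range (t.totalDegree + 1),
        u * homogeneousComponent j t := by
      rw [← Finset.mul_sum, sum_homogeneousComponent]
    rw [hmul, map_sum]
    rw [Finset.sum_congr rfl (fun j _ => homogeneousComponent_of_mem
      (hu.mul (homogeneousComponent_isHomogeneous j t)))]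
    simp only [add_right_inj]
    rw [Finset.sum_ite_eq, if_pos hi]
  conv => rw [← sum_homogeneousComponent t]
  apply IsHomogeneous.sum
  intro j hj
  by_cases hab : a + j = b
  · have hjb : j = b - a := by omega
    rw [hjb]
    exact homogeneousComponent_isHomogeneous (b - a) t
  · have h0 : u * homogeneousComponent j t = 0 := by
      rw [hcomp j hj, homogeneousComponent_of_mem hut, if_neg hab]
    have hz : homogeneousComponent j t = 0 := (mul_eq_zero.mp h0).resolve_left hu0
    rw [hz]
    exact isHomogeneous_zero _ _ _

private lemma primeX0 : Prime (X 0 : MvPolynomial (Fin 2) ℝ) := by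
  have h : (MvPolynomial.finSuccEquiv ℝ 1) (X 0) = Polynomial.X := by
    simp [MvPolynomial.finSuccEquiv_X_zero]
  have hp := Polynomial.prime_X (R := MvPolynomial (Fin 1) ℝ)
  rw [← h] at hp
  exact (MulEquiv.prime_iff (MvPolynomial.finSuccEquiv ℝ 1)).mp hp

private noncomputable def Lmap (d₁ d₂ : ℕ) (u₁ u₂ : MvPolynomial (Fin 2) ℝ)
    (h₁ : u₁.IsHomogeneous d₁) (h₂ : u₂.IsHomogeneous d₁) :
    (homogeneousSubmodule (Fin 2) ℝ d₂ × homogeneousSubmodule (Fin 2) ℝ d₂) →ₗ[ℝ]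
      homogeneousSubmodule (Fin 2) ℝ (d₁ + d₂) where
  toFun x := ⟨u₁ * x.1.1 + u₂ * x.2.1, (h₁.mul x.1.2).add (h₂.mul x.2.2)⟩
  map_add' x y := by
    apply Subtype.ext
    simp only [Prod.fst_add, Prod.snd_add, Submodule.coe_add, AddSubmonoid.mk_add_mk]
    ring
  map_smul' c x := by
    apply Subtype.ext
    simp only [Prod.smul_fst, Prod.smul_snd, SetLike.val_smul, RingHom.id_apply,
      SetLike.mk_smul_mk, smul_eq_C_mul]
    ring

private noncomputable def Kmap (d₁ e : ℕ) (u₁ u₂ : MvPolynomial (Fin 2) ℝ)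
    (h₁ : u₁.IsHomogeneous d₁) (h₂ : u₂.IsHomogeneous d₁) :
    (homogeneousSubmodule (Fin 2) ℝ e) →ₗ[ℝ]
      (homogeneousSubmodule (Fin 2) ℝ (d₁ + e) × homogeneousSubmodule (Fin 2) ℝ (d₁ + e)) where
  toFun t := (⟨-(u₂ * t.1), (h₂.mul t.2).neg⟩, ⟨u₁ * t.1, h₁.mul t.2⟩)
  map_add' x y := by
    apply Prod.ext <;> apply Subtype.ext <;>
      simp only [Submodule.coe_add, AddSubmonoid.mk_add_mk, Prod.fst_add, Prod.snd_add] <;> ring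
  map_smul' c x := by
    apply Prod.ext <;> apply Subtype.ext <;>
      simp only [SetLike.val_smul, RingHom.id_apply, SetLike.mk_smul_mk, Prod.smul_fst,
        Prod.smul_snd, smul_eq_C_mul] <;> ring

private lemma key (d₁ d₂ : ℕ) (hd : d₁ ≤ d₂ + 1) (u₁ u₂ : MvPolynomial (Fin 2) ℝ)
    (h₁ : u₁.IsHomogeneous d₁) (h₂ : u₂.IsHomogeneous d₁)
    (hcop : IsRelPrime u₁ u₂) (hu₁ : u₁ ≠ 0)
    (p : MvPolynomial (Fin 2) ℝ) (hp : p.IsHomogeneous (d₁ + d₂)) :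
    ∃ v₁ v₂ : MvPolynomial (Fin 2) ℝ,
      v₁.IsHomogeneous d₂ ∧ v₂.IsHomogeneous d₂ ∧ u₁ * v₁ + u₂ * v₂ = p := by
  haveI := fd_W d₂
  haveI := fd_W (d₁ + d₂)
  set L := Lmap d₁ d₂ u₁ u₂ h₁ h₂ with hL
  have hker : Module.finrank ℝ (LinearMap.ker L) = d₂ + 1 - d₁ := by
    by_cases hcase : d₁ ≤ d₂
    · obtain ⟨e, rfl⟩ : ∃ e, d₂ = d₁ + e := ⟨d₂ - d₁, by omega⟩
      haveI := fd_W e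
      set K := Kmap d₁ e u₁ u₂ h₁ h₂ with hK
      have hinj : Function.Injective K := by
        intro t s hts
        apply Subtype.ext
        have h2 := congrArg (fun z => ((z.2 : homogeneousSubmodule (Fin 2) ℝ (d₁ + e)) :
          MvPolynomial (Fin 2) ℝ)) hts
        exact mul_left_cancel₀ hu₁ h2
      have hrange : LinearMap.range K = LinearMap.ker L := by
        apply le_antisymm
        · rintro x ⟨t, rfl⟩
          rw [LinearMap.mem_ker]
          apply Subtype.ext
          show u₁ * (-(u₂ * t.1)) + u₂ * (u₁ * t.1) = 0
          ring
        · rintro ⟨⟨v₁, hv₁⟩, ⟨v₂, hv₂⟩⟩ hx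
          rw [LinearMap.mem_ker] at hx
          have hLx : u₁ * v₁ + u₂ * v₂ = 0 := Subtype.ext_iff.mp hx
          have hdvd : u₁ ∣ v₂ :=
            hcop.dvd_of_dvd_mul_left ⟨-v₁, by linear_combination hLx⟩
          obtain ⟨t, rfl⟩ := hdvd
          have ht : t.IsHomogeneous e := by
            have h' := isHomogeneous_of_mul h₁ hu₁
              (show (u₁ * t).IsHomogeneous (d₁ + e) from hv₂)
            simpa using h'
          refine ⟨⟨t, ht⟩, ?_⟩
          have hv : v₁ = -(u₂ * t) := by
            have h0 : u₁ * (v₁ + u₂ * t) = 0 := by linear_combination hLx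
            have h3 := (mul_eq_zero.mp h0).resolve_left hu₁
            linear_combination h3
          apply Prod.ext <;> apply Subtype.ext
          · show -(u₂ * t) = v₁
            rw [hv]
          · rfl
      rw [← hrange, LinearMap.finrank_range_of_inj hinj, finrank_W]
      omega
    · have hbot : LinearMap.ker L = ⊥ := by
        rw [eq_bot_iff]
        rintro ⟨⟨v₁, hv₁⟩, ⟨v₂, hv₂⟩⟩ hx
        rw [LinearMap.mem_ker] at hx
        have hLx : u₁ * v₁ + u₂ * v₂ = 0 := Subtype.ext_iff.mp hx
        have hdvd : u₁ ∣ v₂ :=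
          hcop.dvd_of_dvd_mul_left ⟨-v₁, by linear_combination hLx⟩
        obtain ⟨t, rfl⟩ := hdvd
        have hv₂0 : u₁ * t = 0 := by
          by_contra hne
          have ht := isHomogeneous_of_mul h₁ hu₁
            (show (u₁ * t).IsHomogeneous d₂ from hv₂)
          have h' : (u₁ * t).IsHomogeneous (d₁ + (d₂ - d₁)) := h₁.mul ht
          have heq := IsHomogeneous.inj_right (show (u₁ * t).IsHomogeneous d₂ from hv₂) h' hne
          omega
        have hv₁0 : v₁ = 0 := by
          have h0 : u₁ * v₁ = 0 := by linear_combination hLx - u₂ * hv₂0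
          exact (mul_eq_zero.mp h0).resolve_left hu₁
        rw [Submodule.mem_bot]
        apply Prod.ext <;> apply Subtype.ext
        · exact hv₁0
        · exact hv₂0
      rw [hbot, finrank_bot]
      omega
  haveI : Module.Free ℝ (homogeneousSubmodule (Fin 2) ℝ d₂) :=
    Module.Free.of_equiv (WEquiv d₂).symm
  have hrn := LinearMap.finrank_range_add_finrank_ker L
  rw [Module.finrank_prod, finrank_W, hker] at hrn
  have htop : LinearMap.range L = ⊤ :=
    Submodule.eq_top_of_finrank_eq (by rw [finrank_W]; omega)
  obtain ⟨⟨t₁, t₂⟩, hv⟩ := (LinearMap.range_eq_top.mp htop) ⟨p, hp⟩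
  exact ⟨t₁, t₂, t₁.2, t₂.2, Subtype.ext_iff.mp hv⟩

/-- Bézout-type characterization: for binary forms `u₁, u₂` of degree `d₁` and `d₂ + 1 ≥ d₁`,
`u₁` and `u₂` are coprime iff every binary form of degree `d₁ + d₂` is of the form
`u₁ v₁ + u₂ v₂` with `v₁, v₂` binary forms of degree `d₂`. -/
theorem coprime_iff_image_full
    (d₁ d₂ : ℕ) (hd : d₁ ≤ d₂ + 1)
    (u₁ u₂ : MvPolynomial (Fin 2) ℝ)
    (h₁ : u₁.IsHomogeneous d₁) (h₂ : u₂.IsHomogeneous d₁) :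
    (∀ w : MvPolynomial (Fin 2) ℝ, w ∣ u₁ → w ∣ u₂ → IsUnit w) ↔
    (∀ p : MvPolynomial (Fin 2) ℝ, p.IsHomogeneous (d₁ + d₂) →
      ∃ v₁ v₂ : MvPolynomial (Fin 2) ℝ,
        v₁.IsHomogeneous d₂ ∧ v₂.IsHomogeneous d₂ ∧ u₁ * v₁ + u₂ * v₂ = p) := by
  constructor
  · intro hcop p hp
    by_cases hu₁ : u₁ = 0
    · have hu₂ : u₂ ≠ 0 := by
        rintro rfl
        exact primeX0.not_unit (hcop _ (by rw [hu₁]; exact dvd_zero _) (dvd_zero _))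
      obtain ⟨v₂, v₁, hv₂, hv₁, hsum⟩ := key d₁ d₂ hd u₂ u₁ h₂ h₁
        (fun z hz2 hz1 => hcop z hz1 hz2) hu₂ p hp
      exact ⟨v₁, v₂, hv₁, hv₂, by rw [← hsum]; ring⟩
    · exact key d₁ d₂ hd u₁ u₂ h₁ h₂ hcop hu₁ p hp
  · intro hsurj w hw₁ hw₂
    obtain ⟨a₁, a₂, _, _, hpx⟩ := hsurj (X 0 ^ (d₁ + d₂)) (isHomogeneous_X_pow 0 (d₁ + d₂))
    obtain ⟨b₁, b₂, _, _, hpy⟩ := hsurj (X 1 ^ (d₁ + d₂)) (isHomogeneous_X_pow 1 (d₁ + d₂))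
    have hwx : w ∣ X 0 ^ (d₁ + d₂) :=
      hpx ▸ dvd_add (hw₁.mul_right a₁) (hw₂.mul_right a₂)
    have hwy : w ∣ X 1 ^ (d₁ + d₂) :=
      hpy ▸ dvd_add (hw₁.mul_right b₁) (hw₂.mul_right b₂)
    obtain ⟨k, hk, hass⟩ := (dvd_prime_pow primeX0 _).mp hwx
    rcases Nat.eq_zero_or_pos k with hk0 | hk0
    · subst hk0
      rw [pow_zero] at hass
      exact associated_one_iff_isUnit.mp hass
    · exfalso
      have hXdvd : (X 0 : MvPolynomial (Fin 2) ℝ) ∣ X 1 ^ (d₁ + d₂) :=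
        ((dvd_pow_self _ (by omega : k ≠ 0)).trans hass.symm.dvd).trans hwy
      have h01 := X_dvd_X.mp (primeX0.dvd_of_dvd_pow hXdvd)
      exact absurd h01 (by decide)
end

section
/- Let u₁, u₂ be binary forms of degree d, not both zero. Then there exist natural numbers m, k with m + k ≤ d and binary forms g of degree m, h of degree k, and u₁', u₂' of degree d − m − k such that: u₁ = u₁'·g·h and u₂ = u₂'·g·h; g·h is a greatest common divisor of u₁ and u₂ (g·h divides both u₁ and u₂, and every common divisor of u₁ and u₂ divides g·h); u₁' and u₂' are coprime; g and u₁'² + u₂'² are coprime; and for every (α,β) ∈ ℂ² with (α,β) ≠ (0,0), if h evaluated at (α,β) is 0 (after mapping coefficients into ℂ) then u₁'² + u₂'² evaluated at (α,β) is 0. -/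
open MvPolynomial

namespace DecompAux

noncomputable def Ψ : MvPolynomial (Fin 2) ℝ →ₐ[ℝ] Polynomial (MvPolynomial (Fin 2) ℝ) :=
  aeval (fun i => Polynomial.C (X i) * Polynomial.X)

lemma coeff_Ψ (p : MvPolynomial (Fin 2) ℝ) (m : ℕ) :
    (Ψ p).coeff m = homogeneousComponent m p := by
  induction p using MvPolynomial.induction_on' with
  | add p q hp hq => simp [map_add, hp, hq]
  | monomial d r =>
      have h1 : Ψ (monomial d r) = Polynomial.C (monomial d r) * Polynomial.X ^ d.degree := by
        rw [Ψ, aeval_monomial, Finsupp.prod]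
        simp only [mul_pow, Finset.prod_mul_distrib, Finset.prod_pow_eq_pow_sum,
          ← Polynomial.C_pow, ← map_prod]
        rw [monomial_eq, Finsupp.prod, map_mul, Finsupp.degree_apply, Polynomial.algebraMap_apply,
          algebraMap_eq]
        ring
      have h2 : homogeneousComponent m (monomial d r)
          = if m = d.degree then monomial d r else 0 := by
        ext e
        rw [coeff_homogeneousComponent]
        by_cases hde : d = e
        · subst hde
          rcases eq_or_ne d.degree m with h | h
          · simp [h]
          · simp [h, Ne.symm h]
        · split_ifs <;> simp [coeff_monomial, hde]
      rw [h1, h2, Polynomial.coeff_C_mul, Polynomial.coeff_X_pow]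
      split_ifs <;> simp

end DecompAux

namespace DecompAux

lemma isHomogeneous_of_mul {a b : MvPolynomial (Fin 2) ℝ} {n : ℕ}
    (hab : (a * b).IsHomogeneous n) (ha : a ≠ 0) (hb : b ≠ 0) :
    ∃ m k : ℕ, m + k = n ∧ a.IsHomogeneous m ∧ b.IsHomogeneous k := by
  have hab0 : a * b ≠ 0 := mul_ne_zero ha hb
  have hΨab : Ψ (a * b) = Polynomial.C (a * b) * Polynomial.X ^ n := by
    ext m
    rw [coeff_Ψ, Polynomial.coeff_C_mul, Polynomial.coeff_X_pow,
      homogeneousComponent_of_mem ((mem_homogeneousSubmodule _ _).2 hab)]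
    split_ifs <;> simp
  have hA0 : Ψ a ≠ 0 := by
    intro h
    apply hab0
    have : Ψ (a * b) = 0 := by rw [map_mul, h, zero_mul]
    rw [hΨab] at this
    rcases mul_eq_zero.1 this with h' | h'
    · exact Polynomial.C_eq_zero.1 h'
    · exact absurd h' (pow_ne_zero _ Polynomial.X_ne_zero)
  have hB0 : Ψ b ≠ 0 := by
    intro h
    apply hab0
    have : Ψ (a * b) = 0 := by rw [map_mul, h, mul_zero]
    rw [hΨab] at this
    rcases mul_eq_zero.1 this with h' | h'
    · exact Polynomial.C_eq_zero.1 h'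
    · exact absurd h' (pow_ne_zero _ Polynomial.X_ne_zero)
  have hdeg : (Ψ a).natDegree + (Ψ b).natDegree = n := by
    have h1 : (Ψ (a * b)).natDegree = n := by
      rw [hΨab, Polynomial.natDegree_C_mul_X_pow _ _ hab0]
    rw [map_mul, Polynomial.natDegree_mul hA0 hB0] at h1
    exact h1
  have htr : (Ψ a).natTrailingDegree + (Ψ b).natTrailingDegree = n := by
    have h1 : (Ψ (a * b)).natTrailingDegree = n := by
      rw [hΨab, Polynomial.C_mul_X_pow_eq_monomial, Polynomial.natTrailingDegree_monomial hab0]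
    rw [map_mul, Polynomial.natTrailingDegree_mul hA0 hB0] at h1
    exact h1
  have hta : (Ψ a).natTrailingDegree = (Ψ a).natDegree :=
    le_antisymm (Polynomial.natTrailingDegree_le_natDegree _)
      (by have := Polynomial.natTrailingDegree_le_natDegree (Ψ b); omega)
  have htb : (Ψ b).natTrailingDegree = (Ψ b).natDegree := by
    have := Polynomial.natTrailingDegree_le_natDegree (Ψ a)
    have := Polynomial.natTrailingDegree_le_natDegree (Ψ b)
    omega
  have key : ∀ (c : MvPolynomial (Fin 2) ℝ), c ≠ 0 → Ψ c ≠ 0 →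
      (Ψ c).natTrailingDegree = (Ψ c).natDegree → c.IsHomogeneous (Ψ c).natDegree := by
    intro c hc hC0 htc
    have hcomp : ∀ i, i ≠ (Ψ c).natDegree → homogeneousComponent i c = 0 := by
      intro i hi
      rw [← coeff_Ψ]
      rcases lt_or_gt_of_ne hi with h | h
      · exact Polynomial.coeff_eq_zero_of_lt_natTrailingDegree (htc ▸ h)
      · exact Polynomial.coeff_eq_zero_of_natDegree_lt h
    have hsum := sum_homogeneousComponent c
    have hcc : c = homogeneousComponent (Ψ c).natDegree c := by
      conv_lhs => rw [← hsum]
      exact Finset.sum_eq_single _ (fun i _ hi => hcomp i hi)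
        (fun hmem => homogeneousComponent_eq_zero _ _ (by
          simp only [Finset.mem_range, not_lt] at hmem
          omega))
    have h := homogeneousComponent_isHomogeneous (Ψ c).natDegree c
    rw [← hcc] at h
    exact h
  exact ⟨(Ψ a).natDegree, (Ψ b).natDegree, hdeg, key a ha hA0 hta, key b hb hB0 htb⟩

end DecompAux

namespace DecompAux

lemma split (s : MvPolynomial (Fin 2) ℝ) (p : MvPolynomial (Fin 2) ℝ) (hp : p ≠ 0) :
    ∃ g h : MvPolynomial (Fin 2) ℝ, p = g * h ∧
      (∀ w, w ∣ g → w ∣ s → IsUnit w) ∧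
      (∀ α β : ℂ, eval ![α, β] (map (algebraMap ℝ ℂ) h) = 0 →
        eval ![α, β] (map (algebraMap ℝ ℂ) s) = 0) := by
  revert hp
  induction p using WfDvdMonoid.induction_on_irreducible with
  | zero => exact fun hp => absurd rfl hp
  | unit u hu =>
      intro hp
      refine ⟨u, 1, (mul_one u).symm, fun w hw _ => isUnit_of_dvd_unit hw hu, fun α β hαβ => ?_⟩
      simp at hαβ
  | mul a i ha hi IH =>
      intro hp
      obtain ⟨g, h, hgh, Hg, Hh⟩ := IH ha
      by_cases hdvd : i ∣ s
      · refine ⟨g, h * i, by rw [hgh]; ring, Hg, fun α β hαβ => ?_⟩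
        rw [map_mul, map_mul] at hαβ
        rcases mul_eq_zero.1 hαβ with h0 | h0
        · exact Hh α β h0
        · obtain ⟨c, hc⟩ := hdvd
          rw [hc, map_mul, map_mul, h0, zero_mul]
      · refine ⟨g * i, h, by rw [hgh]; ring, fun w hw hws => ?_, Hh⟩
        by_contra hwu
        have hw0 : w ≠ 0 := by
          intro h0
          rw [h0, zero_dvd_iff] at hw
          exact mul_ne_zero (left_ne_zero_of_mul (hgh ▸ ha)) hi.ne_zero hw
        obtain ⟨r, hr, hrw⟩ := WfDvdMonoid.exists_irreducible_factor hwu hw0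
        have hrp : Prime r := UniqueFactorizationMonoid.irreducible_iff_prime.1 hr
        have hrs : r ∣ s := hrw.trans hws
        rcases hrp.dvd_or_dvd (hrw.trans hw) with hrg | hri
        · exact hr.not_isUnit (Hg r hrg hrs)
        · exact hdvd ((hr.associated_of_dvd hi hri).symm.dvd.trans hrs)

end DecompAux


open DecompAux in
/-- Decomposition of a pair of binary forms: `u₁ = u₁' g h`, `u₂ = u₂' g h` where `g h` is a
gcd of `u₁, u₂`, `u₁', u₂'` are coprime, `g` is coprime with `u₁'² + u₂'²`, and every complex
root of `h` is a root of `u₁'² + u₂'²`. -/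
theorem decomposition_of_pair
    (d : ℕ) (u₁ u₂ : MvPolynomial (Fin 2) ℝ)
    (h₁ : u₁.IsHomogeneous d) (h₂ : u₂.IsHomogeneous d)
    (hne : ¬(u₁ = 0 ∧ u₂ = 0)) :
    ∃ (m k : ℕ) (g h u₁' u₂' : MvPolynomial (Fin 2) ℝ),
      m + k ≤ d ∧
      g.IsHomogeneous m ∧ h.IsHomogeneous k ∧
      u₁'.IsHomogeneous (d - m - k) ∧ u₂'.IsHomogeneous (d - m - k) ∧
      u₁ = u₁' * g * h ∧ u₂ = u₂' * g * h ∧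
      (g * h ∣ u₁ ∧ g * h ∣ u₂ ∧
        ∀ w : MvPolynomial (Fin 2) ℝ, w ∣ u₁ → w ∣ u₂ → w ∣ g * h) ∧
      (∀ w : MvPolynomial (Fin 2) ℝ, w ∣ u₁' → w ∣ u₂' → IsUnit w) ∧
      (∀ w : MvPolynomial (Fin 2) ℝ, w ∣ g → w ∣ (u₁' ^ 2 + u₂' ^ 2) → IsUnit w) ∧
      (∀ α β : ℂ, (α, β) ≠ (0, 0) →
        eval ![α, β] (map (algebraMap ℝ ℂ) h) = 0 →
        eval ![α, β] (map (algebraMap ℝ ℂ) (u₁' ^ 2 + u₂' ^ 2)) = 0) := by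
  classical
  letI : GCDMonoid (MvPolynomial (Fin 2) ℝ) := UniqueFactorizationMonoid.toGCDMonoid _
  set p := gcd u₁ u₂ with hpdef
  have hp0 : p ≠ 0 := by
    intro h
    rw [hpdef, gcd_eq_zero_iff] at h
    exact hne h
  obtain ⟨c₁, hc₁⟩ : p ∣ u₁ := gcd_dvd_left u₁ u₂
  obtain ⟨c₂, hc₂⟩ : p ∣ u₂ := gcd_dvd_right u₁ u₂
  have hpe : ∃ e, e ≤ d ∧ p.IsHomogeneous e := by
    by_cases h0 : u₁ = 0
    · have h2 : u₂ ≠ 0 := fun hh => hne ⟨h0, hh⟩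
      have hph : (p * c₂).IsHomogeneous d := by rw [← hc₂]; exact h₂
      have hc20 : c₂ ≠ 0 := right_ne_zero_of_mul (by rw [← hc₂]; exact h2)
      obtain ⟨m, k, hmk, hpm, _⟩ := isHomogeneous_of_mul hph hp0 hc20
      exact ⟨m, by omega, hpm⟩
    · have hph : (p * c₁).IsHomogeneous d := by rw [← hc₁]; exact h₁
      have hc10 : c₁ ≠ 0 := right_ne_zero_of_mul (by rw [← hc₁]; exact h0)
      obtain ⟨m, k, hmk, hpm, _⟩ := isHomogeneous_of_mul hph hp0 hc10
      exact ⟨m, by omega, hpm⟩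
  obtain ⟨e, hed, hpehom⟩ := hpe
  obtain ⟨g, h, hgh, Hg, Hh⟩ := split (c₁ ^ 2 + c₂ ^ 2) p hp0
  have hgh0 : g * h ≠ 0 := by rw [← hgh]; exact hp0
  have hg0 : g ≠ 0 := left_ne_zero_of_mul hgh0
  have hh0 : h ≠ 0 := right_ne_zero_of_mul hgh0
  have hghhom : (g * h).IsHomogeneous e := by rw [← hgh]; exact hpehom
  obtain ⟨m, k, hmk, hgm, hhk⟩ := isHomogeneous_of_mul hghhom hg0 hh0
  have hkey : ∀ (u c : MvPolynomial (Fin 2) ℝ), u.IsHomogeneous d → u = p * c →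
      c.IsHomogeneous (d - m - k) := by
    intro u c hu huc
    by_cases h0 : u = 0
    · have hpc : p * c = 0 := by rw [← huc]; exact h0
      rcases mul_eq_zero.1 hpc with hh | hh
      · exact absurd hh hp0
      · rw [hh]; exact isHomogeneous_zero _ _ _
    · have hpc : (p * c).IsHomogeneous d := by rw [← huc]; exact hu
      have hc0 : c ≠ 0 := right_ne_zero_of_mul (by rw [← huc]; exact h0)
      obtain ⟨m₁, k₁, hmk₁, hpm₁, hck₁⟩ := isHomogeneous_of_mul hpc hp0 hc0
      have he : m₁ = e := hpm₁.inj_right hpehom hp0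
      have hk : k₁ = d - m - k := by omega
      rwa [← hk]
  refine ⟨m, k, g, h, c₁, c₂, by omega, hgm, hhk, hkey u₁ c₁ h₁ hc₁, hkey u₂ c₂ h₂ hc₂,
    by rw [hc₁, hgh]; ring, by rw [hc₂, hgh]; ring,
    ⟨by rw [← hgh]; exact gcd_dvd_left u₁ u₂, by rw [← hgh]; exact gcd_dvd_right u₁ u₂,
      fun w hw1 hw2 => by rw [← hgh]; exact dvd_gcd hw1 hw2⟩,
    ?_, Hg, fun α β _ hh => Hh α β hh⟩
  intro w hw1 hw2
  obtain ⟨t₁, ht₁⟩ := hw1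
  obtain ⟨t₂, ht₂⟩ := hw2
  have hd1 : p * w ∣ u₁ := ⟨t₁, by rw [hc₁, ht₁]; ring⟩
  have hd2 : p * w ∣ u₂ := ⟨t₂, by rw [hc₂, ht₂]; ring⟩
  obtain ⟨t, ht⟩ : p * w ∣ p := dvd_gcd hd1 hd2
  have hwt : w * t = 1 := mul_left_cancel₀ hp0 (by rw [← mul_assoc, ← ht, mul_one])
  exact IsUnit.of_mul_eq_one t hwt
end

section
/- Let u₁', u₂' be coprime binary forms of degree e, and let h be a binary form of degree k such that every (α,β) ∈ ℂ² with (α,β) ≠ (0,0) at which h vanishes (after mapping coefficients into ℂ) is also a zero of u₁'² + u₂'². Then: (1) for every (α,β) ∈ ℝ² with (α,β) ≠ (0,0), (u₁'² + u₂'²)(α,β) ≠ 0; (2) for every (α,β) ∈ ℝ² with (α,β) ≠ (0,0), h(α,β) ≠ 0; and (3) k is even. -/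
open MvPolynomial

-- scaling of eval for homogeneous polys
lemma eval_smul_homog {n : ℕ} {p : MvPolynomial (Fin 2) ℝ} (hp : p.IsHomogeneous n)
    (c : ℝ) (x : Fin 2 → ℝ) : eval (c • x) p = c ^ n * eval x p := by
  rw [eval_eq, eval_eq, Finset.mul_sum]
  refine Finset.sum_congr rfl fun d hd => ?_
  have hdeg : d.degree = n := by
    have := hp (mem_support_iff.mp hd)
    rw [Finsupp.degree_eq_weight_one]; exact this
  have : ∏ i ∈ d.support, (c • x) i ^ d i
      = c ^ n * ∏ i ∈ d.support, x i ^ d i := by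
    simp only [Pi.smul_apply, smul_eq_mul, mul_pow]
    rw [Finset.prod_mul_distrib, Finset.prod_pow_eq_pow_sum]
    congr 1
    rw [← hdeg]
    rfl
  rw [this]; ring

lemma X1_dvd_of_homog {n : ℕ} {q : MvPolynomial (Fin 2) ℝ} (hq : q.IsHomogeneous n)
    (h0 : eval ![(1 : ℝ), 0] q = 0) : (X 1 : MvPolynomial (Fin 2) ℝ) ∣ q := by
  have key : ∀ d ∈ q.support, d 1 = 0 → d = Finsupp.single 0 n := by
    intro d hd hd1
    have hdeg : d.degree = n := by
      have := hq (mem_support_iff.mp hd)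
      rw [Finsupp.degree_eq_weight_one]; exact this
    have hsum : d 0 + d 1 = n := by
      rw [← hdeg, Finsupp.degree_apply,
        Finset.sum_subset (Finset.subset_univ d.support)
          (fun i _ hi => Finsupp.notMem_support_iff.mp hi), Fin.sum_univ_two]
    have hd0 : d 0 = n := by omega
    ext i
    fin_cases i
    · simpa [Finsupp.single_apply] using hd0
    · simpa [Finsupp.single_apply] using hd1
  have heval : eval ![(1 : ℝ), 0] q = coeff (Finsupp.single 0 n) q := by
    rw [eval_eq]
    rw [Finset.sum_eq_single (Finsupp.single 0 n)]
    · by_cases hmem : Finsupp.single 0 n ∈ q.support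
      · rw [Finset.prod_eq_one, mul_one]
        intro i hi
        fin_cases i
        · simp
        · exact absurd (Finsupp.mem_support_iff.mp hi) (by simp [Finsupp.single_apply])
      · rw [notMem_support_iff.mp hmem]; ring
    · intro d hd hne
      have hd1 : d 1 ≠ 0 := fun h => hne (key d hd h)
      have h1mem : (1 : Fin 2) ∈ d.support := Finsupp.mem_support_iff.mpr hd1
      rw [Finset.prod_eq_zero h1mem]
      · ring
      · simp [zero_pow hd1]
    · intro hmem
      rw [notMem_support_iff.mp hmem]; ring
  rw [heval] at h0
  conv_rhs => rw [q.as_sum]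
  refine Finset.dvd_sum fun d hd => ?_
  rw [X_dvd_monomial]
  by_cases hd1 : d 1 = 0
  · left
    rw [key d hd hd1]
    exact h0
  · right; exact hd1

lemma linear_dvd_of_root {n : ℕ} {p : MvPolynomial (Fin 2) ℝ} (hp : p.IsHomogeneous n)
    {α β : ℝ} (hαβ : (α, β) ≠ (0, 0)) (h0 : eval ![α, β] p = 0) :
    (C α * X 1 - C β * X 0 : MvPolynomial (Fin 2) ℝ) ∣ p := by
  -- choose γ δ with α*δ - β*γ = 1
  obtain ⟨γ, δ, hdet⟩ : ∃ γ δ : ℝ, α * δ - β * γ = 1 := by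
    rcases eq_or_ne α 0 with hα | hα
    · have hβ : β ≠ 0 := by
        intro hβ; exact hαβ (by rw [hα, hβ])
      exact ⟨-β⁻¹, 0, by field_simp; ring⟩
    · exact ⟨0, α⁻¹, by field_simp; ring⟩
  set g : Fin 2 → MvPolynomial (Fin 2) ℝ :=
    ![C α * X 0 + C γ * X 1, C β * X 0 + C δ * X 1] with hg
  set g' : Fin 2 → MvPolynomial (Fin 2) ℝ :=
    ![C δ * X 0 - C γ * X 1, C α * X 1 - C β * X 0] with hg'
  have hcomp : ∀ r : MvPolynomial (Fin 2) ℝ, aeval g' (aeval g r) = r := by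
    intro r
    have : (aeval g').comp (aeval g) = AlgHom.id ℝ (MvPolynomial (Fin 2) ℝ) := by
      apply algHom_ext
      intro i
      have hC : (C α * C δ - C β * C γ : MvPolynomial (Fin 2) ℝ) = 1 := by
        rw [← C_mul, ← C_mul, ← C_sub, hdet, C_1]
      fin_cases i
      · show (aeval g') (aeval g (X 0)) = X 0
        simp only [hg, hg', aeval_X, map_add, map_mul, map_sub, aeval_C,
          Matrix.cons_val_zero, Matrix.cons_val_one, Matrix.head_cons, algebraMap_eq]
        linear_combination hC * (X 0 : MvPolynomial (Fin 2) ℝ)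
      · show (aeval g') (aeval g (X 1)) = X 1
        simp only [hg, hg', aeval_X, map_add, map_mul, map_sub, aeval_C,
          Matrix.cons_val_zero, Matrix.cons_val_one, Matrix.head_cons, algebraMap_eq]
        linear_combination hC * (X 1 : MvPolynomial (Fin 2) ℝ)
    calc aeval g' (aeval g r) = ((aeval g').comp (aeval g)) r := rfl
    _ = r := by rw [this]; rfl
  have hghom : ∀ i, (g i).IsHomogeneous 1 := by
    intro i
    fin_cases i <;>
      exact ((isHomogeneous_X _ _).C_mul _).add ((isHomogeneous_X _ _).C_mul _)
  have hqhom : (aeval g p).IsHomogeneous n := by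
    simpa using hp.aeval g hghom
  have heval : eval ![(1 : ℝ), 0] (aeval g p) = 0 := by
    have : eval ![(1 : ℝ), 0] (aeval g p)
        = eval (fun i => eval ![(1 : ℝ), 0] (g i)) p := by
      rw [aeval_def, eval_eval₂]
      congr 1
      ext r
      simp
    rw [this]
    have : (fun i => eval ![(1 : ℝ), 0] (g i)) = ![α, β] := by
      funext i
      fin_cases i <;> simp [hg]
    rw [this, h0]
  obtain ⟨m, hm⟩ := X1_dvd_of_homog hqhom heval
  refine ⟨aeval g' m, ?_⟩
  have := congrArg (aeval g') hm
  rw [hcomp, map_mul] at this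
  simpa [hg', aeval_X, aeval_C] using this

lemma eval_map_ofReal (p : MvPolynomial (Fin 2) ℝ) (α β : ℝ) :
    eval ![(α : ℂ), (β : ℂ)] (map (algebraMap ℝ ℂ) p)
      = algebraMap ℝ ℂ (eval ![α, β] p) := by
  rw [eval_map]
  have := eval₂_comp_left (algebraMap ℝ ℂ) (RingHom.id ℝ) ![α, β] p
  simp only [eval₂_id] at this
  rw [this]
  congr 1
  funext i
  fin_cases i <;> simp

/-- In the decomposition of a pair of binary forms, both `u₁'² + u₂'²` and `h` have no real
roots and `deg h` is even. -/
theorem no_real_roots_and_even_degree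
    (e k : ℕ) (u₁' u₂' h : MvPolynomial (Fin 2) ℝ)
    (h₁ : u₁'.IsHomogeneous e) (h₂ : u₂'.IsHomogeneous e)
    (hcop : ∀ w : MvPolynomial (Fin 2) ℝ, w ∣ u₁' → w ∣ u₂' → IsUnit w)
    (hh : h.IsHomogeneous k)
    (hroots : ∀ α β : ℂ, (α, β) ≠ (0, 0) →
      eval ![α, β] (map (algebraMap ℝ ℂ) h) = 0 →
      eval ![α, β] (map (algebraMap ℝ ℂ) (u₁' ^ 2 + u₂' ^ 2)) = 0) :
    (∀ α β : ℝ, (α, β) ≠ (0, 0) → eval ![α, β] (u₁' ^ 2 + u₂' ^ 2) ≠ 0) ∧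
    (∀ α β : ℝ, (α, β) ≠ (0, 0) → eval ![α, β] h ≠ 0) ∧
    Even k := by
  have part1 : ∀ α β : ℝ, (α, β) ≠ (0, 0) → eval ![α, β] (u₁' ^ 2 + u₂' ^ 2) ≠ 0 := by
    intro α β hne h0
    rw [map_add, map_pow, map_pow] at h0
    have e1 : eval ![α, β] u₁' = 0 := by nlinarith [sq_nonneg (eval ![α, β] u₁'), sq_nonneg (eval ![α, β] u₂')]
    have e2 : eval ![α, β] u₂' = 0 := by nlinarith [sq_nonneg (eval ![α, β] u₁'), sq_nonneg (eval ![α, β] u₂')]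
    have d1 := linear_dvd_of_root h₁ hne e1
    have d2 := linear_dvd_of_root h₂ hne e2
    have hu := hcop _ d1 d2
    have : IsUnit (eval ![α, β] (C α * X 1 - C β * X 0 : MvPolynomial (Fin 2) ℝ)) :=
      hu.map (eval ![α, β])
    rw [map_sub, map_mul, map_mul, eval_C, eval_C, eval_X, eval_X] at this
    simp only [Matrix.cons_val_zero, Matrix.cons_val_one, Matrix.head_cons] at this
    rw [show α * β - β * α = 0 by ring] at this
    exact not_isUnit_zero this
  have part2 : ∀ α β : ℝ, (α, β) ≠ (0, 0) → eval ![α, β] h ≠ 0 := by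
    intro α β hne h0
    have hneC : ((α : ℂ), (β : ℂ)) ≠ (0, 0) := by
      intro hc
      rw [Prod.mk.injEq] at hc
      exact hne (by simp [Prod.mk.injEq, Complex.ofReal_eq_zero.mp hc.1,
        Complex.ofReal_eq_zero.mp hc.2])
    have hzero : eval ![(α : ℂ), (β : ℂ)] (map (algebraMap ℝ ℂ) h) = 0 := by
      rw [eval_map_ofReal, h0, map_zero]
    have := hroots α β hneC hzero
    rw [eval_map_ofReal] at this
    have : eval ![α, β] (u₁' ^ 2 + u₂' ^ 2) = 0 := by
      rwa [show (algebraMap ℝ ℂ) (eval ![α, β] (u₁' ^ 2 + u₂' ^ 2))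
          = ((eval ![α, β] (u₁' ^ 2 + u₂' ^ 2) : ℝ) : ℂ) from rfl,
        Complex.ofReal_eq_zero] at this
    exact part1 α β hne this
  refine ⟨part1, part2, ?_⟩
  by_contra hodd
  have hoddk : Odd k := Nat.odd_iff.mpr (Nat.not_even_iff.mp hodd)
  set a := eval ![(1 : ℝ), 0] h with ha
  have hane : a ≠ 0 := part2 1 0 (by simp)
  set gfun : ℝ → ℝ := fun t => eval ![Real.cos t, Real.sin t] h with hgfun
  have hcont : Continuous gfun := by
    apply (MvPolynomial.continuous_eval h).comp
    apply continuous_pi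
    intro i
    fin_cases i
    · simpa using Real.continuous_cos
    · simpa using Real.continuous_sin
  have hg0 : gfun 0 = a := by simp [hgfun, ha]
  have hgpi : gfun Real.pi = -a := by
    have hvec : ![Real.cos Real.pi, Real.sin Real.pi] = (-1 : ℝ) • ![(1 : ℝ), 0] := by
      funext i; fin_cases i <;> simp
    rw [hgfun]
    simp only [hvec]
    rw [eval_smul_homog hh, hoddk.neg_one_pow]
    rw [ha]; ring
  have hnonzero : ∀ t, gfun t ≠ 0 := by
    intro t
    apply part2
    intro hc
    rw [Prod.mk.injEq] at hc
    have := Real.sin_sq_add_cos_sq t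
    rw [hc.1, hc.2] at this
    norm_num at this
  obtain ⟨t, _, ht⟩ : ∃ t ∈ Set.Icc (0 : ℝ) Real.pi, gfun t = 0 := by
    rcases lt_or_gt_of_ne hane with hlt | hgt
    · have : (0 : ℝ) ∈ Set.Icc (gfun 0) (gfun Real.pi) := by
        rw [hg0, hgpi]; constructor <;> linarith
      obtain ⟨t, ht, ht0⟩ := intermediate_value_Icc Real.pi_pos.le hcont.continuousOn this
      exact ⟨t, ht, ht0⟩
    · have : (0 : ℝ) ∈ Set.Icc (gfun Real.pi) (gfun 0) := by
        rw [hg0, hgpi]; constructor <;> linarith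
      obtain ⟨t, ht, ht0⟩ := intermediate_value_Icc' Real.pi_pos.le hcont.continuousOn this
      exact ⟨t, ht, ht0⟩
  exact hnonzero t ht
end

section
/- Let g, a ∈ ℝ[x] be coprime univariate polynomials with g ≠ 0. If a(x) > 0 for every x ∈ ℝ with g(x) = 0, then there exists a polynomial t ∈ ℝ[x] with deg t < deg g such that g divides a − t². -/
open Polynomial

private lemma sq_mod_irred_s5 (p : Polynomial ℝ) (hp : Irreducible p) (a : Polynomial ℝ)
    (hpos : ∀ x : ℝ, p.eval x = 0 → 0 < a.eval x) :
    ∃ t : Polynomial ℝ, p ∣ a - t ^ 2 := by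
  by_cases hroot : ∃ r : ℝ, p.IsRoot r
  · obtain ⟨r, hr⟩ := hroot
    refine ⟨C (Real.sqrt (a.eval r)), ?_⟩
    have h1 : (X - C r) ∣ a - (C (Real.sqrt (a.eval r))) ^ 2 := by
      rw [dvd_iff_isRoot]
      simp only [IsRoot, eval_sub, eval_pow, eval_C]
      rw [Real.sq_sqrt (hpos r hr).le, sub_self]
    have h2 : Associated (X - C r) p :=
      (irreducible_X_sub_C r).associated_of_dvd hp (dvd_iff_isRoot.2 hr)
    exact (h2.symm.dvd).trans h1
  · haveI := Fact.mk hp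
    have hdegpos : 0 < (p.map (algebraMap ℝ ℂ)).degree := by
      rw [degree_map]
      exact natDegree_pos_iff_degree_pos.mp hp.natDegree_pos
    obtain ⟨z, hz⟩ := Complex.exists_root hdegpos
    have hz' : aeval z p = 0 := by rwa [aeval_def, ← eval_map]
    let φ : AdjoinRoot p →ₐ[ℝ] ℂ := AdjoinRoot.liftAlgHom p (Algebra.ofId ℝ ℂ) z hz'
    have hinj : Function.Injective φ := φ.toRingHom.injective
    haveI : Module.Finite ℝ (AdjoinRoot p) := (AdjoinRoot.powerBasis hp.ne_zero).finite
    have hfr : Module.finrank ℝ (AdjoinRoot p) = p.natDegree := by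
      simpa using (AdjoinRoot.powerBasis hp.ne_zero).finrank
    have hle : p.natDegree ≤ 2 := by
      have := LinearMap.finrank_le_finrank_of_injective (f := φ.toLinearMap) hinj
      rwa [hfr, Complex.finrank_real_complex] at this
    have hne1 : p.natDegree ≠ 1 := by
      intro h1
      obtain ⟨u, v, hpuv⟩ := exists_eq_X_add_C_of_natDegree_le_one h1.le
      have hu0 : u ≠ 0 := by
        intro h0
        rw [h0] at hpuv
        simp only [C_0, zero_mul, zero_add] at hpuv
        rw [hpuv] at h1
        simp at h1
      refine hroot ⟨-v / u, ?_⟩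
      simp only [IsRoot, hpuv, eval_add, eval_mul, eval_C, eval_X]
      field_simp
      ring
    have h2 : p.natDegree = 2 := by
      have := hp.natDegree_pos
      omega
    have hfin : Module.finrank ℝ (AdjoinRoot p) = Module.finrank ℝ ℂ := by
      rw [hfr, h2, Complex.finrank_real_complex]
    let e := LinearMap.linearEquivOfInjective φ.toLinearMap hinj hfin
    obtain ⟨v, hv⟩ := IsAlgClosed.exists_pow_nat_eq (φ (AdjoinRoot.mk p a)) (n := 2)
      (by norm_num)
    obtain ⟨t, ht⟩ := AdjoinRoot.mk_surjective (e.symm v)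
    refine ⟨t, ?_⟩
    rw [← AdjoinRoot.mk_eq_zero]
    apply hinj
    have hφt : φ (AdjoinRoot.mk p t) = v := by
      rw [ht]
      conv_rhs => rw [← e.apply_symm_apply v]
      exact (LinearMap.linearEquivOfInjective_apply (f := φ.toLinearMap)
        hinj hfin (e.symm v)).symm
    rw [map_sub, map_pow, map_sub, map_pow, hφt, hv, map_zero, sub_self]

private lemma sq_mod_pow (p : Polynomial ℝ) (hp : Irreducible p) (a : Polynomial ℝ)
    (hcop : IsCoprime p a)
    (hpos : ∀ x : ℝ, p.eval x = 0 → 0 < a.eval x) :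
    ∀ n : ℕ, ∃ t : Polynomial ℝ, p ^ (n + 1) ∣ a - t ^ 2 := by
  intro n
  induction n with
  | zero => simpa using sq_mod_irred_s5 p hp a hpos
  | succ n ih =>
    obtain ⟨t, u, hu⟩ := ih
    have hpd : p ∣ a - t ^ 2 :=
      dvd_trans (dvd_pow_self p (Nat.succ_ne_zero n)) ⟨u, hu⟩
    have hpt : ¬ p ∣ t := by
      intro hdvd
      have hpt2 : p ∣ t ^ 2 := by rw [sq]; exact hdvd.mul_left t
      have hpa : p ∣ a := by
        have := dvd_add hpd hpt2
        simpa using this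
      exact hp.not_isUnit (hcop.isUnit_of_dvd' dvd_rfl hpa)
    have hc2t : IsCoprime p (2 * t) := by
      rw [hp.coprime_iff_not_dvd]
      intro hdvd
      have hprime : Prime p := UniqueFactorizationMonoid.irreducible_iff_prime.mp hp
      rcases hprime.dvd_mul.mp hdvd with h2 | h2
      · have hunit : IsUnit (2 : Polynomial ℝ) := by
          have : (2 : Polynomial ℝ) = C 2 := by
            rw [show (2 : ℝ) = 1 + 1 by norm_num, map_add, map_one]
            norm_num
          rw [this]
          exact isUnit_C.2 (isUnit_iff_ne_zero.2 two_ne_zero)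
        exact hp.not_isUnit (isUnit_of_dvd_unit h2 hunit)
      · exact hpt h2
    obtain ⟨b, c, hbc⟩ := hc2t
    refine ⟨t + p ^ (n + 1) * (c * u), u * b - p ^ n * (c * u) ^ 2, ?_⟩
    linear_combination hu - p ^ (n + 1) * u * hbc

private lemma sq_mod_aux : ∀ N : ℕ, ∀ g a : Polynomial ℝ, g.natDegree ≤ N → g ≠ 0 →
    IsCoprime g a → (∀ x : ℝ, g.eval x = 0 → 0 < a.eval x) →
    ∃ t : Polynomial ℝ, g ∣ a - t ^ 2 := by
  intro N
  induction N using Nat.strong_induction_on with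
  | _ N ih =>
    intro g a hdeg hg hcop hpos
    by_cases hgu : IsUnit g
    · exact ⟨0, hgu.dvd⟩
    obtain ⟨p, hp, hpg⟩ := WfDvdMonoid.exists_irreducible_factor hgu hg
    obtain ⟨k, h, hph, rfl⟩ := WfDvdMonoid.max_power_factor hg hp
    have h0 : h ≠ 0 := fun h0 => hg (by simp [h0])
    have hpk0 : (p : Polynomial ℝ) ^ k ≠ 0 := pow_ne_zero k hp.ne_zero
    have hprime : Prime p := UniqueFactorizationMonoid.irreducible_iff_prime.mp hp
    have hk : k ≠ 0 := by
      rintro rfl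
      rw [pow_zero, one_mul] at hpg
      exact hph hpg
    have hcph : IsCoprime (p ^ k) h := (hprime.coprime_iff_not_dvd.mpr hph).pow_left
    have hcopp : IsCoprime p a :=
      hcop.of_isCoprime_of_dvd_left (dvd_mul_of_dvd_left (dvd_pow_self p hk) h)
    have hposp : ∀ x : ℝ, p.eval x = 0 → 0 < a.eval x := by
      intro x hx
      exact hpos x (by simp [hx, zero_pow hk])
    obtain ⟨t₁, ht₁⟩ := sq_mod_pow p hp a hcopp hposp (k - 1)
    rw [show k - 1 + 1 = k by omega] at ht₁
    have hlt : h.natDegree < (p ^ k * h).natDegree := by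
      rw [natDegree_mul hpk0 h0, natDegree_pow]
      have := hp.natDegree_pos
      have : 1 ≤ k * p.natDegree := Nat.one_le_iff_ne_zero.2 (by positivity)
      omega
    have hposh : ∀ x : ℝ, h.eval x = 0 → 0 < a.eval x := by
      intro x hx
      exact hpos x (by simp [hx])
    obtain ⟨t₂, ht₂⟩ := ih h.natDegree (lt_of_lt_of_le hlt hdeg) h a le_rfl h0
      (hcop.of_isCoprime_of_dvd_left (dvd_mul_left h _)) hposh
    have hcph' := hcph
    obtain ⟨b, c, hbc⟩ := hcph'
    refine ⟨t₁ * (c * h) + t₂ * (b * p ^ k), hcph.mul_dvd ?_ ?_⟩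
    · have d1 : p ^ k ∣ (t₁ * (c * h) + t₂ * (b * p ^ k)) - t₁ := by
        refine ⟨(t₂ - t₁) * b, ?_⟩
        linear_combination t₁ * hbc
      have key : a - (t₁ * (c * h) + t₂ * (b * p ^ k)) ^ 2
          = (a - t₁ ^ 2) - ((t₁ * (c * h) + t₂ * (b * p ^ k)) - t₁)
            * ((t₁ * (c * h) + t₂ * (b * p ^ k)) + t₁) := by ring
      rw [key]
      exact dvd_sub ht₁ (d1.mul_right _)
    · have d2 : h ∣ (t₁ * (c * h) + t₂ * (b * p ^ k)) - t₂ := by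
        refine ⟨(t₁ - t₂) * c, ?_⟩
        linear_combination t₂ * hbc
      have key : a - (t₁ * (c * h) + t₂ * (b * p ^ k)) ^ 2
          = (a - t₂ ^ 2) - ((t₁ * (c * h) + t₂ * (b * p ^ k)) - t₂)
            * ((t₁ * (c * h) + t₂ * (b * p ^ k)) + t₂) := by ring
      rw [key]
      exact dvd_sub ht₂ (d2.mul_right _)

/-- If `a` is coprime with `g` and strictly positive on the real roots of `g`, then `a` is
congruent to a single square modulo `g`, with the square root of degree less than `deg g`. -/
theorem square_mod_of_pos_on_roots
    (g a : Polynomial ℝ) (hg : g ≠ 0)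
    (hcop : IsCoprime g a)
    (hpos : ∀ x : ℝ, g.eval x = 0 → 0 < a.eval x) :
    ∃ t : Polynomial ℝ, t.degree < g.degree ∧ g ∣ (a - t ^ 2) := by
  obtain ⟨t, ht⟩ := sq_mod_aux g.natDegree g a le_rfl hg hcop hpos
  have hmon : (g * C g.leadingCoeff⁻¹).Monic := monic_mul_leadingCoeff_inv hg
  refine ⟨t %ₘ (g * C g.leadingCoeff⁻¹), ?_, ?_⟩
  · calc (t %ₘ (g * C g.leadingCoeff⁻¹)).degree
        < (g * C g.leadingCoeff⁻¹).degree := degree_modByMonic_lt t hmon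
      _ = g.degree := degree_mul_leadingCoeff_inv g hg
  · have hq : t %ₘ (g * C g.leadingCoeff⁻¹)
        + (g * C g.leadingCoeff⁻¹) * (t /ₘ (g * C g.leadingCoeff⁻¹)) = t :=
      modByMonic_add_div t _
    have hgd : g ∣ (g * C g.leadingCoeff⁻¹) * (t /ₘ (g * C g.leadingCoeff⁻¹)) :=
      Dvd.dvd.mul_right ⟨C g.leadingCoeff⁻¹, rfl⟩ _
    have key : a - (t %ₘ (g * C g.leadingCoeff⁻¹)) ^ 2
        = (a - t ^ 2) + ((g * C g.leadingCoeff⁻¹) * (t /ₘ (g * C g.leadingCoeff⁻¹)))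
          * ((t %ₘ (g * C g.leadingCoeff⁻¹)) + t) := by
      linear_combination (-(t %ₘ (g * C g.leadingCoeff⁻¹) + t)) * hq
    rw [key]
    exact dvd_add ht (hgd.mul_right _)
end

section
/- Let d ≥ m ≥ 0 be natural numbers. Let g be a binary form of degree m, let q be a sum of squares of binary forms of degree d − m (so q is a binary form of degree 2d − 2m), and let p be a sum of squares of binary forms of degree d (so p is a binary form of degree 2d). If g and q are coprime, then there exist a finite family s₁,…,s_N of binary forms of degree m and a binary form t of degree 2d − m such that p = (∑ᵢ sᵢ²)·q + t·g. -/
open MvPolynomial Polynomial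

noncomputable def phi : MvPolynomial (Fin 2) ℝ →ₐ[ℝ] Polynomial ℝ :=
  MvPolynomial.aeval ![Polynomial.X, 1]

lemma deg2_s7 (u : Fin 2 →₀ ℕ) : u.degree = u 0 + u 1 := by
  rw [Finsupp.degree_apply]
  rw [Finset.sum_subset (Finset.subset_univ u.support)
    (fun i _ hi => Finsupp.notMem_support_iff.mp hi)]
  exact Fin.sum_univ_two u

lemma phi_coeff {F : MvPolynomial (Fin 2) ℝ} {D : ℕ} (hF : F.IsHomogeneous D) (k : ℕ) :
    (phi F).coeff k = MvPolynomial.coeff (Finsupp.single 0 k + Finsupp.single 1 (D - k)) F := by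
  classical
  set u₀ : Fin 2 →₀ ℕ := Finsupp.single 0 k + Finsupp.single 1 (D - k) with hu₀
  have hu₀0 : u₀ 0 = k := by simp [hu₀]
  have hu₀1 : u₀ 1 = D - k := by simp [hu₀]
  rw [phi, MvPolynomial.aeval_def, MvPolynomial.eval₂_eq' (algebraMap ℝ (Polynomial ℝ)) _ F]
  rw [Polynomial.finset_sum_coeff]
  have : ∀ d : Fin 2 →₀ ℕ,
      (algebraMap ℝ (Polynomial ℝ) (MvPolynomial.coeff d F) * ∏ i, (![Polynomial.X, 1] : Fin 2 → Polynomial ℝ) i ^ d i).coeff k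
      = if d 0 = k then MvPolynomial.coeff d F else 0 := by
    intro d
    rw [Fin.prod_univ_two]
    simp only [Matrix.cons_val_zero, Matrix.cons_val_one, Matrix.head_cons, one_pow, mul_one]
    rw [Polynomial.algebraMap_eq, Polynomial.coeff_C_mul, Polynomial.coeff_X_pow]
    split <;> simp_all [eq_comm]
  rw [Finset.sum_congr rfl fun d _ => this d]
  rw [Finset.sum_eq_single u₀]
  · rw [if_pos hu₀0]
  · intro d hd hne
    rw [if_neg]
    intro h0
    apply hne
    have hdeg : d 0 + d 1 = D := by
      have := hF (MvPolynomial.mem_support_iff.mp hd)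
      rw [show (Finsupp.weight 1 : (Fin 2 →₀ ℕ) →+ ℕ) = Finsupp.degree from Finsupp.degree_eq_weight_one.symm, deg2_s7] at this
      exact this
    ext i
    refine Fin.cases ?_ ?_ i
    · rw [hu₀0, h0]
    · intro j
      have hj : j = 0 := Subsingleton.elim _ _
      subst hj
      show d 1 = u₀ 1
      rw [hu₀1, ← h0]
      omega
  · intro h
    rw [if_pos hu₀0, MvPolynomial.notMem_support_iff.mp h]

lemma weight_eq (u : Fin 2 →₀ ℕ) : (Finsupp.weight 1) u = u 0 + u 1 := by
  rw [show (Finsupp.weight 1 : (Fin 2 →₀ ℕ) →+ ℕ) = Finsupp.degree from Finsupp.degree_eq_weight_one.symm, deg2_s7]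

lemma phi_eq_zero {F : MvPolynomial (Fin 2) ℝ} {D : ℕ} (hF : F.IsHomogeneous D)
    (h : phi F = 0) : F = 0 := by
  ext u
  rw [MvPolynomial.coeff_zero]
  by_cases hu : MvPolynomial.coeff u F = 0
  · exact hu
  · exfalso
    have hdeg : u 0 + u 1 = D := by rw [← weight_eq]; exact hF hu
    have hu' : u = Finsupp.single 0 (u 0) + Finsupp.single 1 (D - u 0) := by
      ext i
      refine Fin.cases ?_ ?_ i
      · simp
      · intro j
        have hj : j = 0 := Subsingleton.elim _ _
        subst hj
        show u 1 = ((Finsupp.single 0 (u 0) + Finsupp.single 1 (D - u 0)) : Fin 2 →₀ ℕ) 1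
        rw [Finsupp.add_apply, Finsupp.single_apply, Finsupp.single_apply]
        simp
        omega
    apply hu
    rw [hu', ← phi_coeff hF, h, Polynomial.coeff_zero]

lemma phi_natDegree_le {F : MvPolynomial (Fin 2) ℝ} {D : ℕ} (hF : F.IsHomogeneous D) :
    (phi F).natDegree ≤ D := by
  rw [Polynomial.natDegree_le_iff_coeff_eq_zero]
  intro k hk
  rw [phi_coeff hF]
  apply hF.coeff_eq_zero
  rw [deg2_s7, Finsupp.add_apply, Finsupp.add_apply,
    Finsupp.single_apply, Finsupp.single_apply]
  simp
  omega

noncomputable def homToDeg (n : ℕ) (a : Polynomial ℝ) : MvPolynomial (Fin 2) ℝ :=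
  ∑ k ∈ Finset.range (n + 1),
    MvPolynomial.C (a.coeff k) * MvPolynomial.X 0 ^ k * MvPolynomial.X 1 ^ (n - k)

lemma homToDeg_isHomogeneous (n : ℕ) (a : Polynomial ℝ) :
    (homToDeg n a).IsHomogeneous n := by
  apply MvPolynomial.IsHomogeneous.sum
  intro k hk
  have hk' : k ≤ n := by
    rw [Finset.mem_range] at hk; omega
  have h := ((MvPolynomial.isHomogeneous_C (Fin 2) (a.coeff k)).mul
    (MvPolynomial.isHomogeneous_X_pow 0 k)).mul (MvPolynomial.isHomogeneous_X_pow 1 (n - k))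
  have : (0 : ℕ) + k + (n - k) = n := by omega
  rwa [this] at h

lemma phi_homToDeg {n : ℕ} {a : Polynomial ℝ} (ha : a.natDegree ≤ n) :
    phi (homToDeg n a) = a := by
  rw [homToDeg, map_sum]
  have : ∀ k ∈ Finset.range (n + 1),
      phi (MvPolynomial.C (a.coeff k) * MvPolynomial.X 0 ^ k * MvPolynomial.X 1 ^ (n - k))
      = Polynomial.C (a.coeff k) * Polynomial.X ^ k := by
    intro k _
    rw [map_mul, map_mul, map_pow, map_pow]
    simp [phi]
  rw [Finset.sum_congr rfl this]
  conv_rhs => rw [a.as_sum_range' (n+1) (by omega)]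
  apply Finset.sum_congr rfl
  intro k _
  rw [Polynomial.C_mul_X_pow_eq_monomial]

lemma lift_factor {F : MvPolynomial (Fin 2) ℝ} {D : ℕ} (hF : F.IsHomogeneous D)
    {a b : Polynomial ℝ} (hab : phi F = a * b) {k l : ℕ}
    (hk : a.natDegree ≤ k) (hl : b.natDegree ≤ l) (hkl : k + l = D) :
    F = homToDeg k a * homToDeg l b := by
  have hhom : (homToDeg k a * homToDeg l b).IsHomogeneous D := by
    rw [← hkl]
    exact (homToDeg_isHomogeneous k a).mul (homToDeg_isHomogeneous l b)
  have h0 : phi (F - homToDeg k a * homToDeg l b) = 0 := by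
    rw [map_sub, map_mul, phi_homToDeg hk, phi_homToDeg hl, hab, sub_self]
  have := phi_eq_zero (hF.sub hhom) h0
  rw [sub_eq_zero] at this
  exact this

lemma sq_sum_homog {ι : Type*} [Fintype ι] {t : ι → MvPolynomial (Fin 2) ℝ} {e : ℕ}
    (ht : ∀ i, (t i).IsHomogeneous e) :
    (∑ i, (t i) ^ 2).IsHomogeneous (2 * e) := by
  apply MvPolynomial.IsHomogeneous.sum
  intro i _
  have := (ht i).pow 2
  rwa [mul_comm] at this

lemma sos_aux (d m : ℕ) (hm : m ≤ d)
    (g q p : MvPolynomial (Fin 2) ℝ)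
    (hg : g.IsHomogeneous m)
    (hq : ∃ (N : ℕ) (t : Fin N → MvPolynomial (Fin 2) ℝ),
      (∀ i, (t i).IsHomogeneous (d - m)) ∧ q = ∑ i, (t i) ^ 2)
    (hp : ∃ (N : ℕ) (t : Fin N → MvPolynomial (Fin 2) ℝ),
      (∀ i, (t i).IsHomogeneous d) ∧ p = ∑ i, (t i) ^ 2)
    (hcop : ∀ w : MvPolynomial (Fin 2) ℝ, w ∣ g → w ∣ q → IsUnit w)
    (hg0 : MvPolynomial.coeff (Finsupp.single 0 m) g ≠ 0) :
    ∃ (N : ℕ) (s : Fin N → MvPolynomial (Fin 2) ℝ) (t : MvPolynomial (Fin 2) ℝ),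
      (∀ i, (s i).IsHomogeneous m) ∧ t.IsHomogeneous (2 * d - m) ∧
      p = (∑ i, (s i) ^ 2) * q + t * g := by
  classical
  obtain ⟨Nq, u, hu, hqdef⟩ := hq
  obtain ⟨Np, t, ht, hpdef⟩ := hp
  have hphomog : p.IsHomogeneous (2 * d) := hpdef ▸ sq_sum_homog ht
  have hqhomog : q.IsHomogeneous (2 * (d - m)) := hqdef ▸ sq_sum_homog hu
  -- facts about phi g
  have hgc : (phi g).coeff m ≠ 0 := by
    rw [phi_coeff hg m]
    simpa using hg0
  have hgne : phi g ≠ 0 := fun h => hgc (by rw [h, Polynomial.coeff_zero])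
  have hgd : (phi g).natDegree = m :=
    le_antisymm (phi_natDegree_le hg) (Polynomial.le_natDegree_of_ne_zero hgc)
  have hgne' : g ≠ 0 := fun h => hgne (by rw [h, map_zero])
  -- case m = 0
  rcases Nat.eq_zero_or_pos m with hm0 | hmpos
  · subst hm0
    have hgC : phi g = Polynomial.C ((phi g).coeff 0) :=
      Polynomial.eq_C_of_natDegree_eq_zero hgd
    set c := (phi g).coeff 0 with hc
    refine ⟨0, Fin.elim0, homToDeg (2 * d) (phi p * Polynomial.C c⁻¹), fun i => i.elim0,
      by simpa using homToDeg_isHomogeneous (2 * d) _, ?_⟩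
    have hτg : (homToDeg (2 * d) (phi p * Polynomial.C c⁻¹) * g).IsHomogeneous (2 * d) := by
      have := (homToDeg_isHomogeneous (2 * d) (phi p * Polynomial.C c⁻¹)).mul hg
      simpa using this
    have h0 : phi (p - (0 * q + homToDeg (2 * d) (phi p * Polynomial.C c⁻¹) * g)) = 0 := by
      rw [map_sub, map_add, map_mul, map_mul, map_zero, zero_mul, zero_add]
      rw [phi_homToDeg (Polynomial.natDegree_mul_le.trans
        (by simpa using phi_natDegree_le hphomog))]
      rw [hgC, mul_assoc, ← Polynomial.C_mul, inv_mul_cancel₀ hgc, Polynomial.C_1, mul_one,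
        sub_self]
    have hhom : (p - (0 * q + homToDeg (2 * d) (phi p * Polynomial.C c⁻¹) * g)).IsHomogeneous (2 * d) := by
      apply hphomog.sub
      apply MvPolynomial.IsHomogeneous.add _ hτg
      rw [zero_mul]
      exact MvPolynomial.isHomogeneous_zero _ _ _
    have := phi_eq_zero hhom h0
    rw [sub_eq_zero] at this
    simpa using this
  -- main case: m > 0
  have hqne : q ≠ 0 := by
    intro h
    have hunit : IsUnit g := hcop g dvd_rfl (h ▸ dvd_zero g)
    have h2 : IsUnit (phi g) := hunit.map phi
    have h3 := Polynomial.natDegree_eq_zero_of_isUnit h2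
    omega
  have hqφne : phi q ≠ 0 := fun h => hqne (phi_eq_zero hqhomog h)
  set G := phi g with hGdef
  set Q := phi q with hQdef
  set w := EuclideanDomain.gcd G Q with hw
  have hw1 : w ∣ G := EuclideanDomain.gcd_dvd_left G Q
  have hw2 : w ∣ Q := EuclideanDomain.gcd_dvd_right G Q
  have hwne : w ≠ 0 := by
    intro h
    rw [hw, EuclideanDomain.gcd_eq_zero_iff] at h
    exact hgne h.1
  have hk1 : w.natDegree ≤ m := hgd ▸ Polynomial.natDegree_le_of_dvd hw1 hgne
  have hk2 : w.natDegree ≤ 2 * (d - m) :=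
    le_trans (Polynomial.natDegree_le_of_dvd hw2 hqφne) (phi_natDegree_le hqhomog)
  obtain ⟨a1, ha1⟩ := hw1
  obtain ⟨a2, ha2⟩ := hw2
  have ha1d : a1.natDegree ≤ m - w.natDegree := by
    have ha1ne : a1 ≠ 0 := by rintro rfl; rw [mul_zero] at ha1; exact hgne ha1
    have h4 : G.natDegree = w.natDegree + a1.natDegree := by
      rw [ha1, Polynomial.natDegree_mul hwne ha1ne]
    rw [hgd] at h4
    omega
  have ha2d : a2.natDegree ≤ 2 * (d - m) - w.natDegree := by
    have ha2ne : a2 ≠ 0 := by rintro rfl; rw [mul_zero] at ha2; exact hqφne ha2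
    have h4 : Q.natDegree = w.natDegree + a2.natDegree := by
      rw [ha2, Polynomial.natDegree_mul hwne ha2ne]
    have h5 := phi_natDegree_le hqhomog
    rw [← hQdef] at h5
    omega
  have hgfact : g = homToDeg w.natDegree w * homToDeg (m - w.natDegree) a1 :=
    lift_factor hg ha1 le_rfl ha1d (by omega)
  have hqfact : q = homToDeg w.natDegree w * homToDeg (2 * (d - m) - w.natDegree) a2 :=
    lift_factor hqhomog ha2 le_rfl ha2d (by omega)
  have hwunit : IsUnit w := by
    have h5 : IsUnit (homToDeg w.natDegree w) := hcop _ ⟨_, hgfact⟩ ⟨_, hqfact⟩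
    have h6 := h5.map phi
    rwa [phi_homToDeg le_rfl] at h6
  have hcoprime : IsCoprime G Q := EuclideanDomain.gcd_isUnit_iff.mp hwunit
  obtain ⟨A, B, hAB⟩ := hcoprime
  set G1 := G * Polynomial.C (G.leadingCoeff)⁻¹ with hG1
  have hG1monic : G1.Monic := Polynomial.monic_mul_leadingCoeff_inv hgne
  have hG1deg : G1.natDegree = m := by
    rw [hG1]
    rw [Polynomial.natDegree_eq_of_degree_eq (Polynomial.degree_mul_leadingCoeff_inv G hgne)]
    exact hgd
  set I := Ideal.span {G} with hI
  set π := Ideal.Quotient.mk I with hπ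
  have hπG : π G = 0 := by
    rw [hπ, Ideal.Quotient.eq_zero_iff_mem, hI]
    exact Ideal.mem_span_singleton_self G
  have hπG1 : π G1 = 0 := by rw [hG1, map_mul, hπG, zero_mul]
  set f : Fin Np × Fin Nq → Polynomial ℝ := fun ij => phi (t ij.1) * phi (u ij.2) * B with hf
  set sh : Fin Np × Fin Nq → Polynomial ℝ := fun ij => f ij %ₘ G1 with hsh
  have hshdeg : ∀ ij, (sh ij).natDegree ≤ m :=
    fun ij => hG1deg ▸ Polynomial.natDegree_modByMonic_le _ hG1monic
  have hπsh : ∀ ij, π (sh ij) = π (f ij) := by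
    intro ij
    conv_rhs => rw [← Polynomial.modByMonic_add_div (f ij) G1]
    rw [map_add, map_mul, hπG1, zero_mul, add_zero]
  set S : Fin Np × Fin Nq → MvPolynomial (Fin 2) ℝ := fun ij => homToDeg m (sh ij) with hS
  have hShom : ∀ ij, (S ij).IsHomogeneous m := fun ij => homToDeg_isHomogeneous _ _
  set σp := ∑ ij : Fin Np × Fin Nq, S ij ^ 2 with hσ
  have hσhom : σp.IsHomogeneous (2 * m) := sq_sum_homog hShom
  have hφσ : phi σp = ∑ ij : Fin Np × Fin Nq, (sh ij) ^ 2 := by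
    rw [hσ, map_sum]
    exact Finset.sum_congr rfl fun ij _ => by rw [map_pow, hS, phi_homToDeg (hshdeg ij)]
  have hsumf : ∑ ij : Fin Np × Fin Nq, f ij ^ 2 = phi p * Q * B ^ 2 := by
    rw [hpdef, hQdef, hqdef, map_sum, map_sum, Fintype.sum_prod_type]
    simp only [hf, Finset.sum_mul, Finset.mul_sum, mul_pow, map_pow]
    rw [Finset.sum_comm]
  have hBQ : π B * π Q = 1 := by
    have h7 := congrArg π hAB
    rw [map_add, map_mul, map_mul, hπG, mul_zero, zero_add, map_one] at h7
    exact h7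
  have hπσq : π (phi σp * Q) = π (phi p) := by
    have e1 : π (phi σp) = π (phi p * Q * B ^ 2) := by
      rw [hφσ, map_sum]
      have hcong : ∀ ij ∈ (Finset.univ : Finset (Fin Np × Fin Nq)),
          π (sh ij ^ 2) = π (f ij ^ 2) := by
        intro ij _
        rw [map_pow, hπsh ij, ← map_pow]
      rw [Finset.sum_congr rfl hcong, ← map_sum, hsumf]
    rw [map_mul, e1]
    have e2 : π (phi p * Q * B ^ 2) * π Q = π (phi p) * (π B * π Q) ^ 2 := by
      rw [map_mul, map_mul, map_pow]
      ring
    rw [e2, hBQ, one_pow, mul_one]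
  have hdvd : G ∣ phi p - phi σp * Q := by
    rw [← Ideal.mem_span_singleton, ← hI, ← Ideal.Quotient.eq_zero_iff_mem, ← hπ, map_sub,
      hπσq, sub_self]
  obtain ⟨hquo, hh⟩ := hdvd
  have hhdeg : hquo.natDegree ≤ 2 * d - m := by
    by_cases hh0 : hquo = 0
    · simp [hh0]
    · have h1 : (phi p - phi σp * Q).natDegree ≤ 2 * d := by
        apply le_trans (Polynomial.natDegree_sub_le _ _)
        apply max_le (phi_natDegree_le hphomog)
        apply le_trans Polynomial.natDegree_mul_le
        have h8 := phi_natDegree_le hσhom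
        have h9 := phi_natDegree_le hqhomog
        rw [← hQdef] at h9
        omega
      rw [hh, Polynomial.natDegree_mul hgne hh0, hgd] at h1
      omega
  set τ := homToDeg (2 * d - m) hquo with hτ
  have hτhom := homToDeg_isHomogeneous (2 * d - m) hquo
  have hfinal : p = σp * q + τ * g := by
    have hhomog : (p - (σp * q + τ * g)).IsHomogeneous (2 * d) := by
      apply hphomog.sub
      have e3 : (σp * q).IsHomogeneous (2 * d) := by
        have := hσhom.mul hqhomog
        rwa [show 2 * m + 2 * (d - m) = 2 * d by omega] at this
      have e4 : (τ * g).IsHomogeneous (2 * d) := by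
        have := hτhom.mul hg
        rwa [show 2 * d - m + m = 2 * d by omega] at this
      exact e3.add e4
    have h0 : phi (p - (σp * q + τ * g)) = 0 := by
      rw [map_sub, map_add, map_mul, map_mul, hτ, phi_homToDeg hhdeg]
      rw [← hQdef, ← hGdef]
      linear_combination hh
    have := phi_eq_zero hhomog h0
    rwa [sub_eq_zero] at this
  refine ⟨Np * Nq, fun k0 => S (finProdFinEquiv.symm k0), τ, fun k0 => hShom _, hτhom, ?_⟩
  rw [hfinal]
  congr 2
  rw [hσ]
  exact (Equiv.sum_comp finProdFinEquiv.symm fun ij => S ij ^ 2).symm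

noncomputable def shearMap (c : ℝ) : MvPolynomial (Fin 2) ℝ →ₐ[ℝ] MvPolynomial (Fin 2) ℝ :=
  MvPolynomial.aeval ![MvPolynomial.X 0, MvPolynomial.X 1 + MvPolynomial.C c * MvPolynomial.X 0]

lemma shearMap_comp (c : ℝ) :
    (shearMap c).comp (shearMap (-c)) = AlgHom.id ℝ (MvPolynomial (Fin 2) ℝ) := by
  apply MvPolynomial.algHom_ext
  intro i
  fin_cases i <;> simp [shearMap]

noncomputable def shear (c : ℝ) : MvPolynomial (Fin 2) ℝ ≃ₐ[ℝ] MvPolynomial (Fin 2) ℝ :=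
  AlgEquiv.ofAlgHom (shearMap c) (shearMap (-c)) (shearMap_comp c)
    (by have := shearMap_comp (-c); rwa [neg_neg] at this)

lemma shear_apply (c : ℝ) (F : MvPolynomial (Fin 2) ℝ) : shear c F = shearMap c F := rfl

lemma shear_symm_apply (c : ℝ) (F : MvPolynomial (Fin 2) ℝ) :
    (shear c).symm F = shearMap (-c) F := rfl


lemma shearMap_homog (c : ℝ) {F : MvPolynomial (Fin 2) ℝ} {n : ℕ} (h : F.IsHomogeneous n) :
    (shearMap c F).IsHomogeneous n := by
  have := h.aeval (![MvPolynomial.X 0, MvPolynomial.X 1 + MvPolynomial.C c * MvPolynomial.X 0] :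
      Fin 2 → MvPolynomial (Fin 2) ℝ)
    (fun i => by
      fin_cases i
      · exact MvPolynomial.isHomogeneous_X _ _
      · exact (MvPolynomial.isHomogeneous_X _ _).add (MvPolynomial.isHomogeneous_C_mul_X c 0))
  rw [one_mul] at this
  rw [show (shearMap c) F = (MvPolynomial.aeval
    ![MvPolynomial.X 0, MvPolynomial.X 1 + MvPolynomial.C c * MvPolynomial.X 0]) F from rfl]
  exact this

lemma shear_homog (c : ℝ) {F : MvPolynomial (Fin 2) ℝ} {n : ℕ} (h : F.IsHomogeneous n) :
    (shear c F).IsHomogeneous n := shearMap_homog c h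

lemma shear_symm_homog (c : ℝ) {F : MvPolynomial (Fin 2) ℝ} {n : ℕ} (h : F.IsHomogeneous n) :
    ((shear c).symm F).IsHomogeneous n := shearMap_homog (-c) h

lemma aeval10_eq_coeff {F : MvPolynomial (Fin 2) ℝ} {D : ℕ} (hF : F.IsHomogeneous D) :
    (MvPolynomial.aeval (R := ℝ) ![(1 : ℝ), 0]) F
      = MvPolynomial.coeff (Finsupp.single 0 D) F := by
  classical
  rw [MvPolynomial.aeval_def, MvPolynomial.eval₂_eq' (algebraMap ℝ ℝ) _ F]
  set u₀ : Fin 2 →₀ ℕ := Finsupp.single 0 D with hu₀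
  rw [Finset.sum_eq_single u₀]
  · rw [Fin.prod_univ_two]
    have h0 : u₀ 0 = D := by simp [hu₀]
    have h1 : u₀ 1 = 0 := by simp [hu₀, Finsupp.single_apply]
    rw [h0, h1]
    simp
  · intro d hd hne
    have hdeg : d 0 + d 1 = D := by
      have := hF (MvPolynomial.mem_support_iff.mp hd)
      rw [show (Finsupp.weight 1 : (Fin 2 →₀ ℕ) →+ ℕ) = Finsupp.degree from Finsupp.degree_eq_weight_one.symm, deg2_s7] at this
      exact this
    have hd1 : d 1 ≠ 0 := by
      intro h1
      apply hne
      ext i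
      refine Fin.cases ?_ ?_ i
      · simp [hu₀, Finsupp.single_apply]
        omega
      · intro j
        have hj : j = 0 := Subsingleton.elim _ _
        subst hj
        show d 1 = u₀ 1
        simp [hu₀, Finsupp.single_apply, h1]
    rw [Fin.prod_univ_two]
    simp [zero_pow hd1]
  · intro h
    rw [MvPolynomial.notMem_support_iff.mp h]
    simp

lemma homog_zero_eq_C {q : MvPolynomial (Fin 2) ℝ} (h : q.IsHomogeneous 0) :
    q = MvPolynomial.C (MvPolynomial.coeff 0 q) := by
  ext u
  rcases eq_or_ne u 0 with rfl | hu
  · simp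
  · rw [MvPolynomial.coeff_C, if_neg (fun h' => hu h'.symm)]
    apply h.coeff_eq_zero
    rw [Ne, Finsupp.degree_eq_zero_iff]
    exact hu

theorem sos_multiplier_mod_forms'
    (d m : ℕ) (hm : m ≤ d)
    (g q p : MvPolynomial (Fin 2) ℝ)
    (hg : g.IsHomogeneous m)
    (hq : ∃ (N : ℕ) (t : Fin N → MvPolynomial (Fin 2) ℝ),
      (∀ i, (t i).IsHomogeneous (d - m)) ∧ q = ∑ i, (t i) ^ 2)
    (hp : ∃ (N : ℕ) (t : Fin N → MvPolynomial (Fin 2) ℝ),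
      (∀ i, (t i).IsHomogeneous d) ∧ p = ∑ i, (t i) ^ 2)
    (hcop : ∀ w : MvPolynomial (Fin 2) ℝ, w ∣ g → w ∣ q → IsUnit w) :
    ∃ (N : ℕ) (s : Fin N → MvPolynomial (Fin 2) ℝ) (t : MvPolynomial (Fin 2) ℝ),
      (∀ i, (s i).IsHomogeneous m) ∧ t.IsHomogeneous (2 * d - m) ∧
      p = (∑ i, (s i) ^ 2) * q + t * g := by
  classical
  rcases eq_or_ne g 0 with rfl | hgne0
  · -- g = 0
    obtain ⟨Nq, u, hu, hqdef⟩ := hq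
    obtain ⟨Np, t, ht, hpdef⟩ := hp
    have hqunit : IsUnit q := hcop q (dvd_zero q) dvd_rfl
    have hqne : q ≠ 0 := hqunit.ne_zero
    have hqhomog : q.IsHomogeneous (2 * (d - m)) := hqdef ▸ sq_sum_homog hu
    have hdm : d = m := by
      by_contra hne
      have hD : 0 < 2 * (d - m) := by omega
      have h2 : IsUnit (phi q) := hqunit.map phi
      have h3 := Polynomial.natDegree_eq_zero_of_isUnit h2
      have h4 : (MvPolynomial.aeval (R := ℝ) ![(1 : ℝ), 0]) q = 0 := by
        rw [aeval10_eq_coeff hqhomog]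
        have h5 : (phi q).coeff (2 * (d - m)) =
            MvPolynomial.coeff (Finsupp.single 0 (2 * (d - m))) q := by
          rw [phi_coeff hqhomog]
          simp
        rw [← h5, Polynomial.coeff_eq_zero_of_natDegree_lt (by omega)]
      have h6 : IsUnit ((MvPolynomial.aeval (R := ℝ) ![(1 : ℝ), 0]) q) :=
        hqunit.map (MvPolynomial.aeval ![(1 : ℝ), 0])
      rw [h4] at h6
      exact h6.ne_zero rfl
    subst hdm
    -- q is a positive constant
    have hq0 : q.IsHomogeneous 0 := by
      have := hqhomog
      rwa [show 2 * (d - d) = 0 by omega] at this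
    have hqC : q = MvPolynomial.C (MvPolynomial.coeff 0 q) := homog_zero_eq_C hq0
    set cq := MvPolynomial.coeff 0 q with hcq
    have hcqne : cq ≠ 0 := by
      intro h
      rw [h, map_zero] at hqC
      exact hqne hqC
    have hcqpos : 0 < cq := by
      have huC : ∀ j, u j = MvPolynomial.C (MvPolynomial.coeff 0 (u j)) := by
        intro j
        apply homog_zero_eq_C
        have := hu j
        rwa [show d - d = 0 by omega] at this
      have : q = MvPolynomial.C (∑ j, (MvPolynomial.coeff 0 (u j)) ^ 2) := by
        rw [hqdef, map_sum]
        exact Finset.sum_congr rfl fun j _ => by rw [map_pow, ← huC j]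
      have hcq2 : cq = ∑ j, (MvPolynomial.coeff 0 (u j)) ^ 2 := by
        rw [hcq]
        conv_lhs => rw [this]
        rw [MvPolynomial.coeff_zero_C]
      rcases lt_or_eq_of_le (Finset.sum_nonneg fun j _ => sq_nonneg
        (MvPolynomial.coeff 0 (u j)) : 0 ≤ ∑ j, (MvPolynomial.coeff 0 (u j)) ^ 2) with h | h
      · rw [hcq2]; exact h
      · exact absurd (hcq2.trans h.symm) hcqne
    set r := Real.sqrt cq⁻¹ with hr
    have hr2 : r ^ 2 = cq⁻¹ := Real.sq_sqrt (by positivity)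
    refine ⟨Np, fun i => t i * MvPolynomial.C r, 0, fun i => ?_, MvPolynomial.isHomogeneous_zero _ _ _, ?_⟩
    · have := (ht i).mul (MvPolynomial.isHomogeneous_C (Fin 2) r)
      rwa [add_zero] at this
    · rw [zero_mul, add_zero, hpdef]
      conv_rhs => rw [hqC]
      rw [Finset.sum_mul]
      apply Finset.sum_congr rfl
      intro i _
      rw [mul_pow, ← map_pow, hr2, mul_assoc, ← map_mul, inv_mul_cancel₀ hcqne, map_one, mul_one]
  · -- g ≠ 0
    set P : Polynomial ℝ := MvPolynomial.aeval (R := ℝ) ![(1 : Polynomial ℝ), Polynomial.X] g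
      with hP
    have hPg : P = phi (MvPolynomial.rename (Equiv.swap 0 1) g) := by
      have hfn : ((![Polynomial.X, 1] : Fin 2 → Polynomial ℝ) ∘ (Equiv.swap (0 : Fin 2) 1))
          = ![1, Polynomial.X] := by
        funext i
        fin_cases i <;> simp
      rw [hP, show phi (MvPolynomial.rename (Equiv.swap (0 : Fin 2) 1) g)
        = MvPolynomial.aeval ((![Polynomial.X, 1] : Fin 2 → Polynomial ℝ)
            ∘ (Equiv.swap (0 : Fin 2) 1)) g from MvPolynomial.aeval_rename _ _ _, hfn]
    have hren : (MvPolynomial.rename (⇑(Equiv.swap (0 : Fin 2) 1)) g).IsHomogeneous m :=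
      hg.rename_isHomogeneous
    have hPne : P ≠ 0 := by
      intro h
      have h2 := phi_eq_zero hren (hPg ▸ h)
      exact hgne0 ((MvPolynomial.rename_injective _ (Equiv.swap (0 : Fin 2) 1).injective)
        (by rw [h2, map_zero]))
    obtain ⟨c, hc⟩ : ∃ c, P.eval c ≠ 0 := by
      by_contra h
      push_neg at h
      exact hPne (Polynomial.zero_of_eval_zero P h)
    have hkey : MvPolynomial.coeff (Finsupp.single 0 m) (shear c g) ≠ 0 := by
      have h2 : (MvPolynomial.aeval (R := ℝ) ![(1:ℝ), 0]).comp (shearMap c) =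
          MvPolynomial.aeval ![(1:ℝ), c] := by
        apply MvPolynomial.algHom_ext
        intro i
        fin_cases i <;> simp [shearMap]
      have h3 : (Polynomial.aeval (R := ℝ) c).comp
          (MvPolynomial.aeval (R := ℝ) ![(1 : Polynomial ℝ), Polynomial.X]) =
          MvPolynomial.aeval ![(1:ℝ), c] := by
        apply MvPolynomial.algHom_ext
        intro i
        fin_cases i <;> simp
      have h1 : (MvPolynomial.aeval (R := ℝ) ![(1:ℝ), 0]) (shear c g) = P.eval c := by
        rw [shear_apply]
        have e1 : (MvPolynomial.aeval (R := ℝ) ![(1:ℝ), 0]) (shearMap c g)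
            = (MvPolynomial.aeval ![(1:ℝ), c]) g := by
          rw [← h2]; rfl
        have e2 : (Polynomial.aeval (R := ℝ) c) P = (MvPolynomial.aeval ![(1:ℝ), c]) g := by
          rw [hP, ← h3]; rfl
        rw [e1, ← e2, ← Polynomial.coe_aeval_eq_eval]
      have h4 := aeval10_eq_coeff (shear_homog c hg)
      rw [h4] at h1
      rw [h1]
      exact hc
    obtain ⟨Nq, u, hu, hqdef⟩ := hq
    obtain ⟨Np, t, ht, hpdef⟩ := hp
    obtain ⟨N, s, τ, hs, hτ, heq⟩ := sos_aux d m hm (shear c g) (shear c q) (shear c p)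
      (shear_homog c hg)
      ⟨Nq, fun j => shear c (u j), fun j => shear_homog c (hu j),
        by rw [hqdef, map_sum]; exact Finset.sum_congr rfl fun j _ => (map_pow _ _ _)⟩
      ⟨Np, fun i => shear c (t i), fun i => shear_homog c (ht i),
        by rw [hpdef, map_sum]; exact Finset.sum_congr rfl fun i _ => (map_pow _ _ _)⟩
      (fun w hw1 hw2 => by
        have h1 : (shear c).symm w ∣ g := by
          have := map_dvd (shear c).symm hw1
          rwa [AlgEquiv.symm_apply_apply] at this
        have h2 : (shear c).symm w ∣ q := by
          have := map_dvd (shear c).symm hw2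
          rwa [AlgEquiv.symm_apply_apply] at this
        have h3 := (hcop _ h1 h2).map (shear c)
        rwa [AlgEquiv.apply_symm_apply] at h3)
      hkey
    refine ⟨N, fun i => (shear c).symm (s i), (shear c).symm τ,
      fun i => shear_symm_homog c (hs i), shear_symm_homog c hτ, ?_⟩
    have hfin := congrArg (shear c).symm heq
    rw [AlgEquiv.symm_apply_apply, map_add, map_mul, map_mul, AlgEquiv.symm_apply_apply,
      AlgEquiv.symm_apply_apply, map_sum] at hfin
    simp only [map_pow] at hfin
    exact hfin

/-- Projective version: given binary forms `g` of degree `m`, a sum of squares `q` of binary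
forms of degree `d - m`, and a sum of squares `p` of binary forms of degree `d`, if `g` and
`q` are coprime, then `p = (∑ sᵢ²) q + t g` with `sᵢ` of degree `m` and `t` of degree `2d - m`. -/
theorem sos_multiplier_mod_forms
    (d m : ℕ) (hm : m ≤ d)
    (g q p : MvPolynomial (Fin 2) ℝ)
    (hg : g.IsHomogeneous m)
    (hq : ∃ (N : ℕ) (t : Fin N → MvPolynomial (Fin 2) ℝ),
      (∀ i, (t i).IsHomogeneous (d - m)) ∧ q = ∑ i, (t i) ^ 2)
    (hp : ∃ (N : ℕ) (t : Fin N → MvPolynomial (Fin 2) ℝ),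
      (∀ i, (t i).IsHomogeneous d) ∧ p = ∑ i, (t i) ^ 2)
    (hcop : ∀ w : MvPolynomial (Fin 2) ℝ, w ∣ g → w ∣ q → IsUnit w) :
    ∃ (N : ℕ) (s : Fin N → MvPolynomial (Fin 2) ℝ) (t : MvPolynomial (Fin 2) ℝ),
      (∀ i, (s i).IsHomogeneous m) ∧ t.IsHomogeneous (2 * d - m) ∧
      p = (∑ i, (s i) ^ 2) * q + t * g :=
  sos_multiplier_mod_forms' d m hm g q p hg hq hp hcop
end

section
/- Let ⟪·,·⟫ be a symmetric bilinear form on MvPolynomial (Fin 2) ℝ that is positive definite on the subspace of binary forms of degree 2d. Let u₁, u₂ be binary forms of degree d and let p be a binary form of degree 2d that is a sum of squares of binary forms of degree d. Suppose the gradient condition holds: ⟪u₁v₁ + u₂v₂, u₁² + u₂² − p⟫ = 0 for all binary forms v₁, v₂ of degree d. If there exist binary forms v₁', v₂' of degree d with u₁v₁' + u₂v₂' = p, then u₁² + u₂² = p. -/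
open MvPolynomial

/-- First-order sufficient condition: if the gradient vanishes and `p` lies in the image of
the map `(v₁, v₂) ↦ u₁ v₁ + u₂ v₂`, then `u₁² + u₂² = p`. -/
theorem first_order_sufficient
    (d : ℕ)
    (B : MvPolynomial (Fin 2) ℝ →ₗ[ℝ] MvPolynomial (Fin 2) ℝ →ₗ[ℝ] ℝ)
    (hsymm : ∀ a b : MvPolynomial (Fin 2) ℝ, B a b = B b a)
    (hpos : ∀ q : MvPolynomial (Fin 2) ℝ, q.IsHomogeneous (2 * d) → q ≠ 0 → 0 < B q q)
    (u₁ u₂ p : MvPolynomial (Fin 2) ℝ)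
    (hu₁ : u₁.IsHomogeneous d) (hu₂ : u₂.IsHomogeneous d)
    (hp : p.IsHomogeneous (2 * d))
    (hpsos : ∃ (N : ℕ) (t : Fin N → MvPolynomial (Fin 2) ℝ),
      (∀ i, (t i).IsHomogeneous d) ∧ p = ∑ i, (t i) ^ 2)
    (hgrad : ∀ v₁ v₂ : MvPolynomial (Fin 2) ℝ, v₁.IsHomogeneous d → v₂.IsHomogeneous d →
      B (u₁ * v₁ + u₂ * v₂) (u₁ ^ 2 + u₂ ^ 2 - p) = 0)
    (hmem : ∃ v₁' v₂' : MvPolynomial (Fin 2) ℝ,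
      v₁'.IsHomogeneous d ∧ v₂'.IsHomogeneous d ∧ u₁ * v₁' + u₂ * v₂' = p) :
    u₁ ^ 2 + u₂ ^ 2 = p := by
  obtain ⟨v₁', v₂', hv₁', hv₂', hvp⟩ := hmem
  set g := u₁ ^ 2 + u₂ ^ 2 - p with hg
  have h1 : B (u₁ ^ 2 + u₂ ^ 2) g = 0 := by
    have := hgrad u₁ u₂ hu₁ hu₂
    simpa [sq] using this
  have h2 : B p g = 0 := by
    have := hgrad v₁' v₂' hv₁' hv₂'
    rwa [hvp] at this
  have hgg : B g g = 0 := by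
    have : B g g = B (u₁ ^ 2 + u₂ ^ 2) g - B p g := by
      simp only [hg, map_sub, LinearMap.sub_apply]
      ring
    rw [this, h1, h2, sub_zero]
  have hghom : g.IsHomogeneous (2 * d) := by
    have h1 : (u₁ ^ 2).IsHomogeneous (2 * d) := by
      simpa [mul_comm] using hu₁.pow 2
    have h2 : (u₂ ^ 2).IsHomogeneous (2 * d) := by
      simpa [mul_comm] using hu₂.pow 2
    exact (h1.add h2).sub hp
  by_contra hne
  have hgne : g ≠ 0 := fun h => hne (sub_eq_zero.mp h)
  exact absurd hgg (ne_of_gt (hpos g hghom hgne))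
end

section
/- Let ⟪·,·⟫ be a symmetric bilinear form on MvPolynomial (Fin 2) ℝ that is positive definite on the subspace of binary forms of degree 2d. Let u₁, u₂ be coprime binary forms of degree d and let p be a binary form of degree 2d. If the gradient condition holds, namely ⟪u₁v₁ + u₂v₂, u₁² + u₂² − p⟫ = 0 for all binary forms v₁, v₂ of degree d, then u₁² + u₂² = p. -/
open MvPolynomial Module

noncomputable section AuxFOCP

private lemma fin2_degree (m : Fin 2 →₀ ℕ) : m.degree = m 0 + m 1 := by
  rw [Finsupp.degree_apply, Finset.sum_subset (Finset.subset_univ _)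
    (by intro x _ hx; simpa using Finsupp.notMem_support_iff.mp hx), Fin.sum_univ_two]

private lemma fin2_eq_single (m : Fin 2 →₀ ℕ) :
    m = Finsupp.single 0 (m 0) + Finsupp.single 1 (m 1) := by
  ext x
  fin_cases x <;> simp [Finsupp.single_apply]

/-- The coefficient map on binary forms of degree `n`. -/
private def homCoeffMap (n : ℕ) :
    (homogeneousSubmodule (Fin 2) ℝ n) →ₗ[ℝ] (Fin (n + 1) → ℝ) :=
  LinearMap.pi fun i =>
    (lcoeff ℝ (Finsupp.single 0 (i : ℕ) + Finsupp.single 1 (n - (i : ℕ)))) ∘ₗ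
      (homogeneousSubmodule (Fin 2) ℝ n).subtype

private lemma homCoeffMap_bijective (n : ℕ) : Function.Bijective (homCoeffMap n) := by
  constructor
  · rw [← LinearMap.ker_eq_bot, eq_bot_iff]
    rintro ⟨q, hq⟩ hmem
    have hq' : q.IsHomogeneous n := (mem_homogeneousSubmodule _ _).mp hq
    have hc : ∀ i : Fin (n + 1),
        coeff (Finsupp.single 0 (i : ℕ) + Finsupp.single 1 (n - (i : ℕ))) q = 0 := by
      intro i
      exact congrFun (LinearMap.mem_ker.mp hmem) i
    have : q = 0 := by
      ext m
      by_cases hm : m.degree = n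
      · have hle : m 0 ≤ n := by
          have := fin2_degree m; omega
        have h2 : coeff (Finsupp.single (0 : Fin 2) (m 0) + Finsupp.single 1 (n - m 0)) q = 0 :=
          hc ⟨m 0, by omega⟩
        have hmeq : Finsupp.single (0 : Fin 2) (m 0) + Finsupp.single 1 (n - m 0) = m := by
          have h1 : n - m 0 = m 1 := by have := fin2_degree m; omega
          rw [h1]; exact (fin2_eq_single m).symm
        rw [hmeq] at h2
        simp [h2]
      · simp [hq'.coeff_eq_zero hm]
    simp [this]
  · intro v
    refine ⟨⟨∑ i : Fin (n + 1),
        monomial (Finsupp.single 0 (i : ℕ) + Finsupp.single 1 (n - (i : ℕ))) (v i), ?_⟩, ?_⟩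
    · rw [mem_homogeneousSubmodule]
      apply IsHomogeneous.sum
      intro i _
      apply isHomogeneous_monomial
      rw [fin2_degree]
      have : (i : ℕ) ≤ n := by omega
      simp [Finsupp.single_apply]
      omega
    · funext j
      simp only [homCoeffMap, LinearMap.pi_apply, LinearMap.comp_apply, Submodule.coe_subtype,
        lcoeff_apply, coeff_sum, coeff_monomial]
      rw [Finset.sum_eq_single j]
      · simp
      · intro b _ hbj
        rw [if_neg]
        intro h
        apply hbj
        have := congrArg (fun f : Fin 2 →₀ ℕ => f 0) h
        simp [Finsupp.single_apply] at this
        exact Fin.ext this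
      · intro h; exact absurd (Finset.mem_univ j) h

/-- Binary forms of degree `n` are linearly equivalent to `ℝ^{n+1}`. -/
private def homEquiv (n : ℕ) :
    (homogeneousSubmodule (Fin 2) ℝ n) ≃ₗ[ℝ] (Fin (n + 1) → ℝ) :=
  LinearEquiv.ofBijective (homCoeffMap n) (homCoeffMap_bijective n)

private instance homFD (n : ℕ) : FiniteDimensional ℝ (homogeneousSubmodule (Fin 2) ℝ n) :=
  Module.Finite.equiv (homEquiv n).symm

private lemma finrank_hom (n : ℕ) :
    finrank ℝ (homogeneousSubmodule (Fin 2) ℝ n) = n + 1 := by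
  rw [(homEquiv n).finrank_eq, finrank_fin_fun]

/-- If `u ≠ 0` is homogeneous of degree `d` and `u * c` is also homogeneous of degree `d`,
then `c` is constant. -/
private lemma eq_C_of_mul {d : ℕ} {u c : MvPolynomial (Fin 2) ℝ}
    (hu : u.IsHomogeneous d) (hu0 : u ≠ 0) (h : (u * c).IsHomogeneous d) :
    ∃ r : ℝ, c = C r := by
  have key : ∀ i : ℕ, 0 < i → homogeneousComponent i c = 0 := by
    intro i hi
    have hz : homogeneousComponent (d + i) (u * c) = 0 := by
      rw [homogeneousComponent_of_mem ((mem_homogeneousSubmodule _ _).mpr h),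
        if_neg (by omega)]
    have hcomp : homogeneousComponent (d + i) (u * c) = u * homogeneousComponent i c := by
      conv_lhs => rw [← sum_homogeneousComponent c, Finset.mul_sum, map_sum]
      by_cases hiN : i ∈ Finset.range (c.totalDegree + 1)
      · rw [Finset.sum_eq_single i]
        · rw [homogeneousComponent_of_mem ((mem_homogeneousSubmodule _ _).mpr
            (hu.mul (homogeneousComponent_isHomogeneous i c))), if_pos rfl]
        · intro j _ hji
          rw [homogeneousComponent_of_mem ((mem_homogeneousSubmodule _ _).mpr
            (hu.mul (homogeneousComponent_isHomogeneous j c))), if_neg (by omega)]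
        · intro habs; exact absurd hiN habs
      · have hc0 : homogeneousComponent i c = 0 := by
          apply homogeneousComponent_eq_zero
          simp only [Finset.mem_range, not_lt] at hiN
          omega
        rw [hc0, mul_zero]
        apply Finset.sum_eq_zero
        intro j hj
        simp only [Finset.mem_range, not_lt] at hiN
        simp only [Finset.mem_range] at hj
        rw [homogeneousComponent_of_mem ((mem_homogeneousSubmodule _ _).mpr
          (hu.mul (homogeneousComponent_isHomogeneous j c))), if_neg (by omega)]
    have := hcomp.symm.trans hz
    rcases mul_eq_zero.mp this with h' | h'
    · exact absurd h' hu0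
    · exact h'
  refine ⟨coeff 0 c, ?_⟩
  conv_lhs => rw [← sum_homogeneousComponent c]
  rw [Finset.sum_eq_single 0]
  · exact homogeneousComponent_zero c
  · intro j _ hj
    exact key j (Nat.pos_of_ne_zero hj)
  · intro h0
    simp at h0

/-- The kernel description for the coprime case. -/
private lemma kernel_aux {d : ℕ} {u₁ u₂ v₁ v₂ : MvPolynomial (Fin 2) ℝ}
    (hu₂ : u₂.IsHomogeneous d)
    (hcop : ∀ w : MvPolynomial (Fin 2) ℝ, w ∣ u₁ → w ∣ u₂ → IsUnit w)
    (hu₂0 : u₂ ≠ 0) (hv₁ : v₁.IsHomogeneous d)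
    (h : u₁ * v₁ + u₂ * v₂ = 0) :
    ∃ r : ℝ, v₁ = C r * u₂ ∧ v₂ = -(C r * u₁) := by
  have hrel : IsRelPrime u₂ u₁ := fun w h2 h1 => hcop w h1 h2
  have hdvd : u₂ ∣ v₁ :=
    hrel.dvd_of_dvd_mul_left ⟨-v₂, by linear_combination h⟩
  obtain ⟨c, hc⟩ := hdvd
  obtain ⟨r, hr⟩ := eq_C_of_mul hu₂ hu₂0 (hc ▸ hv₁)
  subst hr
  refine ⟨r, by rw [hc, mul_comm], ?_⟩
  rw [hc] at h
  have h2 : u₂ * (C r * u₁ + v₂) = 0 := by linear_combination h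
  have h3 := (mul_eq_zero.mp h2).resolve_left hu₂0
  linear_combination h3

end AuxFOCP

set_option synthInstance.maxHeartbeats 1000000 in
set_option maxHeartbeats 1000000 in
/-- Coprime case: if `u₁, u₂` are coprime binary forms of degree `d` and the gradient of
`f_p` vanishes at `(u₁, u₂)`, then `u₁² + u₂² = p`. -/
theorem coprime_case_no_spurious_focp
    (d : ℕ)
    (B : MvPolynomial (Fin 2) ℝ →ₗ[ℝ] MvPolynomial (Fin 2) ℝ →ₗ[ℝ] ℝ)
    (hsymm : ∀ a b : MvPolynomial (Fin 2) ℝ, B a b = B b a)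
    (hpos : ∀ q : MvPolynomial (Fin 2) ℝ, q.IsHomogeneous (2 * d) → q ≠ 0 → 0 < B q q)
    (u₁ u₂ p : MvPolynomial (Fin 2) ℝ)
    (hu₁ : u₁.IsHomogeneous d) (hu₂ : u₂.IsHomogeneous d)
    (hcop : ∀ w : MvPolynomial (Fin 2) ℝ, w ∣ u₁ → w ∣ u₂ → IsUnit w)
    (hp : p.IsHomogeneous (2 * d))
    (hgrad : ∀ v₁ v₂ : MvPolynomial (Fin 2) ℝ, v₁.IsHomogeneous d → v₂.IsHomogeneous d →
      B (u₁ * v₁ + u₂ * v₂) (u₁ ^ 2 + u₂ ^ 2 - p) = 0) :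
    u₁ ^ 2 + u₂ ^ 2 = p := by
  classical
  set g : MvPolynomial (Fin 2) ℝ := u₁ ^ 2 + u₂ ^ 2 - p with hg_def
  have hg : g.IsHomogeneous (2 * d) := by
    apply IsHomogeneous.sub _ hp
    rw [mul_comm 2 d]
    exact (hu₁.pow 2).add (hu₂.pow 2)
  have hne : ¬(u₁ = 0 ∧ u₂ = 0) := by
    rintro ⟨rfl, rfl⟩
    have := (hcop (X 0) (dvd_zero _) (dvd_zero _)).map (eval (fun _ => (0 : ℝ)))
    simp at this
  set V := homogeneousSubmodule (Fin 2) ℝ d with hV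
  set W := homogeneousSubmodule (Fin 2) ℝ (2 * d) with hW
  haveI : FiniteDimensional ℝ V := homFD d
  haveI : FiniteDimensional ℝ W := homFD (2 * d)
  let L : (V × V) →ₗ[ℝ] W :=
    { toFun := fun v => ⟨u₁ * v.1.1 + u₂ * v.2.1, by
        rw [hW, mem_homogeneousSubmodule, two_mul]
        exact (hu₁.mul ((mem_homogeneousSubmodule _ _).mp v.1.2)).add
          (hu₂.mul ((mem_homogeneousSubmodule _ _).mp v.2.2))⟩
      map_add' := fun v w => Subtype.ext <| by
        simp only [Prod.fst_add, Prod.snd_add, Submodule.coe_add]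
        ring
      map_smul' := fun c v => Subtype.ext <| by
        simp only [Prod.smul_fst, Prod.smul_snd, SetLike.val_smul, RingHom.id_apply,
          smul_eq_C_mul]
        ring }
  have hLker : LinearMap.ker L ≤
      Submodule.span ℝ {((⟨u₂, hu₂⟩, ⟨-u₁, hu₁.neg⟩) : V × V)} := by
    rintro ⟨⟨v₁, hv₁⟩, ⟨v₂, hv₂⟩⟩ hmem
    have heq : u₁ * v₁ + u₂ * v₂ = 0 := Subtype.ext_iff.mp (LinearMap.mem_ker.mp hmem)
    rw [Submodule.mem_span_singleton]
    by_cases h2 : u₂ = 0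
    · have h1 : u₁ ≠ 0 := fun h1 => hne ⟨h1, h2⟩
      obtain ⟨r, hr1, hr2⟩ := kernel_aux (u₁ := u₂) (u₂ := u₁) (v₁ := v₂) (v₂ := v₁) hu₁
        (fun w ha hb => hcop w hb ha) h1
        ((mem_homogeneousSubmodule _ _).mp hv₂) (by linear_combination heq)
      refine ⟨-r, Prod.ext (Subtype.ext ?_) (Subtype.ext ?_)⟩
      · show (-r) • u₂ = v₁
        rw [smul_eq_C_mul, hr2, map_neg]; ring
      · show (-r) • (-u₁) = v₂
        rw [smul_eq_C_mul, hr1, map_neg]; ring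
    · obtain ⟨r, hr1, hr2⟩ := kernel_aux hu₂ hcop h2
        ((mem_homogeneousSubmodule _ _).mp hv₁) heq
      refine ⟨r, Prod.ext (Subtype.ext ?_) (Subtype.ext ?_)⟩
      · show r • u₂ = v₁
        rw [smul_eq_C_mul, hr1]
      · show r • (-u₁) = v₂
        rw [smul_eq_C_mul, hr2]; ring
  have hrange : LinearMap.range L = ⊤ := by
    apply Submodule.eq_top_of_finrank_eq
    have h1 := LinearMap.finrank_range_add_finrank_ker L
    have h2 : finrank ℝ (V × V) = (d + 1) + (d + 1) := by
      rw [finrank_prod, hV, finrank_hom]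
    have h3 : finrank ℝ (LinearMap.ker L) ≤ 1 := by
      refine le_trans (Submodule.finrank_mono hLker) ?_
      by_cases hx : ((⟨u₂, hu₂⟩, ⟨-u₁, hu₁.neg⟩) : V × V) = 0
      · rw [hx, Submodule.span_zero_singleton, finrank_bot]; omega
      · rw [finrank_span_singleton hx]
    have h4 : finrank ℝ W = 2 * d + 1 := by rw [hW, finrank_hom]
    have h5 : finrank ℝ (LinearMap.range L) ≤ finrank ℝ W :=
      Submodule.finrank_le _
    omega
  obtain ⟨⟨⟨v₁, hv₁⟩, ⟨v₂, hv₂⟩⟩, hv⟩ :=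
    LinearMap.range_eq_top.mp hrange (⟨g, (mem_homogeneousSubmodule _ _).mpr hg⟩ : W)
  have hveq : u₁ * v₁ + u₂ * v₂ = g := Subtype.ext_iff.mp hv
  have h0 := hgrad v₁ v₂ ((mem_homogeneousSubmodule _ _).mp hv₁)
    ((mem_homogeneousSubmodule _ _).mp hv₂)
  rw [hveq] at h0
  have hgz : g = 0 := by
    by_contra hgz
    exact (hpos g hg hgz).ne' h0
  exact sub_eq_zero.mp hgz
end

section
/- Let ⟪·,·⟫ be a symmetric bilinear form on MvPolynomial (Fin 2) ℝ that is positive definite on the subspace of binary forms of degree 2d, with ‖q‖² = ⟪q,q⟫. Let u₁, u₂ be binary forms of degree d and let p be a binary form of degree 2d that is a sum of squares of binary forms of degree d. Suppose: (gradient) ⟪u₁v₁ + u₂v₂, u₁² + u₂² − p⟫ = 0 for all binary forms v₁, v₂ of degree d; (Hessian) ⟪v₁² + v₂², u₁² + u₂² − p⟫ + 2‖u₁v₁ + u₂v₂‖² ≥ 0 for all binary forms v₁, v₂ of degree d; and (membership) there exist binary forms v₁', v₂' of degree d and a finite family of pairs (w₁⁽ⁱ⁾, w₂⁽ⁱ⁾)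 of binary forms of degree d with u₁w₁⁽ⁱ⁾ + u₂w₂⁽ⁱ⁾ = 0 for each i and p = u₁v₁' + u₂v₂' + ∑ᵢ ((w₁⁽ⁱ⁾)² + (w₂⁽ⁱ⁾)²). Then u₁² + u₂² = p. -/
open MvPolynomial

/-- Second-order sufficient condition: if the gradient vanishes, the Hessian is PSD, and
`p ∈ image(A_u) + cone(σ(ker A_u))`, then `u₁² + u₂² = p`. -/
theorem second_order_sufficient
    (d : ℕ)
    (B : MvPolynomial (Fin 2) ℝ →ₗ[ℝ] MvPolynomial (Fin 2) ℝ →ₗ[ℝ] ℝ)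
    (hsymm : ∀ a b : MvPolynomial (Fin 2) ℝ, B a b = B b a)
    (hpos : ∀ q : MvPolynomial (Fin 2) ℝ, q.IsHomogeneous (2 * d) → q ≠ 0 → 0 < B q q)
    (u₁ u₂ p : MvPolynomial (Fin 2) ℝ)
    (hu₁ : u₁.IsHomogeneous d) (hu₂ : u₂.IsHomogeneous d)
    (hp : p.IsHomogeneous (2 * d))
    (hpsos : ∃ (N : ℕ) (t : Fin N → MvPolynomial (Fin 2) ℝ),
      (∀ i, (t i).IsHomogeneous d) ∧ p = ∑ i, (t i) ^ 2)
    (hgrad : ∀ v₁ v₂ : MvPolynomial (Fin 2) ℝ, v₁.IsHomogeneous d → v₂.IsHomogeneous d →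
      B (u₁ * v₁ + u₂ * v₂) (u₁ ^ 2 + u₂ ^ 2 - p) = 0)
    (hhess : ∀ v₁ v₂ : MvPolynomial (Fin 2) ℝ, v₁.IsHomogeneous d → v₂.IsHomogeneous d →
      0 ≤ B (v₁ ^ 2 + v₂ ^ 2) (u₁ ^ 2 + u₂ ^ 2 - p)
        + 2 * B (u₁ * v₁ + u₂ * v₂) (u₁ * v₁ + u₂ * v₂))
    (hmem : ∃ (v₁' v₂' : MvPolynomial (Fin 2) ℝ) (N : ℕ)
        (w₁ w₂ : Fin N → MvPolynomial (Fin 2) ℝ),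
      v₁'.IsHomogeneous d ∧ v₂'.IsHomogeneous d ∧
      (∀ i, (w₁ i).IsHomogeneous d ∧ (w₂ i).IsHomogeneous d) ∧
      (∀ i, u₁ * w₁ i + u₂ * w₂ i = 0) ∧
      p = u₁ * v₁' + u₂ * v₂' + ∑ i, ((w₁ i) ^ 2 + (w₂ i) ^ 2)) :
    u₁ ^ 2 + u₂ ^ 2 = p := by
  set g : MvPolynomial (Fin 2) ℝ := u₁ ^ 2 + u₂ ^ 2 - p with hg_def
  have hg : g.IsHomogeneous (2 * d) := by
    have h1 : (u₁ ^ 2).IsHomogeneous (2 * d) := by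
      have := hu₁.pow 2; simpa [Nat.mul_comm] using this
    have h2 : (u₂ ^ 2).IsHomogeneous (2 * d) := by
      have := hu₂.pow 2; simpa [Nat.mul_comm] using this
    exact (h1.add h2).sub hp
  -- gradient at (u₁, u₂): B (u₁² + u₂²) g = 0
  have hgradu : B (u₁ ^ 2 + u₂ ^ 2) g = 0 := by
    have := hgrad u₁ u₂ hu₁ hu₂
    simpa [sq] using this
  -- B p g ≥ 0 from membership
  obtain ⟨v₁', v₂', N, w₁, w₂, hv₁', hv₂', hw, hker, hpeq⟩ := hmem
  have hBv : B (u₁ * v₁' + u₂ * v₂') g = 0 := hgrad v₁' v₂' hv₁' hv₂'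
  have hBw : ∀ i, 0 ≤ B (w₁ i ^ 2 + w₂ i ^ 2) g := by
    intro i
    have h := hhess (w₁ i) (w₂ i) (hw i).1 (hw i).2
    rw [hker i] at h
    simpa using h
  have hBp : 0 ≤ B p g := by
    rw [hpeq]
    have : B (u₁ * v₁' + u₂ * v₂' + ∑ i, (w₁ i ^ 2 + w₂ i ^ 2)) g
        = B (u₁ * v₁' + u₂ * v₂') g + ∑ i, B (w₁ i ^ 2 + w₂ i ^ 2) g := by
      simp [map_add, map_sum]
    rw [this, hBv, zero_add]
    exact Finset.sum_nonneg fun i _ => hBw i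
  have hBg : B g g ≤ 0 := by
    have : B g g = B (u₁ ^ 2 + u₂ ^ 2) g - B p g := by
      simp only [hg_def, map_sub, LinearMap.sub_apply]; ring
    rw [this, hgradu, zero_sub]
    linarith
  by_contra hne
  have hgne : g ≠ 0 := by
    intro h0
    apply hne
    have : u₁ ^ 2 + u₂ ^ 2 - p = 0 := h0
    linear_combination this
  exact absurd (hpos g hg hgne) (not_lt.mpr hBg)
end
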